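/- arXiv:1806.05402 — 7 statements merged into one kernel-verified Lean document; each statement's English description precedes it below -/
import Mathlib

section
/- For Lebesgue-almost every τ ∈ ℝ there exists N₀ (depending on τ) such that m_N(τ) > exp(−0.665·N) for all N ≥ N₀. -/
open MeasureTheory Finset

namespace St6


noncomputable def sg (b : Bool) : ℝ := bif b then 1 else -1

def A8 : Finset ℕ := {1,2,3,4,6,8,12,24}
def A6 : Finset ℕ := {1,2,3,4,6,12}

/-- signed weighted block sum -/
def W (A : Finset ℕ) (m : ℕ) (c : ℕ → Bool) (k : ℕ) : ℤ :=
  ∑ a ∈ A, (bif c (a*k) then ((m/a : ℕ) : ℤ) else -((m/a : ℕ) : ℤ))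

def K8 (N : ℕ) : Finset ℕ :=
  ((range (N/144)).image fun j => 6*j+1) ∪ ((range (N/144)).image fun j => 6*j+5)

def K6 (N : ℕ) : Finset ℕ :=
  ((Ico (N/144) (N/72)).image fun j => 6*j+1) ∪ ((Ico (N/144) (N/72)).image fun j => 6*j+5)

def B (A : Finset ℕ) (k : ℕ) : Finset ℕ := A.image (· * k)

def Sp (N : ℕ) : Finset ℕ := (K8 N).biUnion (B A8) ∪ (K6 N).biUnion (B A6)

def Fr (N : ℕ) : Finset ℕ := Finset.Icc 1 N \ Sp N

lemma mem_K8 {N k : ℕ} (h : k ∈ K8 N) :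
    ∃ j, j < N/144 ∧ (k = 6*j+1 ∨ k = 6*j+5) := by
  simp only [K8, mem_union, mem_image, mem_range] at h
  rcases h with ⟨j, hj, rfl⟩ | ⟨j, hj, rfl⟩ <;> exact ⟨j, hj, by omega⟩

lemma mem_K6 {N k : ℕ} (h : k ∈ K6 N) :
    ∃ j, N/144 ≤ j ∧ j < N/72 ∧ (k = 6*j+1 ∨ k = 6*j+5) := by
  simp only [K6, mem_union, mem_image, mem_Ico] at h
  rcases h with ⟨j, hj, rfl⟩ | ⟨j, hj, rfl⟩ <;> exact ⟨j, hj.1, hj.2, by omega⟩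

lemma K8_le {N k : ℕ} (h : k ∈ K8 N) : 24 * k ≤ N := by
  obtain ⟨j, hj, hk⟩ := mem_K8 h
  have h1 : 144 * (j+1) ≤ 144 * (N/144) := by omega
  have h2 : 144 * (N/144) ≤ N := Nat.mul_div_le _ _
  omega

lemma K6_le {N k : ℕ} (h : k ∈ K6 N) : 12 * k ≤ N := by
  obtain ⟨j, _, hj, hk⟩ := mem_K6 h
  have h1 : 72 * (j+1) ≤ 72 * (N/72) := by omega
  have h2 : 72 * (N/72) ≤ N := Nat.mul_div_le _ _
  omega

lemma good_of_K8 {N k : ℕ} (h : k ∈ K8 N) : k % 6 = 1 ∨ k % 6 = 5 := by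
  obtain ⟨j, _, hk⟩ := mem_K8 h; omega

lemma good_of_K6 {N k : ℕ} (h : k ∈ K6 N) : k % 6 = 1 ∨ k % 6 = 5 := by
  obtain ⟨j, _, _, hk⟩ := mem_K6 h; omega

lemma K8_K6_ne {N k k' : ℕ} (h : k ∈ K8 N) (h' : k' ∈ K6 N) : k ≠ k' := by
  obtain ⟨j, hj, hk⟩ := mem_K8 h
  obtain ⟨j', hj', _, hk'⟩ := mem_K6 h'
  omega

lemma card_K8 (N : ℕ) : (K8 N).card = 2 * (N/144) := by
  rw [K8, card_union_of_disjoint, card_image_of_injective _ (fun a b h => by omega),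
    card_image_of_injective _ (fun a b h => by omega), card_range]
  · ring
  · simp only [disjoint_left, mem_image, mem_range]
    rintro x ⟨j, _, rfl⟩ ⟨i, _, h⟩; omega

lemma card_K6 (N : ℕ) : (K6 N).card = 2 * (N/72 - N/144) := by
  rw [K6, card_union_of_disjoint, card_image_of_injective _ (fun a b h => by omega),
    card_image_of_injective _ (fun a b h => by omega), Nat.card_Ico]
  · ring
  · simp only [disjoint_left, mem_image, mem_Ico]
    rintro x ⟨j, _, rfl⟩ ⟨i, _, h⟩; omega

lemma card_K6_ge (N : ℕ) : 2 * (N/144) ≤ (K6 N).card := by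
  rw [card_K6]; omega





lemma coprime24 {k : ℕ} (hk : k % 6 = 1 ∨ k % 6 = 5) : Nat.Coprime k 24 := by
  have h6 : Nat.Coprime k 6 := by
    have : Nat.gcd 6 k = Nat.gcd (k % 6) 6 := Nat.gcd_rec 6 k
    rcases hk with h | h <;>
      · rw [Nat.Coprime, Nat.gcd_comm, this, h]; decide
  have h2 : Nat.Coprime k 2 := h6.coprime_dvd_right (by norm_num)
  have h3 : Nat.Coprime k 3 := h6.coprime_dvd_right (by norm_num)
  have : Nat.Coprime k (2*(2*(2*3))) := h2.mul_right (h2.mul_right (h2.mul_right h3))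
  simpa using this

lemma dvd24 : ∀ a ∈ A8 ∪ A6, a ∣ 24 := by decide

lemma key {a a' k k' : ℕ} (ha : a ∈ A8 ∪ A6) (ha' : a' ∈ A8 ∪ A6)
    (hk : k % 6 = 1 ∨ k % 6 = 5) (hk' : k' % 6 = 1 ∨ k' % 6 = 5)
    (h : a * k = a' * k') : a = a' ∧ k = k' := by
  have c1 : Nat.Coprime k a' := (coprime24 hk).coprime_dvd_right (dvd24 a' ha')
  have c2 : Nat.Coprime k' a := (coprime24 hk').coprime_dvd_right (dvd24 a ha)
  have d1 : k ∣ k' := c1.dvd_of_dvd_mul_left (h ▸ dvd_mul_left k a)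
  have d2 : k' ∣ k := c2.dvd_of_dvd_mul_left (h ▸ dvd_mul_left k' a')
  have hkk : k = k' := Nat.dvd_antisymm d1 d2
  subst hkk
  have hk0 : 0 < k := by omega
  exact ⟨Nat.eq_of_mul_eq_mul_right hk0 h, rfl⟩

lemma B_disj {X X' : Finset ℕ} (hX : X = A8 ∨ X = A6) (hX' : X' = A8 ∨ X' = A6)
    {k k' : ℕ} (hne : k ≠ k')
    (hk : k % 6 = 1 ∨ k % 6 = 5) (hk' : k' % 6 = 1 ∨ k' % 6 = 5) :
    Disjoint (B X k) (B X' k') := by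
  simp only [disjoint_left, B, mem_image]
  rintro x ⟨a, ha, rfl⟩ ⟨a', ha', h⟩
  have hm : a ∈ A8 ∪ A6 := by rcases hX with rfl | rfl <;> simp [mem_union, ha]
  have hm' : a' ∈ A8 ∪ A6 := by rcases hX' with rfl | rfl <;> simp [mem_union, ha']
  exact hne (key hm hm' hk hk' h.symm).2

lemma card_B {X : Finset ℕ} {k : ℕ} (hk : 0 < k) : (B X k).card = X.card :=
  card_image_of_injective _ fun a b h => Nat.eq_of_mul_eq_mul_right hk h

lemma B_subset {X : Finset ℕ} {k N m : ℕ} (hX : ∀ a ∈ X, 1 ≤ a ∧ a ≤ m)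
    (hk : 0 < k) (hN : m * k ≤ N) : B X k ⊆ Finset.Icc 1 N := by
  simp only [B, subset_iff, mem_image, Finset.mem_Icc]
  rintro x ⟨a, ha, rfl⟩
  obtain ⟨h1, h2⟩ := hX a ha
  exact ⟨Nat.mul_pos h1 hk, le_trans (Nat.mul_le_mul_right k h2) hN⟩





noncomputable def V (S : ℤ) : Finset ℤ := (Finset.Icc (-S) S).image (fun j => 2*j)

lemma card_V (S : ℤ) (hS : 0 ≤ S) : (V S).card = (2*S+1).toNat := by
  rw [V, card_image_of_injective _ (fun a b h => by omega), Int.card_Icc]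
  omega

lemma W_abs_le (A : Finset ℕ) (m : ℕ) (c : ℕ → Bool) (k : ℕ) :
    |W A m c k| ≤ ∑ a ∈ A, ((m/a : ℕ) : ℤ) := by
  refine (Finset.abs_sum_le_sum_abs _ _).trans (Finset.sum_le_sum fun a _ => ?_)
  cases c (a*k) <;> simp only [cond_true, cond_false, abs_neg] <;>
    exact le_of_eq (abs_of_nonneg (Int.natCast_nonneg _))

lemma W_even (A : Finset ℕ) (m : ℕ) (c : ℕ → Bool) (k : ℕ)
    (h : Even (∑ a ∈ A, ((m/a : ℕ) : ℤ))) : Even (W A m c k) := by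
  have hd : W A m c k - ∑ a ∈ A, ((m/a : ℕ) : ℤ)
      = ∑ a ∈ A, ((bif c (a*k) then ((m/a : ℕ) : ℤ) else -((m/a : ℕ) : ℤ)) - ((m/a : ℕ) : ℤ)) := by
    rw [W, Finset.sum_sub_distrib]
  have he : Even (W A m c k - ∑ a ∈ A, ((m/a : ℕ) : ℤ)) := by
    rw [hd]
    refine Finset.even_sum _ fun a _ => ?_
    cases c (a*k) <;> simp [parity_simps]
  have := he.add h
  simpa using this

lemma W_mem_V (A : Finset ℕ) (m : ℕ) (c : ℕ → Bool) (k : ℕ) (S : ℤ)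
    (hsum : ∑ a ∈ A, ((m/a : ℕ) : ℤ) = 2*S) :
    W A m c k ∈ V S := by
  have h1 := W_abs_le A m c k
  have h2 := W_even A m c k (by rw [hsum]; exact even_two_mul S)
  obtain ⟨t, ht⟩ := h2
  rw [hsum] at h1
  rw [abs_le] at h1
  simp only [V, mem_image, Finset.mem_Icc]
  exact ⟨t, by omega, by omega⟩

lemma sumA8 : ∑ a ∈ A8, ((24/a : ℕ) : ℤ) = 2*30 := by decide
lemma sumA6 : ∑ a ∈ A6, ((12/a : ℕ) : ℤ) = 2*14 := by decide

lemma block_sum (A : Finset ℕ) (m : ℕ) (hm : ∀ a ∈ A, a * (m/a) = m ∧ 0 < a)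
    (hm0 : 0 < m) (c : ℕ → Bool) (k : ℕ) (hk : 0 < k) :
    ∑ n ∈ B A k, sg (c n) / n = (W A m c k : ℝ) / (m * k) := by
  rw [B, Finset.sum_image (fun a _ b _ h => Nat.eq_of_mul_eq_mul_right hk h), W,
    Int.cast_sum, Finset.sum_div]
  refine Finset.sum_congr rfl fun a ha => ?_
  obtain ⟨hma, ha0⟩ := hm a ha
  set w := m / a with hw
  have hma' : (a : ℝ) * (w : ℝ) = (m : ℝ) := by exact_mod_cast hma
  have hk' : (k : ℝ) ≠ 0 := by positivity
  have ha' : (a : ℝ) ≠ 0 := by positivity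
  have hm' : (m : ℝ) ≠ 0 := by positivity
  cases c (a*k) <;>
    simp only [sg, cond_false, cond_true, Int.cast_neg, Int.cast_natCast, Nat.cast_mul] <;>
    · field_simp
      rw [← hma']




lemma card_image_le_of_factor {α β γ : Type*} [Fintype α] [Fintype β]
    [DecidableEq β] [DecidableEq γ] (f : α → γ) (π : α → β)
    (H : ∀ a a', π a = π a' → f a = f a') :
    (Finset.image f Finset.univ).card ≤ Fintype.card β := by
  classical
  rcases isEmpty_or_nonempty α with hα | hα
  · simp [Finset.univ_eq_empty]
  · have h : ∀ a : α, f a = (fun t => if hex : ∃ x, π x = t then f hex.choose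
        else f (Classical.arbitrary α)) (π a) := by
      intro a
      have hex : ∃ x, π x = π a := ⟨a, rfl⟩
      simp only [dif_pos hex]
      exact (H _ _ hex.choose_spec).symm
    calc (Finset.image f Finset.univ).card
        = (Finset.image (fun t => if hex : ∃ x, π x = t then f hex.choose
            else f (Classical.arbitrary α)) (Finset.image π Finset.univ)).card := by
          rw [Finset.image_image]
          congr 1
          exact Finset.image_congr fun a _ => h a
      _ ≤ (Finset.image π Finset.univ).card := Finset.card_image_le
      _ ≤ (Finset.univ : Finset β).card := Finset.card_le_univ _
      _ = Fintype.card β := Finset.card_univ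



lemma good_pos {k : ℕ} (hk : k % 6 = 1 ∨ k % 6 = 5) : 0 < k := by omega

lemma hA8 : ∀ a ∈ A8, a * (24/a) = 24 ∧ 0 < a := by decide
lemma hA6 : ∀ a ∈ A6, a * (12/a) = 12 ∧ 0 < a := by decide
lemma boundA8 : ∀ a ∈ A8, 1 ≤ a ∧ a ≤ 24 := by decide
lemma boundA6 : ∀ a ∈ A6, 1 ≤ a ∧ a ≤ 12 := by decide

lemma Sp_subset (N : ℕ) : Sp N ⊆ Finset.Icc 1 N := by
  rw [Sp]
  apply Finset.union_subset <;> rw [Finset.biUnion_subset] <;> intro k hk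
  · exact B_subset boundA8 (good_pos (good_of_K8 hk)) (K8_le hk)
  · exact B_subset boundA6 (good_pos (good_of_K6 hk)) (K6_le hk)

lemma pd8 (N : ℕ) : Set.PairwiseDisjoint ↑(K8 N) (B A8) := by
  intro k hk k' hk' hne
  exact B_disj (Or.inl rfl) (Or.inl rfl) hne (good_of_K8 hk) (good_of_K8 hk')

lemma pd6 (N : ℕ) : Set.PairwiseDisjoint ↑(K6 N) (B A6) := by
  intro k hk k' hk' hne
  exact B_disj (Or.inr rfl) (Or.inr rfl) hne (good_of_K6 hk) (good_of_K6 hk')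

lemma disj_biUnion (N : ℕ) :
    Disjoint ((K8 N).biUnion (B A8)) ((K6 N).biUnion (B A6)) := by
  rw [Finset.disjoint_left]
  intro n hn hn'
  rw [Finset.mem_biUnion] at hn hn'
  obtain ⟨k, hk, hnk⟩ := hn
  obtain ⟨k', hk', hnk'⟩ := hn'
  exact Finset.disjoint_left.mp
    (B_disj (Or.inl rfl) (Or.inr rfl) (K8_K6_ne hk hk') (good_of_K8 hk) (good_of_K6 hk'))
    hnk hnk'

lemma card_Sp (N : ℕ) : (Sp N).card = 8 * (K8 N).card + 6 * (K6 N).card := by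
  rw [Sp, Finset.card_union_of_disjoint (disj_biUnion N), Finset.card_biUnion, Finset.card_biUnion]
  · rw [Finset.sum_congr rfl (fun k hk => card_B (good_pos (good_of_K6 hk))),
      Finset.sum_congr (rfl : K8 N = K8 N) (fun k hk => card_B (good_pos (good_of_K8 hk)))]
    simp [Finset.sum_const, A8, A6, mul_comm]
  · exact fun k hk k' hk' hne => pd6 N hk hk' hne
  · exact fun k hk k' hk' hne => pd8 N hk hk' hne

lemma card_Fr (N : ℕ) : (Fr N).card = N - (Sp N).card := by
  rw [Fr, Finset.card_sdiff_of_subset (Sp_subset N), Nat.card_Icc]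
  omega

lemma decomp (N : ℕ) (c : ℕ → Bool) :
    ∑ n ∈ Finset.Icc 1 N, sg (c n) / (n : ℝ) =
      ((∑ k ∈ K8 N, (W A8 24 c k : ℝ) / ((24 : ℕ) * k))
        + ∑ k ∈ K6 N, (W A6 12 c k : ℝ) / ((12 : ℕ) * k))
        + ∑ n ∈ Fr N, sg (c n) / (n : ℝ) := by
  have hsplit := Finset.sum_sdiff (f := fun n => sg (c n) / (n:ℝ)) (Sp_subset N)
  have hFr : Finset.Icc 1 N \ Sp N = Fr N := rfl
  rw [hFr] at hsplit
  have h8 : ∀ k ∈ K8 N, ∑ n ∈ B A8 k, sg (c n)/(n:ℝ) = (W A8 24 c k : ℝ)/(((24:ℕ):ℝ)*k) :=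
    fun k hk => block_sum A8 24 hA8 (by norm_num) c k (good_pos (good_of_K8 hk))
  have h6 : ∀ k ∈ K6 N, ∑ n ∈ B A6 k, sg (c n)/(n:ℝ) = (W A6 12 c k : ℝ)/(((12:ℕ):ℝ)*k) :=
    fun k hk => block_sum A6 12 hA6 (by norm_num) c k (good_pos (good_of_K6 hk))
  have hSp : ∑ n ∈ Sp N, sg (c n)/(n:ℝ) =
      (∑ k ∈ K8 N, (W A8 24 c k : ℝ) / ((24 : ℕ) * k))
        + ∑ k ∈ K6 N, (W A6 12 c k : ℝ) / ((12 : ℕ) * k) := by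
    rw [Sp, Finset.sum_union (disj_biUnion N), Finset.sum_biUnion (pd8 N),
      Finset.sum_biUnion (pd6 N), Finset.sum_congr rfl h8, Finset.sum_congr rfl h6]
  rw [← hsplit, hSp]
  try ring

def ext' (N : ℕ) (b : Fin N → Bool) : ℕ → Bool :=
  fun n => if h : n - 1 < N then b ⟨n-1, h⟩ else false

noncomputable def fS (N : ℕ) (b : Fin N → Bool) : ℝ :=
  ∑ i : Fin N, sg (b i) / ((i : ℕ) + 1)

lemma fS_eq (N : ℕ) (b : Fin N → Bool) :
    fS N b = ∑ n ∈ Finset.Icc 1 N, sg (ext' N b n) / (n : ℝ) := by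
  have hmap : Finset.Icc 1 N = (Finset.range N).image (· + 1) := by
    ext n
    simp only [Finset.mem_Icc, Finset.mem_image, Finset.mem_range]
    constructor
    · rintro ⟨h1, h2⟩; exact ⟨n-1, by omega, by omega⟩
    · rintro ⟨a, ha, rfl⟩; omega
  rw [hmap, Finset.sum_image (fun a _ b _ h => by omega)]
  push_cast
  rw [fS, ← Fin.sum_univ_eq_sum_range (fun m => sg (ext' N b (m+1)) / ((m : ℝ)+1))]
  refine Finset.sum_congr rfl fun i _ => ?_
  have hb : ext' N b ((i:ℕ)+1) = b i := by
    simp only [ext', Nat.add_sub_cancel]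
    rw [dif_pos i.isLt]
  rw [hb]

noncomputable def SN (N : ℕ) : Finset ℝ := Finset.image (fS N) Finset.univ

lemma card_SN (N : ℕ) :
    (SN N).card ≤ 61 ^ (K8 N).card * 29 ^ (K6 N).card * 2 ^ (Fr N).card := by
  classical
  have h := card_image_le_of_factor (f := fS N)
    (π := fun b => ((fun k : {k // k ∈ K8 N} => (⟨W A8 24 (ext' N b) k.1,
          W_mem_V _ _ _ _ 30 sumA8⟩ : {v // v ∈ V 30})),
        (fun k : {k // k ∈ K6 N} => (⟨W A6 12 (ext' N b) k.1,
          W_mem_V _ _ _ _ 14 sumA6⟩ : {v // v ∈ V 14})),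
        (fun n : {n // n ∈ Fr N} => ext' N b n.1)))
    ?_
  · refine le_trans h ?_
    rw [Fintype.card_prod, Fintype.card_prod, Fintype.card_fun, Fintype.card_fun,
      Fintype.card_fun]
    simp only [Fintype.card_coe, Fintype.card_bool]
    rw [card_V 30 (by norm_num), card_V 14 (by norm_num)]
    norm_num [show Int.toNat 61 = 61 from rfl, show Int.toNat 29 = 29 from rfl, mul_assoc]
  · intro b b' hpi
    rw [Prod.ext_iff, Prod.ext_iff] at hpi
    obtain ⟨h8, h6, hF⟩ := hpi
    have e8 : ∀ k ∈ K8 N, W A8 24 (ext' N b) k = W A8 24 (ext' N b') k := by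
      intro k hk
      exact Subtype.ext_iff.mp (congrFun h8 ⟨k, hk⟩)
    have e6 : ∀ k ∈ K6 N, W A6 12 (ext' N b) k = W A6 12 (ext' N b') k := by
      intro k hk
      exact Subtype.ext_iff.mp (congrFun h6 ⟨k, hk⟩)
    have eF : ∀ n ∈ Fr N, ext' N b n = ext' N b' n := by
      intro n hn
      exact congrFun hF ⟨n, hn⟩
    rw [fS_eq, fS_eq, decomp, decomp]
    congr 1
    · congr 1 <;> refine Finset.sum_congr rfl fun k hk => ?_
      · rw [e8 k hk]
      · rw [e6 k hk]
    · exact Finset.sum_congr rfl fun n hn => by rw [eF n hn]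

/-! ### Numeric bounds -/

lemma card_SN_real (N : ℕ) :
    ((SN N).card : ℝ) ≤ 2^N * (((1769:ℝ)/16384)^2)^(N/144) := by
  set M := N/144 with hM
  have hq8 : (K8 N).card = 2*M := card_K8 N
  have hq6 : 2*M ≤ (K6 N).card := card_K6_ge N
  have hsp_le : (Sp N).card ≤ N := by
    have := Finset.card_le_card (Sp_subset N)
    rwa [Nat.card_Icc, Nat.add_sub_cancel] at this
  have hsum : (Fr N).card + (8*(2*M) + 6*(K6 N).card) = N := by
    have h1 := card_Fr N
    have h2 := card_Sp N
    rw [hq8] at h2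
    omega
  set q6 := (K6 N).card
  set fr := (Fr N).card
  have h1 : ((SN N).card : ℝ) ≤ 61^(2*M) * 29^q6 * 2^fr := by
    have := card_SN N
    rw [hq8] at this
    exact_mod_cast this
  have h256 : ((256:ℝ))^(2*M) = 2^(8*(2*M)) := by
    rw [pow_mul 2 8, show ((2:ℝ)^8) = 256 by norm_num]
  have h64 : ((64:ℝ))^q6 = 2^(6*q6) := by
    rw [pow_mul 2 6, show ((2:ℝ)^6) = 64 by norm_num]
  have h2 : (61:ℝ)^(2*M) * 29^q6 * 2^fr
      = 2^N * ((61/256)^(2*M) * (29/64)^q6) := by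
    rw [← hsum, pow_add, pow_add, div_pow, div_pow, h256, h64]
    field_simp
  have h3 : ((29:ℝ)/64)^q6 ≤ (29/64)^(2*M) :=
    pow_le_pow_of_le_one (by norm_num) (by norm_num) hq6
  calc ((SN N).card : ℝ) ≤ 61^(2*M) * 29^q6 * 2^fr := h1
    _ = 2^N * ((61/256)^(2*M) * (29/64)^q6) := h2
    _ ≤ 2^N * ((61/256)^(2*M) * (29/64)^(2*M)) := by
        apply mul_le_mul_of_nonneg_left _ (by positivity)
        apply mul_le_mul_of_nonneg_left h3 (by positivity)
    _ = 2^N * (((1769:ℝ)/16384)^2)^M := by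
        rw [← mul_pow, pow_mul]
        norm_num

noncomputable def gam : ℝ := (2*Real.exp (-0.665))^144 * ((1769:ℝ)/16384)^2

lemma gam_pos : 0 < gam := by
  have := Real.exp_pos (-0.665)
  rw [gam]; positivity

lemma exp_numeric : (2:ℝ)^144 * ((1769:ℝ)/16384)^2 < Real.exp 95.76 := by
  have h1 : ((1.25:ℝ))^3 ≤ Real.exp 0.75 := by
    have ha : (1.25:ℝ) ≤ Real.exp 0.25 := by
      have := Real.add_one_le_exp (0.25:ℝ)
      linarith
    calc ((1.25:ℝ))^3 ≤ (Real.exp 0.25)^3 := pow_le_pow_left₀ (by norm_num) ha 3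
      _ = Real.exp ((3:ℕ) * 0.25) := (Real.exp_nat_mul _ 3).symm
      _ = Real.exp 0.75 := by norm_num
  have h2 : ((2.7182818283:ℝ))^95 ≤ Real.exp 95 := by
    calc ((2.7182818283:ℝ))^95 ≤ (Real.exp 1)^95 :=
          pow_le_pow_left₀ (by norm_num) Real.exp_one_gt_d9.le 95
      _ = Real.exp ((95:ℕ) * 1) := (Real.exp_nat_mul _ 95).symm
      _ = Real.exp 95 := by norm_num
  have h3 : Real.exp 95 * Real.exp 0.75 ≤ Real.exp 95.76 := by
    rw [← Real.exp_add]
    exact Real.exp_le_exp.mpr (by norm_num)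
  calc (2:ℝ)^144 * ((1769:ℝ)/16384)^2 < 2.7182818283^95 * 1.25^3 := by norm_num
    _ ≤ Real.exp 95 * Real.exp 0.75 :=
        mul_le_mul h2 h1 (by norm_num) (Real.exp_nonneg _)
    _ ≤ Real.exp 95.76 := h3

lemma gam_lt_one : gam < 1 := by
  have hpow : (Real.exp (-0.665))^144 = (Real.exp 95.76)⁻¹ := by
    rw [← Real.exp_nat_mul, ← Real.exp_neg]
    norm_num
  have he : (0:ℝ) < Real.exp 95.76 := Real.exp_pos _
  have hg : gam = ((2:ℝ)^144 * ((1769:ℝ)/16384)^2) / Real.exp 95.76 := by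
    rw [gam, mul_pow, hpow]
    ring
  rw [hg, div_lt_one he]
  exact exp_numeric

lemma one_le_base : (1:ℝ) ≤ 2 * Real.exp (-0.665) := by
  have h : Real.exp (-0.665) ≥ Real.exp (-Real.log 2) := by
    apply Real.exp_le_exp.mpr
    have := Real.log_two_gt_d9
    norm_num
    linarith
  have h2 : Real.exp (-Real.log 2) = 2⁻¹ := by
    rw [Real.exp_neg, Real.exp_log] <;> norm_num
  rw [h2] at h
  linarith

lemma alg_aux {E d : ℝ} (M : ℕ) :
    2 * (E^(144*M + 143) * d^M) = (2*E^143) * (E^144 * d)^M := by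
  rw [mul_pow, ← pow_mul, pow_add]
  ring

lemma term_bound (N : ℕ) :
    ((SN N).card : ℝ) * (2 * Real.exp (-0.665 * N))
      ≤ (2 * (2*Real.exp (-0.665))^143) * gam^(N/144) := by
  have hexp0 : (0:ℝ) < Real.exp (-0.665) := Real.exp_pos _
  have hexpN : Real.exp (-0.665 * N) = (Real.exp (-0.665))^N := by
    rw [mul_comm, Real.exp_nat_mul]
  set E : ℝ := 2 * Real.exp (-0.665) with hE
  set d : ℝ := ((1769:ℝ)/16384)^2 with hd
  have hE0 : 0 < E := by rw [hE]; positivity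
  have hd0 : 0 < d := by rw [hd]; positivity
  have hgam : gam = E^144 * d := rfl
  have h1 : ((SN N).card : ℝ) * (2 * Real.exp (-0.665 * N))
      ≤ (2^N * d^(N/144)) * (2 * (Real.exp (-0.665))^N) := by
    rw [hexpN]
    exact mul_le_mul_of_nonneg_right (card_SN_real N) (by positivity)
  have hNle : N ≤ 144*(N/144) + 143 := by omega
  have h2 : E^N ≤ E^(144*(N/144) + 143) := pow_le_pow_right₀ one_le_base hNle
  calc ((SN N).card : ℝ) * (2 * Real.exp (-0.665 * N))
      ≤ (2^N * d^(N/144)) * (2 * (Real.exp (-0.665))^N) := h1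
    _ = 2 * (E^N * d^(N/144)) := by rw [hE, mul_pow]; ring
    _ ≤ 2 * (E^(144*(N/144) + 143) * d^(N/144)) := by
        apply mul_le_mul_of_nonneg_left _ (by norm_num)
        exact mul_le_mul_of_nonneg_right h2 (by positivity)
    _ = (2 * E^143) * gam^(N/144) := by
        rw [hgam]
        exact alg_aux (N/144)

/-! ### Measure theory -/

noncomputable def Bad (N : ℕ) : Set ℝ :=
  ⋃ v ∈ SN N, Metric.closedBall v (Real.exp (-0.665 * N))

lemma meas_Bad (N : ℕ) :
    volume (Bad N) ≤ ENNReal.ofReal (((SN N).card : ℝ) * (2 * Real.exp (-0.665 * N))) := by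
  have h : ∀ v ∈ SN N, volume (Metric.closedBall v (Real.exp (-0.665 * N)))
      = ENNReal.ofReal (2 * Real.exp (-0.665 * N)) := fun v _ => Real.volume_closedBall v _
  calc volume (Bad N)
      ≤ ∑ v ∈ SN N, volume (Metric.closedBall v (Real.exp (-0.665 * N))) :=
        measure_biUnion_finset_le _ _
    _ = (SN N).card • ENNReal.ofReal (2 * Real.exp (-0.665 * N)) := by
        rw [Finset.sum_congr rfl h, Finset.sum_const]
    _ = ENNReal.ofReal (((SN N).card : ℝ) * (2 * Real.exp (-0.665 * N))) := by
        rw [nsmul_eq_mul, ENNReal.ofReal_mul (by positivity : (0:ℝ) ≤ ((SN N).card : ℝ)),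
          ENNReal.ofReal_natCast]

lemma summable_bound :
    Summable (fun N : ℕ => (2 * (2*Real.exp (-0.665))^143) * gam^(N/144)) := by
  apply Summable.mul_left
  set ρ := gam ^ ((1:ℝ)/144) with hρ
  have hρ0 : 0 ≤ ρ := Real.rpow_nonneg gam_pos.le _
  have hρ1 : ρ < 1 := Real.rpow_lt_one gam_pos.le gam_lt_one (by norm_num)
  have hbound : ∀ N : ℕ, gam^(N/144) ≤ gam⁻¹ * ρ^N := by
    intro N
    have hfloor : (N:ℝ)/144 - 1 ≤ ((N/144 : ℕ) : ℝ) := by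
      have : N ≤ 144*(N/144) + 143 := by omega
      have h' : (N:ℝ) ≤ 144*((N/144 : ℕ):ℝ) + 143 := by exact_mod_cast this
      linarith
    have h1 : gam^(N/144 : ℕ) = gam ^ (((N/144 : ℕ):ℝ)) := (Real.rpow_natCast _ _).symm
    have h2 : gam ^ (((N/144 : ℕ):ℝ)) ≤ gam ^ ((N:ℝ)/144 - 1) :=
      Real.rpow_le_rpow_of_exponent_ge gam_pos gam_lt_one.le hfloor
    have h3 : gam ^ ((N:ℝ)/144 - 1) = gam⁻¹ * ρ^N := by
      rw [sub_eq_add_neg, Real.rpow_add gam_pos, Real.rpow_neg_one, hρ,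
        ← Real.rpow_natCast (gam ^ ((1:ℝ)/144)) N, ← Real.rpow_mul gam_pos.le]
      ring_nf
    rw [h1]
    rw [h3] at h2
    exact h2
  apply Summable.of_nonneg_of_le (fun N => pow_nonneg gam_pos.le _) hbound
  exact (summable_geometric_of_lt_one hρ0 hρ1).mul_left _

lemma tsum_Bad_ne_top : (∑' N, volume (Bad N)) ≠ ⊤ := by
  have hle : ∀ N, volume (Bad N)
      ≤ ENNReal.ofReal ((2 * (2*Real.exp (-0.665))^143) * gam^(N/144)) := by
    intro N
    refine le_trans (meas_Bad N) (ENNReal.ofReal_le_ofReal (term_bound N))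
  have h1 : (∑' N, volume (Bad N))
      ≤ ∑' N, ENNReal.ofReal ((2 * (2*Real.exp (-0.665))^143) * gam^(N/144)) :=
    ENNReal.tsum_le_tsum hle
  have h2 : ∑' N, ENNReal.ofReal ((2 * (2*Real.exp (-0.665))^143) * gam^(N/144))
      = ENNReal.ofReal (∑' N, (2 * (2*Real.exp (-0.665))^143) * gam^(N/144)) :=
    (ENNReal.ofReal_tsum_of_nonneg (fun N => by have := gam_pos; positivity) summable_bound).symm
  rw [h2] at h1
  exact ne_top_of_le_ne_top ENNReal.ofReal_ne_top h1

lemma SN_nonempty (N : ℕ) : (SN N).Nonempty :=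
  Finset.Nonempty.image ⟨fun _ => true, Finset.mem_univ _⟩ _

end St6

/-- `m_N(τ)`: the minimum of `|∑_{n=1}^N s_n/n − τ|` over signs `s_n ∈ {−1,+1}`. -/
noncomputable def mN (N : ℕ) (τ : ℝ) : ℝ :=
  sInf {x : ℝ | ∃ s : Fin N → ℝ, (∀ i, s i = 1 ∨ s i = -1) ∧
    x = |(∑ i : Fin N, s i / ((i : ℕ) + 1)) - τ|}

namespace St6

lemma set_eq (N : ℕ) (τ : ℝ) :
    {x : ℝ | ∃ s : Fin N → ℝ, (∀ i, s i = 1 ∨ s i = -1) ∧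
      x = |(∑ i : Fin N, s i / ((i : ℕ) + 1)) - τ|}
      = ↑((SN N).image (fun v => |v - τ|)) := by
  classical
  ext x
  simp only [Set.mem_setOf_eq, Finset.coe_image, Set.mem_image, Finset.mem_coe, SN,
    Finset.mem_image, Finset.mem_univ, true_and]
  constructor
  · rintro ⟨s, hs, rfl⟩
    have hsum : (∑ i : Fin N, s i / ((i:ℕ)+1))
        = fS N (fun i => if s i = 1 then true else false) := by
      rw [fS]
      refine Finset.sum_congr rfl fun i _ => ?_
      rcases hs i with h | h
      · rw [if_pos h, h]; simp [sg]
      · have hne : ¬ (s i = 1) := by rw [h]; norm_num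
        rw [if_neg hne, h]; simp [sg]
    exact ⟨_, ⟨_, rfl⟩, by rw [hsum]⟩
  · rintro ⟨v, ⟨b, rfl⟩, rfl⟩
    refine ⟨fun i => sg (b i), fun i => ?_, rfl⟩
    cases hbi : b i <;> simp [sg, hbi]

lemma mN_gt (N : ℕ) (τ : ℝ) (h : τ ∉ Bad N) : mN N τ > Real.exp (-0.665 * N) := by
  classical
  rw [mN, set_eq]
  have hne : ((SN N).image (fun v => |v - τ|)).Nonempty := (SN_nonempty N).image _
  have hmem := hne.csInf_mem
  obtain ⟨v, hv, heq⟩ := Finset.mem_image.mp hmem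
  rw [← heq]
  have hball : τ ∉ Metric.closedBall v (Real.exp (-0.665*N)) := by
    intro hc
    exact h (Set.mem_biUnion hv hc)
  rw [Metric.mem_closedBall, not_le, Real.dist_eq] at hball
  calc Real.exp (-0.665*N) < |τ - v| := hball
    _ = |v - τ| := abs_sub_comm _ _

end St6

theorem statement6 :
    ∀ᵐ τ ∂(volume : Measure ℝ), ∃ N₀ : ℕ, ∀ N : ℕ, N₀ ≤ N →
      mN N τ > Real.exp (-0.665 * N) := by
  filter_upwards [MeasureTheory.ae_eventually_notMem St6.tsum_Bad_ne_top] with τ hτ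
  obtain ⟨N₀, hN₀⟩ := Filter.eventually_atTop.mp hτ
  exact ⟨N₀, fun N hN => St6.mN_gt N τ (hN₀ N hN)⟩
end

section
/- For every α > (23/28)·log 2 + (1/28)·log 29 (= 0.6648…), one has #S_N ≤ e^{αN} for all sufficiently large positive integers N. -/
open Finset Pointwise

/-- `S_N`: the set of values of signed harmonic sums of length `N`. -/
def SN (N : ℕ) : Set ℝ :=
  {x : ℝ | ∃ s : Fin N → ℝ, (∀ i, s i = 1 ∨ s i = -1) ∧
    x = ∑ i : Fin N, s i / ((i : ℕ) + 1)}

/-- Signed sums `∑_{i ∈ T} s_i / i` over an index finset `T ⊆ ℕ`. -/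
def Wset (T : Finset ℕ) : Set ℝ :=
  {x : ℝ | ∃ s : ℕ → ℝ, (∀ i, s i = 1 ∨ s i = -1) ∧ x = ∑ i ∈ T, s i / (i : ℝ)}

lemma SN_eq_Wset (N : ℕ) : SN N = Wset (Finset.Icc 1 N) := by
  have hkey : ∀ t : ℕ → ℝ, ∑ i ∈ Finset.Icc 1 N, t i / (i:ℝ)
      = ∑ i : Fin N, t ((i:ℕ)+1) / (((i:ℕ):ℝ) + 1) := by
    intro t
    rw [Fin.sum_univ_eq_sum_range (fun i => t (i+1) / ((i:ℝ)+1))]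
    refine Finset.sum_nbij' (fun i => i - 1) (fun i => i + 1) ?_ ?_ ?_ ?_ ?_
    · intro a ha; simp only [Finset.mem_Icc] at ha; simp only [Finset.mem_range]; omega
    · intro a ha; simp only [Finset.mem_range] at ha; simp only [Finset.mem_Icc]; omega
    · intro a ha; simp only [Finset.mem_Icc] at ha; show a - 1 + 1 = a; omega
    · intro a ha; show a + 1 - 1 = a; omega
    · intro a ha
      simp only [Finset.mem_Icc] at ha
      have h1 : 1 ≤ a := ha.1
      have hc : ((a - 1 : ℕ) : ℝ) = (a:ℝ) - 1 := by
        push_cast [Nat.cast_sub h1]; ring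
      rw [Nat.sub_add_cancel h1, hc]
      ring_nf
  ext x
  constructor
  · rintro ⟨s, hs, rfl⟩
    refine ⟨fun n => if h : n - 1 < N then s ⟨n - 1, h⟩ else 1, fun n => ?_, ?_⟩
    · by_cases h : n - 1 < N
      · simpa [h] using hs ⟨n - 1, h⟩
      · simp [h]
    · rw [hkey]
      refine Finset.sum_congr rfl fun i _ => ?_
      have h : (i:ℕ) + 1 - 1 < N := by simpa using i.2
      simp only [h, dif_pos]
      have hi : (⟨(i:ℕ) + 1 - 1, h⟩ : Fin N) = i := by
        apply Fin.ext; simp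
      rw [hi]
  · rintro ⟨t, ht, rfl⟩
    refine ⟨fun i => t ((i:ℕ)+1), fun i => ht _, ?_⟩
    rw [hkey]

lemma Wset_union {T U : Finset ℕ} (h : Disjoint T U) :
    Wset (T ∪ U) ⊆ Wset T + Wset U := by
  rintro x ⟨s, hs, rfl⟩
  exact ⟨∑ i ∈ T, s i / (i:ℝ), ⟨s, hs, rfl⟩, ∑ i ∈ U, s i / (i:ℝ), ⟨s, hs, rfl⟩,
    (Finset.sum_union h).symm⟩

lemma Wset_single (i : ℕ) :
    Wset {i} ⊆ (↑({1 / (i:ℝ), -(1 / (i:ℝ))} : Finset ℝ) : Set ℝ) := by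
  rintro x ⟨s, hs, rfl⟩
  rcases hs i with h | h <;> simp [h, neg_div]

lemma Wset_pow (T : Finset ℕ) :
    ∃ F : Finset ℝ, Wset T ⊆ ↑F ∧ F.card ≤ 2 ^ T.card := by
  induction T using Finset.induction with
  | empty =>
    refine ⟨{0}, ?_, by simp⟩
    rintro x ⟨s, hs, rfl⟩; simp
  | @insert a T ha ih =>
    obtain ⟨F, hF, hcard⟩ := ih
    refine ⟨({1 / (a:ℝ), -(1 / (a:ℝ))} : Finset ℝ) + F, ?_, ?_⟩
    · rw [Finset.insert_eq]
      refine (Wset_union (by simpa using ha)).trans ?_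
      rw [Finset.coe_add]
      exact Set.add_subset_add (Wset_single a) hF
    · calc (({1 / (a:ℝ), -(1 / (a:ℝ))} : Finset ℝ) + F).card
          ≤ ({1 / (a:ℝ), -(1 / (a:ℝ))} : Finset ℝ).card * F.card := Finset.card_add_le
        _ ≤ 2 * 2 ^ T.card := by
            exact Nat.mul_le_mul (Finset.card_insert_le _ _ |>.trans (by simp)) hcard
        _ = 2 ^ (insert a T).card := by
            rw [Finset.card_insert_of_notMem ha, pow_succ, Nat.mul_comm]

/-- The quadruple `{d, 2d, 3d, 6d}`. -/
def quadF (d : ℕ) : Finset ℕ := {d, 2*d, 3*d, 6*d}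

lemma quad_disj {d e : ℕ} (hd : d % 6 = 1 ∨ d % 6 = 5) (he : e % 6 = 1 ∨ e % 6 = 5)
    (hne : d ≠ e) : Disjoint (quadF d) (quadF e) := by
  rw [Finset.disjoint_left]
  intro a ha hb
  simp only [quadF, Finset.mem_insert, Finset.mem_singleton] at ha hb
  omega

lemma quad_card {d : ℕ} (hd : 1 ≤ d) : (quadF d).card = 4 := by
  rw [quadF]
  rw [Finset.card_insert_of_notMem (by simp; omega),
      Finset.card_insert_of_notMem (by simp; omega),
      Finset.card_insert_of_notMem (by simp; omega), Finset.card_singleton]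

lemma quad_subset {d N : ℕ} (hd : 1 ≤ d) (h6 : 6*d ≤ N) : quadF d ⊆ Finset.Icc 1 N := by
  intro a ha
  simp only [quadF, Finset.mem_insert, Finset.mem_singleton] at ha
  rw [Finset.mem_Icc]
  omega

/-- Thanks to the relation `1/d = 1/(2d) + 1/(3d) + 1/(6d)`, the signed sums over a
quadruple take at most 15 distinct values. -/
lemma Wset_quad {d : ℕ} (hd : 1 ≤ d) :
    ∃ F : Finset ℝ, Wset (quadF d) ⊆ ↑F ∧ F.card ≤ 15 := by
  set r : ℝ := (d : ℝ) with hr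
  have hr0 : r ≠ 0 := by
    simp only [hr, ne_eq, Nat.cast_eq_zero]; omega
  set P : Finset (ℝ × ℝ × ℝ × ℝ) :=
    ((({1,-1} : Finset ℝ) ×ˢ ({1,-1} : Finset ℝ) ×ˢ ({1,-1} : Finset ℝ) ×ˢ
      ({1,-1} : Finset ℝ)).erase (1,-1,-1,-1)) with hP
  set g : ℝ × ℝ × ℝ × ℝ → ℝ :=
    fun p => p.1 / r + p.2.1 / (2*r) + p.2.2.1 / (3*r) + p.2.2.2 / (6*r) with hg
  refine ⟨P.image g, ?_, ?_⟩
  · rintro x ⟨s, hs, rfl⟩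
    have hsum : ∑ i ∈ quadF d, s i / (i : ℝ)
        = s d / r + s (2*d) / (2*r) + s (3*d) / (3*r) + s (6*d) / (6*r) := by
      have h1 : d ≠ 2*d := by omega
      have h2 : d ≠ 3*d := by omega
      have h3 : d ≠ 6*d := by omega
      have h4 : 2*d ≠ 3*d := by omega
      have h5 : 2*d ≠ 6*d := by omega
      have h6 : 3*d ≠ 6*d := by omega
      simp only [quadF, Finset.sum_insert, Finset.mem_insert, Finset.mem_singleton,
        Finset.sum_singleton, h1, h2, h3, h4, h5, h6, or_self, not_false_iff, false_or]
      push_cast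
      ring
    rw [hsum]
    by_cases hbad : (s d, s (2*d), s (3*d), s (6*d)) = (1, -1, -1, -1)
    · have he : s d / r + s (2*d) / (2*r) + s (3*d) / (3*r) + s (6*d) / (6*r)
          = g (-1, 1, 1, 1) := by
        have e1 : s d = 1 := by have := congrArg Prod.fst hbad; simpa using this
        have e2 : s (2*d) = -1 := by have := congrArg (fun p => p.2.1) hbad; simpa using this
        have e3 : s (3*d) = -1 := by have := congrArg (fun p => p.2.2.1) hbad; simpa using this
        have e4 : s (6*d) = -1 := by have := congrArg (fun p => p.2.2.2) hbad; simpa using this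
        rw [e1, e2, e3, e4]
        show (1:ℝ) / r + -1 / (2*r) + -1 / (3*r) + -1 / (6*r)
            = -1 / r + 1 / (2*r) + 1 / (3*r) + 1 / (6*r)
        field_simp
        ring
      rw [he]
      refine Finset.mem_coe.2 (Finset.mem_image_of_mem g ?_)
      rw [hP, Finset.mem_erase]
      constructor
      · intro h; rw [Prod.ext_iff] at h; norm_num at h
      · simp
    · refine Finset.mem_coe.2 ?_
      have : g (s d, s (2*d), s (3*d), s (6*d))
          = s d / r + s (2*d) / (2*r) + s (3*d) / (3*r) + s (6*d) / (6*r) := rfl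
      rw [← this]
      refine Finset.mem_image_of_mem g ?_
      rw [hP, Finset.mem_erase]
      refine ⟨hbad, ?_⟩
      simp only [Finset.mem_product, Finset.mem_insert, Finset.mem_singleton]
      exact ⟨hs d, hs (2*d), hs (3*d), hs (6*d)⟩
  · calc (P.image g).card ≤ P.card := Finset.card_image_le
      _ ≤ 15 := by
        rw [hP]
        have hc16 : ((({1,-1} : Finset ℝ) ×ˢ ({1,-1} : Finset ℝ) ×ˢ ({1,-1} : Finset ℝ) ×ˢ
            ({1,-1} : Finset ℝ))).card = 16 := by
          rw [Finset.card_product, Finset.card_product, Finset.card_product]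
          have h2 : ({1,-1} : Finset ℝ).card = 2 := by
            rw [Finset.card_insert_of_notMem (by norm_num), Finset.card_singleton]
          rw [h2]
        rw [Finset.card_erase_of_mem (by simp), hc16]

/-- The main counting lemma over a family of disjoint quadruples. -/
lemma Wset_biUnion {D : Finset ℕ} (hD : ∀ d ∈ D, d % 6 = 1 ∨ d % 6 = 5) :
    ∃ F : Finset ℝ, Wset (D.biUnion quadF) ⊆ ↑F ∧ F.card ≤ 15 ^ D.card := by
  induction D using Finset.induction with
  | empty =>
    refine ⟨{0}, ?_, by simp⟩
    rintro x ⟨s, hs, rfl⟩; simp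
  | @insert a D ha ih =>
    have haD : a % 6 = 1 ∨ a % 6 = 5 := hD a (Finset.mem_insert_self a D)
    obtain ⟨F₂, hF₂, hcard₂⟩ := ih (fun d hd => hD d (Finset.mem_insert_of_mem hd))
    obtain ⟨F₁, hF₁, hcard₁⟩ := Wset_quad (d := a) (by omega)
    have hdisj : Disjoint (quadF a) (D.biUnion quadF) := by
      rw [Finset.disjoint_biUnion_right]
      intro d hd
      exact quad_disj haD (hD d (Finset.mem_insert_of_mem hd)) (fun h => ha (h ▸ hd))
    refine ⟨F₁ + F₂, ?_, ?_⟩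
    · rw [Finset.biUnion_insert]
      refine (Wset_union hdisj).trans ?_
      rw [Finset.coe_add]
      exact Set.add_subset_add hF₁ hF₂
    · calc (F₁ + F₂).card ≤ F₁.card * F₂.card := Finset.card_add_le
        _ ≤ 15 * 15 ^ D.card := Nat.mul_le_mul hcard₁ hcard₂
        _ = 15 ^ (insert a D).card := by
            rw [Finset.card_insert_of_notMem ha, pow_succ, Nat.mul_comm]

lemma key_log : 18 * (Real.log 32 - Real.log 29) < 28 * (Real.log 16 - Real.log 15) := by
  have h1 : (18:ℝ) * (Real.log 32 - Real.log 29) = Real.log (32^18) - Real.log (29^18) := by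
    rw [Real.log_pow, Real.log_pow]; push_cast; ring
  have h2 : (28:ℝ) * (Real.log 16 - Real.log 15) = Real.log (16^28) - Real.log (15^28) := by
    rw [Real.log_pow, Real.log_pow]; push_cast; ring
  rw [h1, h2, sub_lt_sub_iff]
  have h3 : Real.log (32^18) + Real.log (15^28) = Real.log ((32:ℝ)^18 * 15^28) := by
    rw [Real.log_mul (by positivity) (by positivity)]
  have h4 : Real.log (16^28) + Real.log (29^18) = Real.log ((16:ℝ)^28 * 29^18) := by
    rw [Real.log_mul (by positivity) (by positivity)]
  rw [h3, h4]
  apply Real.log_lt_log (by positivity)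
  norm_num

lemma c_pos : 0 < Real.log 16 - Real.log 15 := by
  have := Real.log_lt_log (by norm_num : (0:ℝ) < 15) (by norm_num : (15:ℝ) < 16)
  linarith

lemma log16_eq : Real.log 16 = 4 * Real.log 2 := by
  have : (16:ℝ) = 2^4 := by norm_num
  rw [this, Real.log_pow]; push_cast; ring

lemma log32_eq : Real.log 32 = 5 * Real.log 2 := by
  have : (32:ℝ) = 2^5 := by norm_num
  rw [this, Real.log_pow]; push_cast; ring

lemma beta_lt : Real.log 2 - (Real.log 16 - Real.log 15) / 18
    < (23 / 28) * Real.log 2 + (1 / 28) * Real.log 29 := by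
  have hk := key_log
  rw [log32_eq] at hk
  nlinarith [hk]

theorem statement7 (α : ℝ)
    (hα : α > (23 / 28) * Real.log 2 + (1 / 28) * Real.log 29) :
    ∃ N₀ : ℕ, ∀ N : ℕ, N₀ ≤ N → ((SN N).ncard : ℝ) ≤ Real.exp (α * N) := by
  set c : ℝ := Real.log 16 - Real.log 15 with hc
  have hc0 : 0 < c := c_pos
  set β : ℝ := Real.log 2 - c / 18 with hβ
  have hαβ : 0 < α - β := by
    have := beta_lt
    rw [← hc, ← hβ] at this
    exact sub_pos.mpr (this.trans hα)
  obtain ⟨N₀, hN₀⟩ := exists_nat_ge (2 * c / (α - β))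
  refine ⟨N₀, fun N hN => ?_⟩
  -- construct the family of quadruple generators
  set J : ℕ := N / 36 with hJ
  set D : Finset ℕ := ((Finset.range J).image (fun j => 6*j+1)) ∪
      ((Finset.range J).image (fun j => 6*j+5)) with hD
  have hDmod : ∀ d ∈ D, d % 6 = 1 ∨ d % 6 = 5 := by
    intro d hd
    simp only [hD, Finset.mem_union, Finset.mem_image, Finset.mem_range] at hd
    rcases hd with ⟨j, _, rfl⟩ | ⟨j, _, rfl⟩ <;> omega
  have hDcard : D.card = 2 * J := by
    rw [hD, Finset.card_union_of_disjoint]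
    · rw [Finset.card_image_of_injective _ (fun a b h => by omega),
        Finset.card_image_of_injective _ (fun a b h => by omega), Finset.card_range]
      ring
    · rw [Finset.disjoint_left]
      intro a ha hb
      simp only [Finset.mem_image, Finset.mem_range] at ha hb
      obtain ⟨j, _, rfl⟩ := ha
      obtain ⟨k, _, hk⟩ := hb
      omega
  set T : Finset ℕ := D.biUnion quadF with hT
  have hTsub : T ⊆ Finset.Icc 1 N := by
    intro a ha
    rw [hT, Finset.mem_biUnion] at ha
    obtain ⟨d, hd, had⟩ := ha
    simp only [hD, Finset.mem_union, Finset.mem_image, Finset.mem_range] at hd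
    have hd1 : 1 ≤ d ∧ 6 * d ≤ N := by
      rcases hd with ⟨j, hj, rfl⟩ | ⟨j, hj, rfl⟩ <;> constructor <;> omega
    exact quad_subset hd1.1 hd1.2 had
  have hTcard : T.card = 4 * D.card := by
    rw [hT, Finset.card_biUnion]
    · rw [Finset.sum_congr rfl (fun d hd => quad_card (d := d) (by have := hDmod d hd; omega))]
      rw [Finset.sum_const, smul_eq_mul, Nat.mul_comm]
    · intro d hd e he hde
      exact quad_disj (hDmod d hd) (hDmod e he) hde
  -- count
  obtain ⟨F₁, hF₁, hcard₁⟩ := Wset_biUnion hDmod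
  obtain ⟨F₂, hF₂, hcard₂⟩ := Wset_pow (Finset.Icc 1 N \ T)
  have hsplit : Wset (Finset.Icc 1 N) ⊆ ↑(F₁ + F₂) := by
    rw [← Finset.union_sdiff_of_subset hTsub]
    refine (Wset_union Finset.disjoint_sdiff).trans ?_
    rw [Finset.coe_add]
    exact Set.add_subset_add hF₁ hF₂
  have hIcc : (Finset.Icc 1 N).card = N := by
    rw [Nat.card_Icc]; omega
  have hTle : T.card ≤ N := by
    have := Finset.card_le_card hTsub
    omega
  have hsd : (Finset.Icc 1 N \ T).card = N - 4 * D.card := by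
    rw [Finset.card_sdiff_of_subset hTsub, hIcc, hTcard]
  have hcard : (F₁ + F₂).card ≤ 15 ^ (2*J) * 2 ^ (N - 8*J) := by
    calc (F₁ + F₂).card ≤ F₁.card * F₂.card := Finset.card_add_le
      _ ≤ 15 ^ D.card * 2 ^ (Finset.Icc 1 N \ T).card := Nat.mul_le_mul hcard₁ hcard₂
      _ = 15 ^ (2*J) * 2 ^ (N - 8*J) := by
          rw [hDcard, hsd, hDcard]
          congr 2
          omega
  -- ncard bound
  have hncard : ((SN N).ncard : ℝ) ≤ ((15:ℝ) ^ (2*J) * 2 ^ (N - 8*J)) := by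
    have h1 : (SN N).ncard ≤ (F₁ + F₂).card := by
      rw [SN_eq_Wset]
      calc (Wset (Finset.Icc 1 N)).ncard
          ≤ (↑(F₁ + F₂) : Set ℝ).ncard :=
            Set.ncard_le_ncard hsplit (Finset.finite_toSet _)
        _ = (F₁ + F₂).card := Set.ncard_coe_finset _
    calc ((SN N).ncard : ℝ) ≤ ((F₁ + F₂).card : ℝ) := by exact_mod_cast h1
      _ ≤ ((15 ^ (2*J) * 2 ^ (N - 8*J) : ℕ) : ℝ) := by exact_mod_cast hcard
      _ = (15:ℝ) ^ (2*J) * 2 ^ (N - 8*J) := by push_cast; ring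
  refine hncard.trans ?_
  -- final analytic estimate
  have h8J : 8 * J ≤ N := by omega
  have hcast : ((N - 8*J : ℕ) : ℝ) = (N:ℝ) - 8*(J:ℝ) := by
    push_cast [Nat.cast_sub h8J]; ring
  have e1 : (15:ℝ) ^ (2*J) = Real.exp (((2*J : ℕ):ℝ) * Real.log 15) := by
    rw [← Real.log_pow, Real.exp_log (by positivity)]
  have e2 : (2:ℝ) ^ (N - 8*J) = Real.exp (((N - 8*J : ℕ):ℝ) * Real.log 2) := by
    rw [← Real.log_pow, Real.exp_log (by positivity)]
  rw [e1, e2, ← Real.exp_add, Real.exp_le_exp, hcast]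
  have hcast2 : ((2*J : ℕ):ℝ) = 2*(J:ℝ) := by push_cast; ring
  rw [hcast2]
  -- K = 2J, need (2J) log 15 + (N - 8J) log 2 ≤ α N
  have hJge : (2*J : ℝ) ≥ (N:ℝ)/18 - 2 := by
    have : 36 * J + 36 > N := by omega
    have hcast : (36:ℝ) * J + 36 > N := by exact_mod_cast this
    linarith
  have hlog15 : Real.log 15 = 4 * Real.log 2 - c := by
    rw [hc, log16_eq]; ring
  have hNα : 2 * c ≤ (N:ℝ) * (α - β) := by
    have hNN : (N₀:ℝ) ≤ (N:ℝ) := by exact_mod_cast hN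
    have h1 : 2 * c / (α - β) ≤ (N:ℝ) := le_trans (hN₀.trans hNN) (le_refl _)
    calc 2 * c = (2 * c / (α - β)) * (α - β) := by field_simp
      _ ≤ (N:ℝ) * (α - β) := by
          apply mul_le_mul_of_nonneg_right h1 (le_of_lt hαβ)
  have hJN : (8:ℝ) * (J:ℝ) ≤ (N:ℝ) := by exact_mod_cast h8J
  calc (2*J : ℝ) * Real.log 15 + ((N:ℝ) - 8*(J:ℝ)) * Real.log 2
      = (N:ℝ) * Real.log 2 - (2*J) * c := by rw [hlog15]; ring
    _ ≤ (N:ℝ) * Real.log 2 - ((N:ℝ)/18 - 2) * c := by nlinarith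
    _ = (N:ℝ) * β + 2 * c := by rw [hβ]; ring
    _ ≤ (N:ℝ) * β + (N:ℝ) * (α - β) := by linarith
    _ = α * N := by ring
end

section
/- For every positive integer N and every compactly supported continuously differentiable function Φ : ℝ → ℂ, one has 2^{−N} Σ_{s₁,…,s_N ∈ {−1,+1}} Φ(Σ_{n=1}^N s_n/n) = ∫_ℝ Φ̂(x) ρ_N(2x) dx, where Φ̂(x) := ∫_ℝ Φ(y) e^{−2πixy} dy. -/
open Real MeasureTheory
open Complex Filter
open scoped FourierTransform Topology Convolution

/-- `ρ_N(x) = ∏_{n=1}^N cos(πx/n)`. -/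
noncomputable def rhoN (N : ℕ) (x : ℝ) : ℝ :=
  ∏ n ∈ Finset.Icc 1 N, Real.cos (Real.pi * x / n)


noncomputable def efun (x v : ℝ) : ℂ :=
  Complex.exp ((((-2) * π * v * x : ℝ) : ℂ) * Complex.I)

lemma efun_add (x a b : ℝ) : efun x (a + b) = efun x a * efun x b := by
  rw [efun, efun, efun, ← Complex.exp_add]; congr 1; push_cast; ring

lemma efun_cont (x : ℝ) : Continuous (efun x) := by
  unfold efun
  apply Complex.continuous_exp.comp
  fun_prop

lemma fourier_eq_e (f : ℝ → ℂ) (x : ℝ) :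
    𝓕 f x = ∫ v : ℝ, efun x v * f v := by
  rw [Real.fourier_real_eq_integral_exp_smul]
  simp only [smul_eq_mul, efun]

lemma fourier_conj_neg (g : ℝ → ℂ) (x : ℝ) :
    𝓕 (fun v => (starRingEnd ℂ) (g (-v))) x = (starRingEnd ℂ) (𝓕 g x) := by
  rw [fourier_eq_e, fourier_eq_e]
  rw [← integral_neg_eq_self]
  rw [← integral_conj]
  congr 1 with v
  simp only [efun]
  rw [map_mul, ← Complex.exp_conj]
  simp only [map_mul, Complex.conj_ofReal, Complex.conj_I, neg_neg, mul_neg]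
  congr 3
  push_cast
  ring

lemma fourier_conv (g g' : ℝ → ℂ) (hg : Continuous g) (hgs : HasCompactSupport g)
    (hg' : Continuous g') (hgs' : HasCompactSupport g') (x : ℝ) :
    𝓕 (g ⋆[ContinuousLinearMap.mul ℝ ℂ] g') x = 𝓕 g x * 𝓕 g' x := by
  have hF : Continuous (fun p : ℝ × ℝ => efun x p.1 * (g p.2 * g' (p.1 - p.2))) := by
    apply Continuous.mul ((efun_cont x).comp continuous_fst)
    exact (hg.comp continuous_snd).mul (hg'.comp (continuous_fst.sub continuous_snd))
  have hFs : HasCompactSupport (fun p : ℝ × ℝ => efun x p.1 * (g p.2 * g' (p.1 - p.2))) := by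
    apply HasCompactSupport.intro ((hgs'.isCompact.add hgs.isCompact).prod hgs.isCompact)
    rintro ⟨w, t⟩ hp
    simp only [Set.mem_prod, not_and_or] at hp
    rcases hp with hp | hp
    · rcases eq_or_ne (g' (w - t)) 0 with h0 | h0
      · simp [h0]
      rcases eq_or_ne (g t) 0 with h1 | h1
      · simp [h1]
      exact absurd (by simpa using Set.add_mem_add (subset_tsupport _ h0) (subset_tsupport _ h1))
        (by simpa using hp)
    · have : g t = 0 := image_eq_zero_of_notMem_tsupport hp
      simp [this]
  have hFi : Integrable (Function.uncurry fun w t : ℝ => efun x w * (g t * g' (w - t)))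
      (volume.prod volume) := by
    rw [← Measure.volume_eq_prod]
    exact hF.integrable_of_hasCompactSupport hFs
  rw [fourier_eq_e, fourier_eq_e, fourier_eq_e]
  calc ∫ w, efun x w * (g ⋆[ContinuousLinearMap.mul ℝ ℂ] g') w
      = ∫ w, ∫ t, efun x w * (g t * g' (w - t)) := by
        congr 1 with w
        rw [convolution_def, ← integral_const_mul]
        rfl
    _ = ∫ t, ∫ w, efun x w * (g t * g' (w - t)) := integral_integral_swap hFi
    _ = ∫ t, (efun x t * g t) * ∫ u, efun x u * g' u := by
        congr 1 with t
        calc ∫ w, efun x w * (g t * g' (w - t))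
            = ∫ u, efun x (u + t) * (g t * g' u) := by
              rw [← integral_add_right_eq_self (fun w => efun x w * (g t * g' (w - t))) t]
              simp
          _ = (efun x t * g t) * ∫ u, efun x u * g' u := by
              rw [← integral_const_mul]
              congr 1 with u
              rw [efun_add]
              ring
    _ = (∫ t, efun x t * g t) * ∫ u, efun x u * g' u := integral_mul_const _ _

lemma innerl_flip : (innerₗ ℝ).flip = innerₗ ℝ := by
  apply LinearMap.ext; intro a; apply LinearMap.ext; intro b
  exact real_inner_comm a b

lemma gaussFlip {h : ℝ → ℂ} (hh : Integrable h) {c : ℝ} (hc : 0 < c) :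
    ∫ x : ℝ, Complex.exp (-((c : ℝ) : ℂ)⁻¹ * (x : ℂ) ^ 2) * 𝓕 h x
      = ∫ w : ℝ, (((π : ℂ) * (c : ℂ)) ^ ((Module.finrank ℝ ℝ : ℂ) / 2) *
          Complex.exp (-(π : ℂ) ^ 2 * (c : ℂ) * ((‖(0 : ℝ) - w‖ : ℝ) : ℂ) ^ 2)) • h w := by
  have hb : 0 < ((c : ℂ)⁻¹).re := by
    rw [← Complex.ofReal_inv]
    simpa using inv_pos.2 hc
  have hsq : ∀ v : ℝ, ((‖v‖ : ℝ) : ℂ) ^ 2 = (v : ℂ) ^ 2 := by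
    intro v
    norm_cast
    simp [Real.norm_eq_abs, sq_abs]
  have J : Integrable (fun v : ℝ => Complex.exp (-((c : ℂ)⁻¹) * (v : ℂ) ^ 2)) := by
    have heq : (fun v : ℝ => Complex.exp (-((c : ℂ)⁻¹) * (v : ℂ) ^ 2))
        = fun v : ℝ => Complex.exp (-((c : ℂ)⁻¹) * ((‖v‖ : ℝ) : ℂ) ^ 2
            + 0 * ((inner ℝ (0 : ℝ) v : ℝ) : ℂ)) := by
      funext v
      rw [hsq]
      ring_nf
    rw [heq]
    exact GaussianFourier.integrable_cexp_neg_mul_sq_norm_add (V := ℝ) hb 0 0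
  have flip := VectorFourier.integral_fourierIntegral_smul_eq_flip (L := innerₗ ℝ)
    Real.continuous_fourierChar continuous_inner J hh
  rw [innerl_flip] at flip
  have hgauss := fourier_gaussian_innerProductSpace (V := ℝ) hb
  calc ∫ x : ℝ, Complex.exp (-((c : ℝ) : ℂ)⁻¹ * (x : ℂ) ^ 2) * 𝓕 h x
      = ∫ x : ℝ, (fun v : ℝ => Complex.exp (-((c : ℂ)⁻¹) * (v : ℂ) ^ 2)) x •
          (VectorFourier.fourierIntegral Real.fourierChar volume (innerₗ ℝ) h x) := by
        simp [smul_eq_mul]; rfl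
    _ = ∫ w : ℝ, (VectorFourier.fourierIntegral Real.fourierChar volume (innerₗ ℝ)
          (fun v : ℝ => Complex.exp (-((c : ℂ)⁻¹) * (v : ℂ) ^ 2)) w) • h w := flip.symm
    _ = ∫ w : ℝ, (((π : ℂ) * (c : ℂ)) ^ ((Module.finrank ℝ ℝ : ℂ) / 2) *
          Complex.exp (-(π : ℂ) ^ 2 * (c : ℂ) * ((‖(0 : ℝ) - w‖ : ℝ) : ℂ) ^ 2)) • h w := by
        congr 1 with w
        congr 1
        have : (VectorFourier.fourierIntegral Real.fourierChar volume (innerₗ ℝ)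
            (fun v : ℝ => Complex.exp (-((c : ℂ)⁻¹) * (v : ℂ) ^ 2)) w)
            = 𝓕 (fun v : ℝ => Complex.exp (-((c : ℂ)⁻¹) * ((‖v‖ : ℝ) : ℂ) ^ 2)) w := by
          simp only [hsq]; rfl
        rw [this, hgauss w]
        have hc0 : (c : ℂ) ≠ 0 := by
          exact_mod_cast ne_of_gt hc
        congr 1
        · congr 1
          field_simp
        · congr 1
          rw [zero_sub, norm_neg]
          field_simp

lemma tendsto_gauss {h : ℝ → ℂ} (hh : Integrable h) (hc : ContinuousAt h 0) :
    Tendsto (fun n : ℕ => ∫ x : ℝ, Complex.exp (-(((n : ℝ) + 1 : ℝ) : ℂ)⁻¹ * (x : ℂ) ^ 2) * 𝓕 h x)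
      atTop (𝓝 (h 0)) := by
  have T := (Real.tendsto_integral_gaussian_smul' hh (v := 0) hc).comp
    (tendsto_atTop_add_const_right atTop (1 : ℝ) tendsto_natCast_atTop_atTop)
  refine T.congr fun n => ?_
  rw [Function.comp_apply, ← gaussFlip hh (by positivity : (0:ℝ) < (n : ℝ) + 1)]

lemma fourier_continuous {f : ℝ → ℂ} (hf : Integrable f) : Continuous (𝓕 f) :=
  VectorFourier.fourierIntegral_continuous Real.continuous_fourierChar
    (by exact continuous_inner) hf
lemma integrable_sq_norm_fourier {g : ℝ → ℂ} (hg : Continuous g) (hgs : HasCompactSupport g) :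
    Integrable (fun x : ℝ => ‖𝓕 g x‖ ^ 2) := by
  have hgi : Integrable g := hg.integrable_of_hasCompactSupport hgs
  set g' : ℝ → ℂ := fun v => (starRingEnd ℂ) (g (-v)) with hg'def
  have hg'c : Continuous g' := continuous_star.comp (hg.comp continuous_neg)
  have hg's : HasCompactSupport g' := by
    have h1 : HasCompactSupport (fun v : ℝ => g (-v)) := hgs.comp_homeomorph (Homeomorph.neg ℝ)
    exact h1.comp_left (map_zero _)
  set h : ℝ → ℂ := g ⋆[ContinuousLinearMap.mul ℝ ℂ] g' with hdef
  have hhc : Continuous h := HasCompactSupport.continuous_convolution_right _ hg's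
    hgi.locallyIntegrable hg'c
  have hhs : HasCompactSupport h := HasCompactSupport.convolution _ hgs hg's
  have hhi : Integrable h := hhc.integrable_of_hasCompactSupport hhs
  have hkey : ∀ x, 𝓕 h x = ((‖𝓕 g x‖ ^ 2 : ℝ) : ℂ) := by
    intro x
    rw [hdef, fourier_conv g g' hg hgs hg'c hg's, hg'def, fourier_conj_neg,
      Complex.mul_conj, Complex.normSq_eq_norm_sq]
  have hFgc : Continuous (𝓕 g) := fourier_continuous hgi
  -- the approximating real integrals
  have hint : ∀ n : ℕ, Integrable
      (fun x : ℝ => Real.exp (-((n : ℝ) + 1)⁻¹ * x ^ 2) * ‖𝓕 g x‖ ^ 2) := by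
    intro n
    have hb : Integrable (fun x : ℝ => Real.exp (-((n : ℝ) + 1)⁻¹ * x ^ 2)) :=
      integrable_exp_neg_mul_sq (by positivity)
    obtain ⟨C, hC⟩ : ∃ C, ∀ x : ℝ, ‖𝓕 g x‖ ≤ C := by
      refine ⟨∫ v, ‖g v‖, fun x => ?_⟩
      exact VectorFourier.norm_fourierIntegral_le_integral_norm _ _ _ _ _
    have := hb.bdd_mul (f := fun x : ℝ => ‖𝓕 g x‖ ^ 2)
      ((hFgc.norm.pow 2).aestronglyMeasurable)
      (ae_of_all _ fun x => by
        rw [norm_pow, norm_norm]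
        exact pow_le_pow_left₀ (norm_nonneg _) (hC x) 2)
    exact this.congr (by filter_upwards with x using mul_comm _ _)
  -- convergence of the real integrals
  set a : ℕ → ℝ := fun n => ∫ x : ℝ, Real.exp (-((n : ℝ) + 1)⁻¹ * x ^ 2) * ‖𝓕 g x‖ ^ 2
    with ha
  have hconvC : Tendsto (fun n : ℕ => ((a n : ℝ) : ℂ)) atTop (𝓝 (h 0)) := by
    have hT := tendsto_gauss hhi hhc.continuousAt
    refine hT.congr fun n => ?_
    have han : a n = ∫ x : ℝ, Real.exp (-((n : ℝ) + 1)⁻¹ * x ^ 2) * ‖𝓕 g x‖ ^ 2 := rfl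
    rw [han]
    calc ∫ x : ℝ, Complex.exp (-(((n : ℝ) + 1 : ℝ) : ℂ)⁻¹ * (x : ℂ) ^ 2) * 𝓕 h x
        = ∫ x : ℝ, ((Real.exp (-((n : ℝ) + 1)⁻¹ * x ^ 2) * ‖𝓕 g x‖ ^ 2 : ℝ) : ℂ) := by
          congr 1 with x
          rw [hkey x, Complex.ofReal_mul, Complex.ofReal_exp]
          congr 2
          push_cast
          ring
      _ = _ := integral_ofReal
  have hconv : Tendsto a atTop (𝓝 (h 0).re) := by
    have := (Complex.continuous_re.tendsto (h 0)).comp hconvC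
    simpa [Function.comp_def] using this
  -- monotone convergence
  have hmono : ∀ x : ℝ, Monotone fun n : ℕ =>
      ENNReal.ofReal (Real.exp (-((n : ℝ) + 1)⁻¹ * x ^ 2) * ‖𝓕 g x‖ ^ 2) := by
    intro x m n hmn
    apply ENNReal.ofReal_le_ofReal
    apply mul_le_mul_of_nonneg_right _ (by positivity)
    apply Real.exp_le_exp.2
    rw [neg_mul, neg_mul, neg_le_neg_iff]
    apply mul_le_mul_of_nonneg_right _ (by positivity)
    apply inv_anti₀ (by positivity)
    have : (m : ℝ) ≤ (n : ℝ) := by exact_mod_cast hmn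
    linarith
  have hptw : ∀ x : ℝ, Tendsto (fun n : ℕ =>
      ENNReal.ofReal (Real.exp (-((n : ℝ) + 1)⁻¹ * x ^ 2) * ‖𝓕 g x‖ ^ 2)) atTop
      (𝓝 (ENNReal.ofReal (‖𝓕 g x‖ ^ 2))) := by
    intro x
    apply ENNReal.tendsto_ofReal
    have h1 : Tendsto (fun n : ℕ => -((n : ℝ) + 1)⁻¹ * x ^ 2) atTop (𝓝 0) := by
      have : Tendsto (fun n : ℕ => ((n : ℝ) + 1)⁻¹) atTop (𝓝 0) :=
        tendsto_inv_atTop_zero.comp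
          (tendsto_atTop_add_const_right atTop (1 : ℝ) tendsto_natCast_atTop_atTop)
      simpa using (this.neg.mul_const (x ^ 2))
    have h2 : Tendsto (fun n : ℕ => Real.exp (-((n : ℝ) + 1)⁻¹ * x ^ 2)) atTop (𝓝 1) := by
      simpa [Function.comp_def] using (Real.continuous_exp.tendsto 0).comp h1
    simpa using h2.mul_const (‖𝓕 g x‖ ^ 2)
  have hMCT := lintegral_tendsto_of_tendsto_of_monotone
    (f := fun n (x : ℝ) => ENNReal.ofReal (Real.exp (-((n : ℝ) + 1)⁻¹ * x ^ 2) * ‖𝓕 g x‖ ^ 2))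
    (F := fun x : ℝ => ENNReal.ofReal (‖𝓕 g x‖ ^ 2))
    (fun n => ((hint n).aestronglyMeasurable.aemeasurable).ennreal_ofReal)
    (ae_of_all _ hmono) (ae_of_all _ hptw)
  have hlin : ∀ n : ℕ, ∫⁻ x : ℝ, ENNReal.ofReal
      (Real.exp (-((n : ℝ) + 1)⁻¹ * x ^ 2) * ‖𝓕 g x‖ ^ 2) = ENNReal.ofReal (a n) := by
    intro n
    rw [ha, ofReal_integral_eq_lintegral_ofReal (hint n)
      (ae_of_all _ fun x => by positivity)]
  have hfin : ∫⁻ x : ℝ, ENNReal.ofReal (‖𝓕 g x‖ ^ 2) = ENNReal.ofReal ((h 0).re) := by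
    refine tendsto_nhds_unique ?_ (ENNReal.tendsto_ofReal hconv)
    refine hMCT.congr fun n => (hlin n)
  constructor
  · exact (hFgc.norm.pow 2).aestronglyMeasurable
  · rw [hasFiniteIntegral_iff_ofReal (ae_of_all _ fun x => by positivity), hfin]
    exact ENNReal.ofReal_lt_top
lemma integrable_fourier_of_C1 {Φ : ℝ → ℂ} (hsupp : HasCompactSupport Φ)
    (hreg : ContDiff ℝ 1 Φ) : Integrable (𝓕 Φ) := by
  have hc : Continuous Φ := hreg.continuous
  have hi : Integrable Φ := hc.integrable_of_hasCompactSupport hsupp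
  have hd : Continuous (deriv Φ) := hreg.continuous_deriv le_rfl
  have hds : HasCompactSupport (deriv Φ) := hsupp.deriv
  have hdi : Integrable (deriv Φ) := hd.integrable_of_hasCompactSupport hds
  have h1 : Integrable (fun x : ℝ => ‖𝓕 Φ x‖ ^ 2) := integrable_sq_norm_fourier hc hsupp
  have h2 : Integrable (fun x : ℝ => ‖𝓕 (deriv Φ) x‖ ^ 2) := integrable_sq_norm_fourier hd hds
  have hrel : ∀ x : ℝ, ‖𝓕 (deriv Φ) x‖ = (2 * π * |x|) * ‖𝓕 Φ x‖ := by
    intro x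
    rw [Real.fourier_deriv hi (hreg.differentiable one_ne_zero) hdi]
    rw [norm_smul, norm_mul, norm_mul, norm_mul]
    simp [Complex.norm_real, abs_of_pos Real.pi_pos]
  have hbound : ∀ x : ℝ, ‖𝓕 Φ x‖ ≤ 2⁻¹ * (1 + x ^ 2)⁻¹ + 2⁻¹ * ‖𝓕 Φ x‖ ^ 2
      + (2 * (2 * π) ^ 2)⁻¹ * ‖𝓕 (deriv Φ) x‖ ^ 2 := by
    intro x
    set F := ‖𝓕 Φ x‖ with hF
    have hF0 : 0 ≤ F := norm_nonneg _
    have h0 : (0 : ℝ) < 1 + x ^ 2 := by positivity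
    have hpi : (0 : ℝ) < π := Real.pi_pos
    have hthird : (2 * (2 * π) ^ 2)⁻¹ * ‖𝓕 (deriv Φ) x‖ ^ 2 = 2⁻¹ * x ^ 2 * F ^ 2 := by
      rw [hrel x, ← hF, mul_pow, mul_pow, mul_pow, _root_.sq_abs]
      have hpi' : π ≠ 0 := ne_of_gt hpi
      field_simp
    rw [hthird]
    have key : F ≤ 2⁻¹ * (1 + x ^ 2)⁻¹ + 2⁻¹ * ((1 + x ^ 2) * F ^ 2) := by
      have hAM : 2 * ((1 + x ^ 2) * F) ≤ 1 + ((1 + x ^ 2) * F) ^ 2 := by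
        nlinarith [sq_nonneg ((1 + x ^ 2) * F - 1)]
      calc F = (2 * ((1 + x ^ 2) * F)) * (2⁻¹ * (1 + x ^ 2)⁻¹) := by
              field_simp
            _ ≤ (1 + ((1 + x ^ 2) * F) ^ 2) * (2⁻¹ * (1 + x ^ 2)⁻¹) := by
              apply mul_le_mul_of_nonneg_right hAM (by positivity)
            _ = 2⁻¹ * (1 + x ^ 2)⁻¹ + 2⁻¹ * ((1 + x ^ 2) * F ^ 2) := by
              field_simp
    calc F ≤ 2⁻¹ * (1 + x ^ 2)⁻¹ + 2⁻¹ * ((1 + x ^ 2) * F ^ 2) := key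
      _ = 2⁻¹ * (1 + x ^ 2)⁻¹ + 2⁻¹ * F ^ 2 + 2⁻¹ * x ^ 2 * F ^ 2 := by ring
  have hdom : Integrable (fun x : ℝ => 2⁻¹ * (1 + x ^ 2)⁻¹ + 2⁻¹ * ‖𝓕 Φ x‖ ^ 2
      + (2 * (2 * π) ^ 2)⁻¹ * ‖𝓕 (deriv Φ) x‖ ^ 2) :=
    ((integrable_inv_one_add_sq.const_mul _).add (h1.const_mul _)).add (h2.const_mul _)
  refine hdom.mono' (fourier_continuous hi).aestronglyMeasurable (ae_of_all _ fun x => ?_)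
  exact hbound x

lemma efun_norm (x v : ℝ) : ‖efun x v‖ = 1 := Complex.norm_exp_ofReal_mul_I _

lemma integral_fourier_eq {ψ : ℝ → ℂ} (hsupp : HasCompactSupport ψ) (hreg : ContDiff ℝ 1 ψ) :
    ∫ x : ℝ, 𝓕 ψ x = ψ 0 := by
  have hi : Integrable ψ := hreg.continuous.integrable_of_hasCompactSupport hsupp
  have h2 : Integrable (𝓕 ψ) := integrable_fourier_of_C1 hsupp hreg
  have hinv := hi.fourierInv_fourier_eq h2 (hreg.continuous.continuousAt (x := 0))
  rw [← hinv, Real.fourierInv_eq]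
  simp

lemma prod_Icc_eq_fin (N : ℕ) (f : ℕ → ℝ) :
    ∏ n ∈ Finset.Icc 1 N, f n = ∏ i : Fin N, f ((i : ℕ) + 1) := by
  rw [← Finset.Ico_add_one_right_eq_Icc, Finset.prod_Ico_eq_prod_range]
  have hNN : N.succ - 1 = N := rfl
  rw [Nat.add_sub_cancel]
  rw [← Fin.prod_univ_eq_prod_range (fun i => f (1 + i)) N]
  exact Finset.prod_congr rfl fun i _ => by rw [add_comm]

lemma sum_pi_subtype {M : Type*} [AddCommMonoid M] {N : ℕ} (S : Finset ℤ)
    (F : (Fin N → ℤ) → M) :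
    ∑ s : Fin N → S, F (fun i => (s i : ℤ))
      = ∑ p ∈ Fintype.piFinset (fun _ : Fin N => S), F p := by
  classical
  refine Finset.sum_bij' (fun s _ => fun i => ((s i : ℤ)))
    (fun p hp => fun i => ⟨p i, (Fintype.mem_piFinset.1 hp) i⟩) ?_ ?_ ?_ ?_ ?_
  · intro s _
    exact Fintype.mem_piFinset.2 fun i => (s i).2
  · intro p hp
    exact Finset.mem_univ _
  · intro s _
    funext i
    rfl
  · intro p hp
    funext i
    rfl
  · intro s _
    rfl

lemma avg_char (N : ℕ) (x : ℝ) :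
    (1 / 2 ^ N : ℂ) * ∑ s : Fin N → ({-1, 1} : Finset ℤ),
        ((Real.fourierChar ((∑ i : Fin N, ((s i : ℤ) : ℝ) / ((i : ℕ) + 1)) * x) : Circle) : ℂ)
      = ((rhoN N (2 * x) : ℝ) : ℂ) := by
  classical
  have hG : ∀ p : Fin N → ℤ,
      ((Real.fourierChar ((∑ i : Fin N, ((p i : ℤ) : ℝ) / ((i : ℕ) + 1)) * x) : Circle) : ℂ)
      = ∏ i : Fin N, Complex.exp
          ((((2 * π * (((p i : ℤ) : ℝ) / ((i : ℕ) + 1) * x)) : ℝ) : ℂ) * Complex.I) := by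
    intro p
    rw [Real.fourierChar_apply]
    have hre : (2 * π * ((∑ i : Fin N, ((p i : ℤ) : ℝ) / ((i : ℕ) + 1)) * x) : ℝ)
        = ∑ i : Fin N, 2 * π * (((p i : ℤ) : ℝ) / ((i : ℕ) + 1) * x) := by
      rw [Finset.sum_mul, Finset.mul_sum]
    rw [hre, Complex.ofReal_sum, Finset.sum_mul, Complex.exp_sum]
  calc (1 / 2 ^ N : ℂ) * ∑ s : Fin N → ({-1, 1} : Finset ℤ),
        ((Real.fourierChar ((∑ i : Fin N, ((s i : ℤ) : ℝ) / ((i : ℕ) + 1)) * x) : Circle) : ℂ)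
      = (1 / 2 ^ N : ℂ) * ∑ p ∈ Fintype.piFinset (fun _ : Fin N => ({-1, 1} : Finset ℤ)),
          ∏ i : Fin N, Complex.exp
            ((((2 * π * (((p i : ℤ) : ℝ) / ((i : ℕ) + 1) * x)) : ℝ) : ℂ) * Complex.I) := by
        congr 1
        rw [← sum_pi_subtype ({-1, 1} : Finset ℤ) (fun p => ∏ i : Fin N, Complex.exp
            ((((2 * π * (((p i : ℤ) : ℝ) / ((i : ℕ) + 1) * x)) : ℝ) : ℂ) * Complex.I))]
        exact Finset.sum_congr rfl fun s _ => hG _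
    _ = (1 / 2 ^ N : ℂ) * ∏ i : Fin N, ∑ j ∈ ({-1, 1} : Finset ℤ),
          Complex.exp ((((2 * π * ((j : ℝ) / ((i : ℕ) + 1) * x)) : ℝ) : ℂ) * Complex.I) := by
        rw [Finset.prod_univ_sum]
    _ = (1 / 2 ^ N : ℂ) * ∏ i : Fin N,
          (2 * ((Real.cos (π * (2 * x) / ((i : ℕ) + 1)) : ℝ) : ℂ)) := by
        congr 1
        refine Finset.prod_congr rfl fun i _ => ?_
        rw [Finset.sum_insert (by decide), Finset.sum_singleton]
        have h1 : ((2 * π * (((-1 : ℤ) : ℝ) / ((i : ℕ) + 1) * x) : ℝ) : ℂ) * Complex.I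
            = (-((π * (2 * x) / ((i : ℕ) + 1) : ℝ) : ℂ)) * Complex.I := by
          rw [← Complex.ofReal_neg]
          congr 2
          push_cast
          ring
        have h2 : ((2 * π * (((1 : ℤ) : ℝ) / ((i : ℕ) + 1) * x) : ℝ) : ℂ) * Complex.I
            = ((π * (2 * x) / ((i : ℕ) + 1) : ℝ) : ℂ) * Complex.I := by
          congr 2
          push_cast
          ring
        rw [h1, h2, add_comm, Complex.ofReal_cos, ← Complex.two_cos]
    _ = ((rhoN N (2 * x) : ℝ) : ℂ) := by
        rw [Finset.prod_mul_distrib, Finset.prod_const, Finset.card_univ, Fintype.card_fin]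
        have hρ : rhoN N (2 * x) = ∏ i : Fin N, Real.cos (π * (2 * x) / ((i : ℕ) + 1)) := by
          rw [rhoN, prod_Icc_eq_fin N (fun n => Real.cos (π * (2 * x) / (n : ℝ)))]
          exact Finset.prod_congr rfl fun i _ => by push_cast; ring_nf
        rw [hρ, Complex.ofReal_prod, ← mul_assoc, one_div, inv_mul_cancel₀ (pow_ne_zero N two_ne_zero),
          one_mul]
noncomputable def cOf (N : ℕ) (s : Fin N → ({-1, 1} : Finset ℤ)) : ℝ :=
  ∑ i : Fin N, ((s i : ℤ) : ℝ) / ((i : ℕ) + 1)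

lemma cOf_def (N : ℕ) (s : Fin N → ({-1, 1} : Finset ℤ)) :
    cOf N s = ∑ i : Fin N, ((s i : ℤ) : ℝ) / ((i : ℕ) + 1) := rfl

lemma avg_char' (N : ℕ) (x : ℝ) :
    (1 / 2 ^ N : ℂ) * ∑ s : Fin N → ({-1, 1} : Finset ℤ),
        ((Real.fourierChar (cOf N s * x) : Circle) : ℂ)
      = ((rhoN N (2 * x) : ℝ) : ℂ) := by
  simp only [cOf_def]
  exact avg_char N x

theorem statement8 (N : ℕ) (hN : 1 ≤ N) (Φ : ℝ → ℂ)
    (hsupp : HasCompactSupport Φ) (hreg : ContDiff ℝ 1 Φ) :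
    (1 / 2 ^ N : ℂ) * ∑ s : Fin N → ({-1, 1} : Finset ℤ),
        Φ (∑ i : Fin N, ((s i : ℤ) : ℝ) / ((i : ℕ) + 1))
      = ∫ x : ℝ,
          (∫ y : ℝ, Φ y * Complex.exp (-(2 * Real.pi * Complex.I * x * y)))
            * (rhoN N (2 * x) : ℂ) := by
  classical
  set ψ : ℝ → ℂ := fun y =>
    (1 / 2 ^ N : ℂ) * ∑ s : Fin N → ({-1, 1} : Finset ℤ), Φ (y + cOf N s) with hψ
  have hψreg : ContDiff ℝ 1 ψ := by
    apply ContDiff.mul contDiff_const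
    apply ContDiff.sum
    intro s _
    exact hreg.comp (contDiff_id.add contDiff_const)
  have htr : ∀ a : ℝ, HasCompactSupport fun y : ℝ => Φ (y + a) := fun a =>
    hsupp.comp_homeomorph (Homeomorph.addRight a)
  have htri : ∀ a : ℝ, Integrable fun y : ℝ => Φ (y + a) := fun a =>
    (hreg.continuous.comp (continuous_id.add continuous_const)).integrable_of_hasCompactSupport
      (htr a)
  have hψsupp : HasCompactSupport ψ := by
    have hsum : ∀ u : Finset (Fin N → ({-1, 1} : Finset ℤ)),
        HasCompactSupport fun y : ℝ => ∑ s ∈ u, Φ (y + cOf N s) := by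
      intro u
      induction u using Finset.induction_on with
      | empty =>
          apply HasCompactSupport.intro isCompact_empty
          intro y _
          simp
      | @insert a u hns ih =>
          have heq : (fun y : ℝ => ∑ s ∈ insert a u, Φ (y + cOf N s))
              = fun y : ℝ => Φ (y + cOf N a) + ∑ s ∈ u, Φ (y + cOf N s) := by
            funext y
            rw [Finset.sum_insert hns]
          rw [heq]
          exact (htr (cOf N a)).add ih
    exact (hsum Finset.univ).mul_left
  -- the key pointwise identity for Fourier transforms
  have hkey : ∀ x : ℝ, 𝓕 ψ x = 𝓕 Φ x * ((rhoN N (2 * x) : ℝ) : ℂ) := by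
    intro x
    have h2 : ∀ s : Fin N → ({-1, 1} : Finset ℤ), 𝓕 (fun y => Φ (y + cOf N s)) x
        = ((Real.fourierChar (cOf N s * x) : Circle) : ℂ) * 𝓕 Φ x := by
      intro s
      have h := congrFun
        (VectorFourier.fourierIntegral_comp_add_right Real.fourierChar volume (innerₗ ℝ) Φ
          (cOf N s)) x
      have h' : 𝓕 (fun y => Φ (y + cOf N s)) x
          = (Real.fourierChar ((innerₗ ℝ) (cOf N s) x) : Circle) • 𝓕 Φ x := h
      rw [h', Circle.smul_def]
      congr 2
      exact congrArg _ (Real.inner_apply _ _)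
    have h1 : 𝓕 ψ x = (1 / 2 ^ N : ℂ)
        * ∑ s : Fin N → ({-1, 1} : Finset ℤ), 𝓕 (fun y => Φ (y + cOf N s)) x := by
      rw [fourier_eq_e]
      calc ∫ v, efun x v * ψ v
          = ∫ v, (1 / 2 ^ N : ℂ) * ∑ s : Fin N → ({-1, 1} : Finset ℤ),
              efun x v * Φ (v + cOf N s) := by
            refine integral_congr_ae (ae_of_all _ fun v => ?_)
            beta_reduce
            rw [← Finset.mul_sum]
            ring
        _ = (1 / 2 ^ N : ℂ) * ∑ s : Fin N → ({-1, 1} : Finset ℤ),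
              ∫ v, efun x v * Φ (v + cOf N s) := by
            rw [integral_const_mul, integral_finset_sum]
            intro s _
            refine Integrable.bdd_mul (htri (cOf N s)) (efun_cont x).aestronglyMeasurable
              (ae_of_all _ fun v => le_of_eq (efun_norm x v))
        _ = (1 / 2 ^ N : ℂ) * ∑ s : Fin N → ({-1, 1} : Finset ℤ),
              𝓕 (fun y => Φ (y + cOf N s)) x := by
            congr 1
            exact Finset.sum_congr rfl fun s _ => (fourier_eq_e _ x).symm
    rw [h1]
    calc (1 / 2 ^ N : ℂ) * ∑ s : Fin N → ({-1, 1} : Finset ℤ), 𝓕 (fun y => Φ (y + cOf N s)) x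
        = (1 / 2 ^ N : ℂ) * ∑ s : Fin N → ({-1, 1} : Finset ℤ),
            ((Real.fourierChar (cOf N s * x) : Circle) : ℂ) * 𝓕 Φ x := by
          congr 1
          exact Finset.sum_congr rfl fun s _ => h2 s
      _ = ((1 / 2 ^ N : ℂ) * ∑ s : Fin N → ({-1, 1} : Finset ℤ),
            ((Real.fourierChar (cOf N s * x) : Circle) : ℂ)) * 𝓕 Φ x := by
          rw [← Finset.sum_mul]
          ring
      _ = 𝓕 Φ x * ((rhoN N (2 * x) : ℝ) : ℂ) := by
          rw [avg_char' N x, mul_comm]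
  have hinner : ∀ x : ℝ,
      (∫ y : ℝ, Φ y * Complex.exp (-(2 * (π : ℂ) * Complex.I * (x : ℂ) * (y : ℂ))))
        = 𝓕 Φ x := by
    intro x
    rw [fourier_eq_e]
    refine integral_congr_ae (ae_of_all _ fun y => ?_)
    beta_reduce
    have hxy : efun x y = Complex.exp (-(2 * (π : ℂ) * Complex.I * (x : ℂ) * (y : ℂ))) := by
      simp only [efun]
      congr 1
      push_cast
      ring
    rw [hxy]
    exact mul_comm _ _
  have hLHS : (1 / 2 ^ N : ℂ) * ∑ s : Fin N → ({-1, 1} : Finset ℤ),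
      Φ (∑ i : Fin N, ((s i : ℤ) : ℝ) / ((i : ℕ) + 1)) = ψ 0 := by
    rw [hψ]
    simp only [zero_add]
    simp only [← cOf_def]
  calc (1 / 2 ^ N : ℂ) * ∑ s : Fin N → ({-1, 1} : Finset ℤ),
        Φ (∑ i : Fin N, ((s i : ℤ) : ℝ) / ((i : ℕ) + 1))
      = ψ 0 := hLHS
    _ = ∫ x : ℝ, 𝓕 ψ x := (integral_fourier_eq hψsupp hψreg).symm
    _ = ∫ x : ℝ, 𝓕 Φ x * ((rhoN N (2 * x) : ℝ) : ℂ) :=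
        integral_congr_ae (ae_of_all _ fun x => hkey x)
    _ = ∫ x : ℝ,
          (∫ y : ℝ, Φ y * Complex.exp (-(2 * Real.pi * Complex.I * x * y)))
            * (rhoN N (2 * x) : ℂ) := by
        refine integral_congr_ae (ae_of_all _ fun x => ?_)
        beta_reduce
        rw [hinner x]
end

section
/- For every positive constant C < 1/log 4 there exist constants B, E > 0 and N₀ such that for all integers N ≥ N₀ and all real x ∈ [1, exp(C (log N)²)], one has |ρ_N(x)| < exp(−B·exp(E·√(log x))). -/
open Real Finset

noncomputable def dI (u : ℝ) : ℝ := |u - round u|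

lemma dI_nonneg (u : ℝ) : 0 ≤ dI u := abs_nonneg _

lemma dI_le_half (u : ℝ) : dI u ≤ 1/2 := abs_sub_round u

lemma round_eq_of_abs {u : ℝ} {m : ℤ} (h : |u - m| < 1/2) : round u = m := by
  have h1 : round (u - m) = 0 := by
    rw [round_eq_zero_iff]
    obtain ⟨h2, h3⟩ := abs_lt.1 h
    constructor <;> simp <;> linarith
  have h2 : round (u - m) = round u - m := round_sub_intCast u m
  omega

lemma dI_double {u : ℝ} (h : dI u < 1/4) : dI (2*u) = 2 * dI u := by
  have h0 : |u - round u| < 1/4 := h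
  have h1 : |2*u - ((2 * round u : ℤ) : ℝ)| < 1/2 := by
    push_cast
    rw [show 2*u - 2*(round u : ℝ) = 2*(u - round u) by ring, abs_mul]
    rw [abs_of_nonneg (by norm_num : (0:ℝ) ≤ 2)]
    linarith
  have h2 : round (2*u) = 2 * round u := round_eq_of_abs h1
  unfold dI
  rw [h2]
  push_cast
  rw [show 2*u - 2*(round u : ℝ) = 2*(u - round u) by ring, abs_mul,
    abs_of_nonneg (by norm_num : (0:ℝ) ≤ 2)]

lemma dI_chain {u : ℝ} {J : ℕ} (h : ∀ k ≤ J, dI (2^k * u) < 1/4) :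
    2^J * dI u < 1/4 := by
  have key : ∀ k, k ≤ J → dI (2^k * u) = 2^k * dI u := by
    intro k
    induction k with
    | zero => simp
    | succ n ih =>
      intro hk
      have hn : n ≤ J := Nat.le_of_succ_le hk
      have h1 : dI (2^n * u) < 1/4 := h n hn
      have h2 : dI (2 * (2^n * u)) = 2 * dI (2^n * u) := dI_double h1
      calc dI (2^(n+1) * u) = dI (2 * (2^n * u)) := by ring_nf
        _ = 2 * dI (2^n * u) := h2
        _ = 2 * (2^n * dI u) := by rw [ih hn]
        _ = 2^(n+1) * dI u := by ring
  have := h J le_rfl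
  rw [key J le_rfl] at this
  exact this

lemma abs_cos_le {u : ℝ} (h : 1/4 ≤ dI u) : |Real.cos (Real.pi * u)| ≤ Real.sqrt 2 / 2 := by
  set m := round u with hm
  have habs : |Real.cos (Real.pi * u)| = |Real.cos (Real.pi * (u - m))| := by
    rw [show Real.pi * u = Real.pi * (u - m) + m * Real.pi by ring,
      Real.cos_add_int_mul_pi, abs_mul]
    have : |((-1:ℝ)) ^ m| = 1 := by
      rcases Int.even_or_odd m with he | ho
      · rw [he.neg_one_zpow]; norm_num
      · rw [ho.neg_one_zpow]; norm_num
    rw [this, one_mul]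
  rw [habs]
  have h1 : |u - m| ≤ 1/2 := abs_sub_round u
  have h2 : 1/4 ≤ |u - m| := h
  have h3 : |Real.cos (Real.pi * (u - m))| = Real.cos (Real.pi * |u - m|) := by
    rcases abs_cases (u - m) with ⟨he, _⟩ | ⟨he, _⟩
    · rw [he]
      rw [abs_of_nonneg]
      apply Real.cos_nonneg_of_mem_Icc
      constructor
      · nlinarith [Real.pi_pos]
      · nlinarith [Real.pi_pos, Real.pi_le_four]
    · rw [he, show Real.pi * -(u - m) = -(Real.pi * (u-m)) by ring, Real.cos_neg]
      rw [abs_of_nonneg]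
      apply Real.cos_nonneg_of_mem_Icc
      constructor
      · nlinarith [Real.pi_pos]
      · nlinarith [Real.pi_pos, Real.pi_le_four]
  rw [h3, ← Real.cos_pi_div_four]
  apply Real.cos_le_cos_of_nonneg_of_le_pi
  · positivity
  · nlinarith [Real.pi_pos, abs_nonneg (u - m)]
  · nlinarith [Real.pi_pos]


lemma prod_bound (N : ℕ) (x : ℝ) (S : Finset ℕ) (hS : S ⊆ Finset.Icc 1 N)
    (hgood : ∀ n ∈ S, 1/4 ≤ dI (x / n)) :
    |rhoN N x| ≤ (Real.sqrt 2 / 2) ^ S.card := by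
  have habs : |rhoN N x| = ∏ n ∈ Finset.Icc 1 N, |Real.cos (Real.pi * x / n)| := by
    rw [rhoN, Finset.abs_prod]
  rw [habs, ← Finset.prod_sdiff hS]
  have h1 : ∏ n ∈ Finset.Icc 1 N \ S, |Real.cos (Real.pi * x / n)| ≤ 1 :=
    Finset.prod_le_one (fun i _ => abs_nonneg _) (fun i _ => Real.abs_cos_le_one _)
  have h2 : ∏ n ∈ S, |Real.cos (Real.pi * x / n)| ≤ (Real.sqrt 2 / 2) ^ S.card := by
    calc ∏ n ∈ S, |Real.cos (Real.pi * x / n)| ≤ ∏ _n ∈ S, (Real.sqrt 2 / 2) := by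
          apply Finset.prod_le_prod (fun i _ => abs_nonneg _)
          intro n hn
          have := abs_cos_le (hgood n hn)
          rwa [show Real.pi * (x / n) = Real.pi * x / n by ring] at this
      _ = (Real.sqrt 2 / 2) ^ S.card := Finset.prod_const _
  have h3 : (0:ℝ) ≤ ∏ n ∈ S, |Real.cos (Real.pi * x / n)| :=
    Finset.prod_nonneg (fun i _ => abs_nonneg _)
  calc (∏ n ∈ Finset.Icc 1 N \ S, |Real.cos (Real.pi * x / n)|) * ∏ n ∈ S, |Real.cos (Real.pi * x / n)|
      ≤ 1 * ((Real.sqrt 2 / 2) ^ S.card) := mul_le_mul h1 h2 h3 zero_le_one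
    _ = (Real.sqrt 2 / 2) ^ S.card := one_mul _

lemma dI_ge_of_between {u : ℝ} {a : ℕ} (h1 : (a:ℝ) + 1/4 ≤ u) (h2 : u ≤ (a:ℝ) + 3/4) :
    1/4 ≤ dI u := by
  unfold dI
  rcases le_or_gt (round u) (a:ℤ) with h | h
  · have h3 : ((round u : ℤ):ℝ) ≤ (a:ℝ) := by exact_mod_cast h
    rw [abs_of_nonneg (by linarith)]
    linarith
  · have h3 : (a:ℝ) + 1 ≤ ((round u : ℤ):ℝ) := by exact_mod_cast h
    rw [abs_of_nonpos (by linarith)]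
    linarith

lemma regimeI (N : ℕ) (x : ℝ) (hx : 1 ≤ x) (hN : 4*x + 1 ≤ (N:ℝ)) :
    ∃ S : Finset ℕ, S ⊆ Finset.Icc 1 N ∧ (∀ n ∈ S, 1/4 ≤ dI (x / n)) ∧
      1 ≤ S.card ∧ Real.sqrt (x/2) - 1 ≤ (S.card : ℝ) := by
  have hx2 : (0:ℝ) ≤ x/2 := by linarith
  set A := ⌊Real.sqrt (x/2)⌋₊ - 1 with hA
  set g : ℕ → ℕ := fun a => ⌈x / ((a:ℝ) + 3/4)⌉₊ with hg
  have key : ∀ a : ℕ, a ≤ A → ((a:ℝ) + 1/4) * ((a:ℝ) + 3/4) ≤ x/2 := by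
    intro a ha
    rcases Nat.eq_zero_or_pos a with h0 | h0
    · subst h0; norm_num; linarith
    · have hA1 : 1 ≤ A := le_trans h0 ha
      have hfl : 2 ≤ ⌊Real.sqrt (x/2)⌋₊ := by omega
      have h4 : (a:ℝ) + 1 ≤ ⌊Real.sqrt (x/2)⌋₊ := by
        have : a + 1 ≤ ⌊Real.sqrt (x/2)⌋₊ := by omega
        exact_mod_cast this
      have h5 : (⌊Real.sqrt (x/2)⌋₊ : ℝ) ≤ Real.sqrt (x/2) := Nat.floor_le (Real.sqrt_nonneg _)
      have h6 : (a:ℝ) + 1 ≤ Real.sqrt (x/2) := le_trans h4 h5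
      have h7 : ((a:ℝ)+1)^2 ≤ x/2 := by
        have := Real.sq_sqrt hx2
        nlinarith [Real.sqrt_nonneg (x/2)]
      nlinarith
  have hga : ∀ a : ℕ, a ≤ A →
      1 ≤ g a ∧ (g a : ℝ) ≤ (N:ℝ) ∧ ((a:ℝ) + 1/4 ≤ x / (g a) ∧ x / (g a) ≤ (a:ℝ) + 3/4) := by
    intro a ha
    have hd3 : (0:ℝ) < (a:ℝ) + 3/4 := by positivity
    have hd1 : (0:ℝ) < (a:ℝ) + 1/4 := by positivity
    have hxd : 0 < x / ((a:ℝ) + 3/4) := by positivity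
    have hge : x / ((a:ℝ) + 3/4) ≤ (g a : ℝ) := Nat.le_ceil _
    have hlt : (g a : ℝ) < x / ((a:ℝ) + 3/4) + 1 := Nat.ceil_lt_add_one (le_of_lt hxd)
    have hub : (g a : ℝ) ≤ x / ((a:ℝ) + 1/4) := by
      have hk := key a ha
      have : x / ((a:ℝ) + 3/4) + 1 ≤ x / ((a:ℝ) + 1/4) := by
        rw [div_add' _ _ _ (ne_of_gt hd3), div_le_div_iff₀ hd3 hd1]
        nlinarith
      linarith
    have hg1 : 1 ≤ g a := Nat.ceil_pos.2 hxd
    have hgpos : (0:ℝ) < (g a : ℝ) := by exact_mod_cast hg1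
    refine ⟨hg1, ?_, ?_, ?_⟩
    · have : x / ((a:ℝ) + 1/4) ≤ 4 * x := by
        rw [div_le_iff₀ hd1]; nlinarith
      linarith
    · rw [le_div_iff₀ hgpos]
      calc ((a:ℝ) + 1/4) * (g a) ≤ ((a:ℝ) + 1/4) * (x / ((a:ℝ)+1/4)) := by
            apply mul_le_mul_of_nonneg_left hub (le_of_lt hd1)
        _ = x := by field_simp
    · rw [div_le_iff₀ hgpos]
      calc x = ((a:ℝ) + 3/4) * (x / ((a:ℝ)+3/4)) := by field_simp
        _ ≤ ((a:ℝ) + 3/4) * (g a) := by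
            apply mul_le_mul_of_nonneg_left hge (le_of_lt hd3)
  have hinj : Set.InjOn g (Finset.range (A+1)) := by
    intro a ha b hb hab
    by_contra hne
    rcases Nat.lt_or_ge a b with hlt | hge2
    · have h1 := (hga a (by simpa using Nat.lt_succ_iff.1 (Finset.mem_range.1 ha))).2.2.2
      have h2 := (hga b (by simpa using Nat.lt_succ_iff.1 (Finset.mem_range.1 hb))).2.2.1
      rw [hab] at h1
      have : (a:ℝ) + 1 ≤ (b:ℝ) := by exact_mod_cast hlt
      linarith
    · have hlt2 : b < a := by omega
      have h1 := (hga b (by simpa using Nat.lt_succ_iff.1 (Finset.mem_range.1 hb))).2.2.2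
      have h2 := (hga a (by simpa using Nat.lt_succ_iff.1 (Finset.mem_range.1 ha))).2.2.1
      rw [hab] at h2
      have : (b:ℝ) + 1 ≤ (a:ℝ) := by exact_mod_cast hlt2
      linarith
  refine ⟨(Finset.range (A+1)).image g, ?_, ?_, ?_, ?_⟩
  · intro n hn
    obtain ⟨a, ha, rfl⟩ := Finset.mem_image.1 hn
    have ha' : a ≤ A := Nat.lt_succ_iff.1 (Finset.mem_range.1 ha)
    obtain ⟨h1, h2, _, _⟩ := hga a ha'
    refine Finset.mem_Icc.2 ⟨h1, ?_⟩
    exact_mod_cast h2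
  · intro n hn
    obtain ⟨a, ha, rfl⟩ := Finset.mem_image.1 hn
    have ha' : a ≤ A := Nat.lt_succ_iff.1 (Finset.mem_range.1 ha)
    obtain ⟨_, _, h3, h4⟩ := hga a ha'
    exact dI_ge_of_between h3 h4
  · rw [Finset.card_image_of_injOn hinj, Finset.card_range]
    omega
  · rw [Finset.card_image_of_injOn hinj, Finset.card_range]
    have h1 : Real.sqrt (x/2) < ⌊Real.sqrt (x/2)⌋₊ + 1 := Nat.lt_floor_add_one _
    have h2 : ⌊Real.sqrt (x/2)⌋₊ ≤ A + 1 := by omega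
    have h3 : (⌊Real.sqrt (x/2)⌋₊ : ℝ) ≤ ((A:ℝ) + 1) := by exact_mod_cast h2
    push_cast
    linarith

lemma young_tenth {s : ℝ} (h0 : 0 ≤ s) : s ^ ((1:ℝ)/10) ≤ 9/10 + s/10 := by
  have h := Real.geom_mean_le_arith_mean2_weighted (w₁ := 9/10) (w₂ := 1/10) (p₁ := 1)
    (p₂ := s) (by norm_num) (by norm_num) (by norm_num) h0 (by norm_num)
  rw [Real.one_rpow, one_mul] at h
  linarith

lemma tele_tenth {b : ℝ} (hb : 1 ≤ b) :
    b ^ (-(9:ℝ)/10) ≤ 10 * (b ^ ((1:ℝ)/10) - (b-1) ^ ((1:ℝ)/10)) := by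
  have hb0 : 0 < b := by linarith
  set s : ℝ := (b-1)/b with hs
  have hs0 : 0 ≤ s := div_nonneg (by linarith) (le_of_lt hb0)
  have h1 : (b-1) ^ ((1:ℝ)/10) = b ^ ((1:ℝ)/10) * s ^ ((1:ℝ)/10) := by
    rw [← Real.mul_rpow (le_of_lt hb0) hs0]
    congr 1
    rw [hs, mul_comm, div_mul_cancel₀ _ (ne_of_gt hb0)]
  have h2 : s ^ ((1:ℝ)/10) ≤ 9/10 + s/10 := young_tenth hs0
  have h3 : b ^ ((1:ℝ)/10) * (9/10 + s/10) = b ^ ((1:ℝ)/10) - (1/10) * (b ^ ((1:ℝ)/10) / b) := by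
    rw [hs]; field_simp; ring
  have h4 : b ^ ((1:ℝ)/10) / b = b ^ (-(9:ℝ)/10) := by
    rw [eq_comm, eq_div_iff (ne_of_gt hb0)]
    calc b ^ (-(9:ℝ)/10) * b = b ^ (-(9:ℝ)/10) * b ^ (1:ℝ) := by rw [Real.rpow_one]
      _ = b ^ (-(9:ℝ)/10 + 1) := (Real.rpow_add hb0 _ _).symm
      _ = b ^ ((1:ℝ)/10) := by norm_num
  have h5 : (b-1) ^ ((1:ℝ)/10) ≤ b ^ ((1:ℝ)/10) - (1/10) * b ^ (-(9:ℝ)/10) := by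
    rw [← h4, ← h3, h1]
    have : (0:ℝ) ≤ b ^ ((1:ℝ)/10) := Real.rpow_nonneg (le_of_lt hb0) _
    nlinarith
  linarith

lemma rpow_anti {a b : ℝ} (ha : 1 ≤ a) (hab : a ≤ b) :
    b ^ (-(9:ℝ)/10) ≤ a ^ (-(9:ℝ)/10) := by
  have ha0 : (0:ℝ) < a := by linarith
  have hb0 : (0:ℝ) < b := by linarith
  rw [show (-(9:ℝ)/10) = -((9:ℝ)/10) by norm_num, Real.rpow_neg (le_of_lt ha0),
    Real.rpow_neg (le_of_lt hb0)]
  apply inv_anti₀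
  · positivity
  · exact Real.rpow_le_rpow (le_of_lt ha0) hab (by norm_num)

lemma sum_Icc_rpow (W : ℕ) :
    ∑ i ∈ Finset.Icc 2 (W+1), ((i:ℝ))^(-(9:ℝ)/10) ≤ 10 * (((W:ℝ)+1))^((1:ℝ)/10) := by
  have h2 : ∀ V : ℕ, ∑ i ∈ Finset.Icc 2 (V+1), ((((i:ℝ)))^((1:ℝ)/10) - (((i:ℝ)-1))^((1:ℝ)/10))
      = (((V:ℝ)+1))^((1:ℝ)/10) - 1 := by
    intro V
    induction V with
    | zero => simp [Real.one_rpow]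
    | succ U ih =>
      rw [Finset.sum_Icc_succ_top (by omega), ih]
      push_cast
      ring_nf
  have h1 : ∑ i ∈ Finset.Icc 2 (W+1), ((i:ℝ))^(-(9:ℝ)/10)
      ≤ ∑ i ∈ Finset.Icc 2 (W+1), 10 * (((i:ℝ))^((1:ℝ)/10) - (((i:ℝ)-1))^((1:ℝ)/10)) := by
    apply Finset.sum_le_sum
    intro i hi
    have h2i : 2 ≤ i := (Finset.mem_Icc.1 hi).1
    have : (1:ℝ) ≤ (i:ℝ) := by exact_mod_cast Nat.one_le_of_lt h2i
    exact tele_tenth this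
  have h3 : ∑ i ∈ Finset.Icc 2 (W+1), 10 * (((i:ℝ))^((1:ℝ)/10) - (((i:ℝ)-1))^((1:ℝ)/10))
      = 10 * ((((W:ℝ)+1))^((1:ℝ)/10) - 1) := by
    rw [← Finset.mul_sum, h2 W]
  rw [h3] at h1
  linarith
lemma sum_primeset_le : ∀ (n : ℕ) (F : Finset ℕ), F.card = n → (∀ p ∈ F, 2 ≤ p) →
    ∑ p ∈ F, ((p:ℝ))^(-(9:ℝ)/10) ≤ ∑ i ∈ Finset.Icc 2 (n+1), ((i:ℝ))^(-(9:ℝ)/10) := by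
  intro n
  induction n with
  | zero =>
    intro F hF _
    rw [Finset.card_eq_zero.1 hF]
    simp
  | succ m ih =>
    intro F hF h2
    have hne : F.Nonempty := by
      rw [← Finset.card_pos, hF]; omega
    set M := F.max' hne with hM
    have hMF : M ∈ F := F.max'_mem hne
    have hcard : (F.erase M).card = m := by
      rw [Finset.card_erase_of_mem hMF, hF]
      omega
    have hsub : F ⊆ Finset.Icc 2 M := by
      intro p hp
      exact Finset.mem_Icc.2 ⟨h2 p hp, F.le_max' p hp⟩
    have hMlarge : m + 2 ≤ M := by
      have := Finset.card_le_card hsub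
      rw [hF, Nat.card_Icc] at this
      omega
    have hstep : ((M:ℝ))^(-(9:ℝ)/10) ≤ (((m+2:ℕ):ℝ))^(-(9:ℝ)/10) := by
      apply rpow_anti
      · have h1 : (1:ℕ) ≤ m + 2 := by omega
        exact_mod_cast h1
      · exact_mod_cast hMlarge
    have hem := ih (F.erase M) hcard (fun p hp => h2 p (Finset.mem_of_mem_erase hp))
    have hsplit : ∑ p ∈ F, ((p:ℝ))^(-(9:ℝ)/10)
        = ∑ p ∈ F.erase M, ((p:ℝ))^(-(9:ℝ)/10) + ((M:ℝ))^(-(9:ℝ)/10) :=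
      (Finset.sum_erase_add F _ hMF).symm
    have hicc : ∑ i ∈ Finset.Icc 2 (m+1+1), ((i:ℝ))^(-(9:ℝ)/10)
        = ∑ i ∈ Finset.Icc 2 (m+1), ((i:ℝ))^(-(9:ℝ)/10) + (((m+2:ℕ):ℝ))^(-(9:ℝ)/10) := by
      rw [Finset.sum_Icc_succ_top (by omega)]
    rw [hsplit, hicc]
    exact add_le_add hem hstep

noncomputable def fsig : ArithmeticFunction ℝ :=
  ⟨fun d => if d = 0 then 0 else (d:ℝ) ^ (-(9:ℝ)/10), by simp⟩

lemma fsig_apply {d : ℕ} (hd : d ≠ 0) : fsig d = (d:ℝ) ^ (-(9:ℝ)/10) := by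
  simp [fsig, hd]

lemma fsig_mult : fsig.IsMultiplicative := by
  rw [ArithmeticFunction.IsMultiplicative.iff_ne_zero]
  constructor
  · rw [fsig_apply one_ne_zero]
    norm_num [Real.one_rpow]
  · intro m n hm hn _
    rw [fsig_apply (Nat.mul_ne_zero hm hn), fsig_apply hm, fsig_apply hn, Nat.cast_mul,
      Real.mul_rpow (by positivity) (by positivity)]

lemma sum_divisors_le_prod (Q : ℕ) (hQ : Q ≠ 0) :
    ∑ d ∈ Q.divisors, ((d:ℝ))^(-(9:ℝ)/10)
      ≤ ∏ p ∈ Q.primeFactors, (1 - ((p:ℝ))^(-(9:ℝ)/10))⁻¹ := by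
  have hmul : ((ArithmeticFunction.zeta : ArithmeticFunction ℕ) :
      ArithmeticFunction ℝ) * fsig |>.IsMultiplicative :=
    (ArithmeticFunction.isMultiplicative_zeta.natCast).mul fsig_mult
  have h1 : ∑ d ∈ Q.divisors, ((d:ℝ))^(-(9:ℝ)/10)
      = (((ArithmeticFunction.zeta : ArithmeticFunction ℕ) : ArithmeticFunction ℝ) * fsig) Q := by
    rw [ArithmeticFunction.coe_zeta_mul_apply]
    apply Finset.sum_congr rfl
    intro d hd
    rw [fsig_apply (Nat.pos_of_mem_divisors hd).ne']
  rw [h1, ArithmeticFunction.IsMultiplicative.multiplicative_factorization _ hmul hQ]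
  have h2 : (Nat.factorization Q).prod
        (fun p k => (((ArithmeticFunction.zeta : ArithmeticFunction ℕ) :
          ArithmeticFunction ℝ) * fsig) (p ^ k))
      = ∏ p ∈ Q.primeFactors, (((ArithmeticFunction.zeta : ArithmeticFunction ℕ) :
          ArithmeticFunction ℝ) * fsig) (p ^ (Nat.factorization Q p)) := by
    rw [Finsupp.prod]
    rw [Nat.support_factorization]
  rw [h2]
  apply Finset.prod_le_prod
  · intro p hp
    rw [ArithmeticFunction.coe_zeta_mul_apply]
    apply Finset.sum_nonneg
    intro d hd
    rw [fsig_apply (Nat.pos_of_mem_divisors hd).ne']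
    positivity
  · intro p hp
    have hpp : p.Prime := Nat.prime_of_mem_primeFactors hp
    have hp0 : (0:ℝ) < (p:ℝ) := by exact_mod_cast hpp.pos
    rw [ArithmeticFunction.coe_zeta_mul_apply, Nat.sum_divisors_prime_pow hpp]
    set r := ((p:ℝ))^(-(9:ℝ)/10) with hr
    have hr0 : 0 ≤ r := Real.rpow_nonneg hp0.le _
    have hr1 : r < 1 := by
      apply Real.rpow_lt_one_of_one_lt_of_neg
      · exact_mod_cast hpp.one_lt
      · norm_num
    have hterm : ∀ i : ℕ, fsig (p^i) = r ^ i := by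
      intro i
      rw [fsig_apply (pow_ne_zero i hpp.ne_zero), Nat.cast_pow,
        ← Real.rpow_natCast ((p:ℝ)) i, ← Real.rpow_mul hp0.le, mul_comm,
        Real.rpow_mul hp0.le, Real.rpow_natCast]
    rw [Finset.sum_congr rfl (fun i _ => hterm i)]
    set k := Nat.factorization Q p
    have h1r : 0 < 1 - r := by linarith
    have hgm := geom_sum_mul r (k+1)
    have hsum : (∑ i ∈ Finset.range (k+1), r ^ i) * (1 - r) = 1 - r^(k+1) := by
      linear_combination -hgm
    have hrpow : 0 ≤ r^(k+1) := pow_nonneg hr0 _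
    rw [← mul_le_mul_iff_left₀ h1r, hsum, inv_mul_cancel₀ (ne_of_gt h1r)]
    linarith

lemma inv_one_sub_le (p : ℕ) (hp : 2 ≤ p) :
    (1 - ((p:ℝ))^(-(9:ℝ)/10))⁻¹ ≤ Real.exp (3 * ((p:ℝ))^(-(9:ℝ)/10)) := by
  set r := ((p:ℝ))^(-(9:ℝ)/10) with hr
  have hp1 : (1:ℝ) ≤ (p:ℝ) := by exact_mod_cast Nat.one_le_of_lt hp
  have hp2 : (2:ℝ) ≤ (p:ℝ) := by exact_mod_cast hp
  have hr0 : 0 ≤ r := Real.rpow_nonneg (by linarith) _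
  have h2r : r ≤ ((2:ℝ))^(-(9:ℝ)/10) := rpow_anti (by norm_num) hp2
  have h23 : ((2:ℝ))^(-(9:ℝ)/10) ≤ 2/3 := by
    have hkey : (3/2:ℝ) ≤ ((2:ℝ))^((9:ℝ)/10) := by
      by_contra hcon
      push_neg at hcon
      have hb : (0:ℝ) ≤ ((2:ℝ))^((9:ℝ)/10) := Real.rpow_nonneg (by norm_num) _
      have h10 : (((2:ℝ))^((9:ℝ)/10))^(10:ℕ) < (3/2:ℝ)^(10:ℕ) := by
        apply pow_lt_pow_left₀ hcon hb
        norm_num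
      rw [← Real.rpow_natCast (((2:ℝ))^((9:ℝ)/10)) 10, ← Real.rpow_mul (by norm_num),
        show (9:ℝ)/10*((10:ℕ):ℝ) = ((9:ℕ):ℝ) by norm_num, Real.rpow_natCast] at h10
      norm_num at h10
    have hpos : (0:ℝ) < ((2:ℝ))^((9:ℝ)/10) := Real.rpow_pos_of_pos (by norm_num) _
    rw [show (-(9:ℝ)/10) = -((9:ℝ)/10) by norm_num, Real.rpow_neg (by norm_num)]
    rw [inv_le_comm₀ hpos (by norm_num)]
    linarith
  have hr23 : r ≤ 2/3 := le_trans h2r h23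
  have h1r : 0 < 1 - r := by linarith
  have step1 : (1 - r)⁻¹ ≤ 1 + 3*r := by
    rw [inv_eq_one_div, div_le_iff₀ h1r]
    nlinarith
  have step2 : (1:ℝ) + 3*r ≤ Real.exp (3*r) := by
    have := Real.add_one_le_exp (3*r)
    linarith
  linarith

lemma card_primeFactors_le (Q : ℕ) (hQ : Q ≠ 0) : 2 ^ Q.primeFactors.card ≤ Q := by
  calc 2 ^ Q.primeFactors.card = ∏ _p ∈ Q.primeFactors, 2 := by
        rw [Finset.prod_const]
    _ ≤ ∏ p ∈ Q.primeFactors, p := by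
        apply Finset.prod_le_prod'
        intro p hp
        exact (Nat.prime_of_mem_primeFactors hp).two_le
    _ ≤ Q := Nat.le_of_dvd (Nat.pos_of_ne_zero hQ) (Nat.prod_primeFactors_dvd Q)
lemma divisor_count (Q Mn : ℕ) (hQ : Q ≠ 0) (hM : 1 ≤ Mn) :
    (((Finset.Ioc Mn (2*Mn)).filter (fun d => d ∣ Q)).card : ℝ) ≤
      ((2*(Mn:ℝ)))^((9:ℝ)/10) *
        Real.exp (30 * ((Q.primeFactors.card : ℝ) + 1)^((1:ℝ)/10)) := by
  set σ : ℝ := (9:ℝ)/10 with hσ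
  set T := (Finset.Ioc Mn (2*Mn)).filter (fun d => d ∣ Q) with hT
  have hTsub : T ⊆ Q.divisors := by
    intro d hd
    rw [hT, Finset.mem_filter, Finset.mem_Ioc] at hd
    exact Nat.mem_divisors.2 ⟨hd.2, hQ⟩
  have hM0 : (0:ℝ) < 2*(Mn:ℝ) := by
    have : (1:ℝ) ≤ (Mn:ℝ) := by exact_mod_cast hM
    linarith
  have step1 : (T.card : ℝ) ≤ ∑ d ∈ T, ((2*(Mn:ℝ))/((d:ℝ)))^σ := by
    rw [Finset.card_eq_sum_ones T]
    push_cast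
    apply Finset.sum_le_sum
    intro d hd
    rw [hT, Finset.mem_filter, Finset.mem_Ioc] at hd
    have hd1 : 1 ≤ d := le_trans hM (le_of_lt hd.1.1)
    have hd0 : (0:ℝ) < (d:ℝ) := by exact_mod_cast hd1
    have hdle : (d:ℝ) ≤ 2*(Mn:ℝ) := by exact_mod_cast hd.1.2
    apply Real.one_le_rpow
    · rw [le_div_iff₀ hd0]; linarith
    · norm_num [hσ]
  have step2 : ∑ d ∈ T, ((2*(Mn:ℝ))/((d:ℝ)))^σ ≤ ∑ d ∈ Q.divisors, ((2*(Mn:ℝ))/((d:ℝ)))^σ := by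
    apply Finset.sum_le_sum_of_subset_of_nonneg hTsub
    intro d hd _
    have hd0 : (0:ℝ) < (d:ℝ) := by exact_mod_cast Nat.pos_of_mem_divisors hd
    positivity
  have step3 : ∑ d ∈ Q.divisors, ((2*(Mn:ℝ))/((d:ℝ)))^σ
      = (2*(Mn:ℝ))^σ * ∑ d ∈ Q.divisors, ((d:ℝ))^(-(9:ℝ)/10) := by
    rw [Finset.mul_sum]
    apply Finset.sum_congr rfl
    intro d hd
    have hd0 : (0:ℝ) < (d:ℝ) := by exact_mod_cast Nat.pos_of_mem_divisors hd
    rw [Real.div_rpow (le_of_lt hM0) (le_of_lt hd0),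
      show (-(9:ℝ)/10) = -σ by rw [hσ]; norm_num, Real.rpow_neg (le_of_lt hd0),
      div_eq_mul_inv]
  have step4 : ∑ d ∈ Q.divisors, ((d:ℝ))^(-(9:ℝ)/10)
      ≤ Real.exp (30 * ((Q.primeFactors.card : ℝ) + 1)^((1:ℝ)/10)) := by
    calc ∑ d ∈ Q.divisors, ((d:ℝ))^(-(9:ℝ)/10)
        ≤ ∏ p ∈ Q.primeFactors, (1 - ((p:ℝ))^(-(9:ℝ)/10))⁻¹ := sum_divisors_le_prod Q hQ
      _ ≤ ∏ p ∈ Q.primeFactors, Real.exp (3 * ((p:ℝ))^(-(9:ℝ)/10)) := by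
          apply Finset.prod_le_prod
          · intro p hp
            have hpp := Nat.prime_of_mem_primeFactors hp
            have h1 : ((p:ℝ))^(-(9:ℝ)/10) < 1 := by
              apply Real.rpow_lt_one_of_one_lt_of_neg
              · exact_mod_cast hpp.one_lt
              · norm_num
            have h0 : (0:ℝ) < 1 - ((p:ℝ))^(-(9:ℝ)/10) := by linarith
            positivity
          · intro p hp
            exact inv_one_sub_le p (Nat.prime_of_mem_primeFactors hp).two_le
      _ = Real.exp (∑ p ∈ Q.primeFactors, 3 * ((p:ℝ))^(-(9:ℝ)/10)) := (Real.exp_sum _ _).symm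
      _ ≤ Real.exp (30 * ((Q.primeFactors.card : ℝ) + 1)^((1:ℝ)/10)) := by
          apply Real.exp_le_exp.2
          have hsum : ∑ p ∈ Q.primeFactors, ((p:ℝ))^(-(9:ℝ)/10)
              ≤ ∑ i ∈ Finset.Icc 2 (Q.primeFactors.card + 1), ((i:ℝ))^(-(9:ℝ)/10) :=
            sum_primeset_le Q.primeFactors.card Q.primeFactors rfl
              (fun p hp => (Nat.prime_of_mem_primeFactors hp).two_le)
          have hsum2 := sum_Icc_rpow Q.primeFactors.card
          rw [← Finset.mul_sum]
          calc 3 * ∑ p ∈ Q.primeFactors, ((p:ℝ))^(-(9:ℝ)/10)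
              ≤ 3 * (10 * (((Q.primeFactors.card:ℝ)+1))^((1:ℝ)/10)) := by
                apply mul_le_mul_of_nonneg_left (le_trans hsum hsum2) (by norm_num)
            _ = 30 * (((Q.primeFactors.card:ℝ)+1))^((1:ℝ)/10) := by ring
  have hnn : (0:ℝ) ≤ (2*(Mn:ℝ))^σ := Real.rpow_nonneg (le_of_lt hM0) _
  calc (T.card : ℝ) ≤ ∑ d ∈ T, ((2*(Mn:ℝ))/((d:ℝ)))^σ := step1
    _ ≤ ∑ d ∈ Q.divisors, ((2*(Mn:ℝ))/((d:ℝ)))^σ := step2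
    _ = (2*(Mn:ℝ))^σ * ∑ d ∈ Q.divisors, ((d:ℝ))^(-(9:ℝ)/10) := step3
    _ ≤ (2*(Mn:ℝ))^σ * Real.exp (30 * ((Q.primeFactors.card : ℝ) + 1)^((1:ℝ)/10)) :=
        mul_le_mul_of_nonneg_left step4 hnn
lemma odd_coprime_pow (d j : ℕ) (hd : Odd d) : Nat.Coprime d (2^j) := by
  apply Nat.Coprime.pow_right
  exact hd.coprime_two_right

lemma odd_mul_pow_inj {d d' j j' : ℕ} (hd : Odd d) (hd' : Odd d')
    (h : d * 2^j = d' * 2^j') : d = d' := by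
  have h1 : d ∣ d' * 2^j' := ⟨2^j, h.symm ▸ rfl⟩
  have h2 : d' ∣ d * 2^j := ⟨2^j', h ▸ rfl⟩
  have h3 : d ∣ d' := (Nat.Coprime.dvd_of_dvd_mul_right (odd_coprime_pow d j' hd) h1)
  have h4 : d' ∣ d := (Nat.Coprime.dvd_of_dvd_mul_right (odd_coprime_pow d' j hd') h2)
  exact Nat.dvd_antisymm h3 h4

lemma regimeII (N : ℕ) (x : ℝ) (hN : N ≠ 0) (hx1 : 1 ≤ x)
    (hA5 : 5 ≤ 2 * Nat.log 2 N / 5)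
    (h2A : 2 * (2 * Nat.log 2 N / 5) + 1 ≤ Nat.log 2 N)
    (hMx : ((2:ℝ)^(2 * Nat.log 2 N / 5)) ≤ x)
    (hdiv : ∀ Q : ℕ, Q ≠ 0 → (Q:ℝ) ≤ 2*x →
      (((Finset.Ioc (2^(2 * Nat.log 2 N / 5)) (2*2^(2 * Nat.log 2 N / 5))).filter
        (fun d => d ∣ Q)).card : ℝ) ≤ ((2:ℝ)^(2 * Nat.log 2 N / 5 - 2 : ℕ))) :
    ∃ S : Finset ℕ, S ⊆ Finset.Icc 1 N ∧ (∀ n ∈ S, 1/4 ≤ dI (x / n)) ∧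
      ((2:ℝ)^(2 * Nat.log 2 N / 5 - 2 : ℕ)) ≤ (S.card : ℝ) := by
  classical
  set L := Nat.log 2 N with hL
  set A := 2 * L / 5 with hA
  set J := L - A - 1 with hJ
  have hAL : A + 1 + J = L := by omega
  have hJA : A ≤ J := by omega
  set Dodd : Finset ℕ := (Finset.range (2^(A-1))).image (fun i => 2^A + 2*i + 1) with hDodd
  have hpowA : 2^A = 2 * 2^(A-1) := by
    rw [← pow_succ']
    congr 1
    omega
  have hDodd_mem : ∀ d ∈ Dodd, Odd d ∧ 2^A < d ∧ d < 2^(A+1) := by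
    intro d hd
    rw [hDodd, Finset.mem_image] at hd
    obtain ⟨i, hi, rfl⟩ := hd
    rw [Finset.mem_range] at hi
    refine ⟨⟨2^(A-1) + i, by omega⟩, by omega, ?_⟩
    have h2 : 2^(A+1) = 2 * 2^A := by ring
    omega
  have hDodd_card : Dodd.card = 2^(A-1) := by
    rw [hDodd, Finset.card_image_of_injective _ (fun a b hab => by omega), Finset.card_range]
  set Badp : ℕ → Prop := fun d => ∀ j, j ≤ J → dI (x / ((d:ℝ) * 2^j)) < 1/4 with hBadp
  set Bad : Finset ℕ := Dodd.filter Badp with hBad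
  have hBadsub : Bad ⊆ Dodd := Finset.filter_subset _ _
  have hbadkey : ∀ d ∈ Bad, 1 ≤ round (x/((d:ℝ) * 2^J)) ∧
      |x - (round (x/((d:ℝ) * 2^J)) : ℝ) * d * 2^J| < (d:ℝ)/4 := by
    intro d hd
    rw [hBad, Finset.mem_filter] at hd
    obtain ⟨hdD, hdbad⟩ := hd
    obtain ⟨hodd, hdlb, hdub⟩ := hDodd_mem d hdD
    have hdpos : 0 < d := lt_trans (by positivity) hdlb
    have hd0 : (0:ℝ) < (d:ℝ) := by exact_mod_cast hdpos
    set u := x/((d:ℝ) * 2^J) with hu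
    have hchain : ∀ k, k ≤ J → dI (2^k * u) < 1/4 := by
      intro k hk
      have h1 : (2:ℝ)^k * u = x / ((d:ℝ) * 2^(J-k)) := by
        have hpow : (2:ℝ)^J = 2^(J-k) * 2^k := by rw [← pow_add]; congr 1; omega
        rw [hu, hpow]
        field_simp
      rw [h1]
      exact hdbad (J-k) (by omega)
    have hchain2 := dI_chain hchain
    set k := round u with hk
    have h2J : (0:ℝ) < 2^J := by positivity
    have hku : |u - (k:ℝ)| * 2^J < 1/4 := by
      unfold dI at hchain2
      calc |u - (k:ℝ)| * 2^J = 2^J * |u - k| := by ring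
        _ < 1/4 := hchain2
    have habs : |x - (k:ℝ) * d * 2^J| < (d:ℝ)/4 := by
      have h1 : x - (k:ℝ) * d * 2^J = (u - k) * ((d:ℝ) * 2^J) := by
        rw [hu]; field_simp
      rw [h1, abs_mul, abs_of_pos (by positivity : (0:ℝ) < (d:ℝ) * 2^J)]
      calc |u - (k:ℝ)| * ((d:ℝ) * 2^J) = (|u - (k:ℝ)| * 2^J) * d := by ring
        _ < (1/4) * d := by apply mul_lt_mul_of_pos_right hku hd0
        _ = (d:ℝ)/4 := by ring
    refine ⟨?_, habs⟩
    by_contra hcon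
    push_neg at hcon
    have hk0 : k ≤ 0 := by omega
    have hk0' : (k:ℝ) ≤ 0 := by exact_mod_cast hk0
    have h1 : (k:ℝ) * d * 2^J ≤ 0 := by
      apply mul_nonpos_of_nonpos_of_nonneg
      · exact mul_nonpos_of_nonpos_of_nonneg hk0' (le_of_lt hd0)
      · positivity
    have h2 : x < (d:ℝ)/4 := by
      have := abs_lt.1 habs
      linarith
    have h3 : (d:ℝ) < 2^(A+1) := by exact_mod_cast hdub
    have h4 : ((2:ℝ))^(A+1)/4 ≤ ((2:ℝ))^A := by
      rw [pow_succ]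
      nlinarith [pow_pos (by norm_num : (0:ℝ) < 2) A]
    linarith [hMx]
  -- bad cardinality bound
  have hbadcard : Bad.card ≤ 2^(A - 2) := by
    rcases Finset.eq_empty_or_nonempty Bad with hBe | ⟨d₀, hd₀⟩
    · rw [hBe]; simp
    · set k₀ := round (x/((d₀:ℝ) * 2^J)) with hk₀
      obtain ⟨hk₀1, hk₀abs⟩ := hbadkey d₀ hd₀
      have hd₀D := hBadsub hd₀
      obtain ⟨hodd₀, hdlb₀, hdub₀⟩ := hDodd_mem d₀ hd₀D
      have hd₀pos : 0 < d₀ := lt_trans (by positivity) hdlb₀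
      set Q : ℤ := k₀ * d₀ with hQ
      have hk₀pos : (0:ℤ) < k₀ := by rw [hk₀]; omega
      have hQpos : 0 < Q := by
        apply mul_pos hk₀pos
        exact_mod_cast hd₀pos
      have h2J : (0:ℝ) < 2^J := by positivity
      have hAJ : ((2:ℝ))^A ≤ 2^J := by
        apply pow_le_pow_right₀ (by norm_num) hJA
      have hdvd : ∀ d ∈ Bad, (d:ℤ) ∣ Q := by
        intro d hd
        set k := round (x/((d:ℝ) * 2^J)) with hk
        obtain ⟨hk1, hkabs⟩ := hbadkey d hd
        have hdD := hBadsub hd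
        obtain ⟨hodd, hdlb, hdub⟩ := hDodd_mem d hdD
        have heq : k * d = Q := by
          have hd2 : (d:ℝ) < 2^(A+1) := by exact_mod_cast hdub
          have hd₀2 : (d₀:ℝ) < 2^(A+1) := by exact_mod_cast hdub₀
          have h2A2 : ((2:ℝ))^(A+1)/4 + ((2:ℝ))^(A+1)/4 ≤ 2^A := by
            rw [pow_succ]
            nlinarith [pow_pos (by norm_num : (0:ℝ) < 2) A]
          have hub : |(k:ℝ) * d * 2^J - (k₀:ℝ) * d₀ * 2^J| < 2^A := by
            calc |(k:ℝ) * d * 2^J - (k₀:ℝ) * d₀ * 2^J|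
                ≤ |(k:ℝ) * d * 2^J - x| + |x - (k₀:ℝ) * d₀ * 2^J| := by
                  have := abs_sub_le ((k:ℝ) * d * 2^J) x ((k₀:ℝ) * d₀ * 2^J)
                  linarith
              _ = |x - (k:ℝ) * d * 2^J| + |x - (k₀:ℝ) * d₀ * 2^J| := by
                  rw [abs_sub_comm]
              _ < (d:ℝ)/4 + (d₀:ℝ)/4 := add_lt_add hkabs hk₀abs
              _ < ((2:ℝ))^(A+1)/4 + ((2:ℝ))^(A+1)/4 := by
                  apply add_lt_add <;> linarith
              _ ≤ 2^A := h2A2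
          have hfac : |(k:ℝ) * d - (k₀:ℝ) * d₀| * 2^J < 2^A := by
            calc |(k:ℝ) * d - (k₀:ℝ) * d₀| * 2^J = |((k:ℝ) * d - (k₀:ℝ) * d₀) * 2^J| := by
                  rw [abs_mul, abs_of_pos h2J]
              _ = |(k:ℝ) * d * 2^J - (k₀:ℝ) * d₀ * 2^J| := by ring_nf
              _ < 2^A := hub
          have hlt1 : |(k:ℝ) * d - (k₀:ℝ) * d₀| < 1 := by
        
            by_contra hge
            push_neg at hge
            have : (1:ℝ) * 2^J ≤ |(k:ℝ) * d - (k₀:ℝ) * d₀| * 2^J :=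
              mul_le_mul_of_nonneg_right hge (le_of_lt h2J)
            rw [one_mul] at this
            linarith [hAJ]
          have hint : |((k * d - k₀ * d₀ : ℤ) : ℝ)| < 1 := by
            push_cast
            convert hlt1 using 2
          have hz : (k * d - k₀ * d₀ : ℤ) = 0 := by
            have h' : |(k * d - k₀ * d₀ : ℤ)| < 1 := by exact_mod_cast hint
            rcases abs_lt.1 h' with ⟨h1', h2'⟩
            omega
          linarith [hz]
        exact ⟨k, by rw [← heq]; ring⟩
      -- Q bounds
      have hQle : ((Q.toNat : ℕ) : ℝ) ≤ 2 * x := by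
        have h1 : (k₀:ℝ) * d₀ * 2^J < x + (d₀:ℝ)/4 := by
          have := abs_lt.1 hk₀abs
          linarith
        have hd₀2 : (d₀:ℝ) < 2^(A+1) := by exact_mod_cast hdub₀
        have h4 : ((2:ℝ))^(A+1)/4 ≤ ((2:ℝ))^A := by
          rw [pow_succ]
          nlinarith [pow_pos (by norm_num : (0:ℝ) < 2) A]
        have h2 : (k₀:ℝ) * d₀ * 2^J < 2 * x := by
          have := hMx
          linarith
        have h3 : (k₀:ℝ) * d₀ ≤ (k₀:ℝ) * d₀ * 2^J := by
          nlinarith [one_le_pow₀ (by norm_num : (1:ℝ) ≤ 2) (n := J),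
            mul_pos (by exact_mod_cast hk₀pos : (0:ℝ) < (k₀:ℝ))
              (by exact_mod_cast hd₀pos : (0:ℝ) < (d₀:ℝ))]
        have h5' : ((Q.toNat : ℕ) : ℤ) = Q := Int.toNat_of_nonneg (le_of_lt hQpos)
        have h5 : ((Q.toNat : ℕ) : ℝ) = (k₀:ℝ) * d₀ := by
          rw [show ((Q.toNat : ℕ) : ℝ) = (((Q.toNat : ℕ) : ℤ) : ℝ) by push_cast; ring, h5', hQ]
          push_cast
          ring
        linarith
      have hQne : Q.toNat ≠ 0 := by
        have := Int.toNat_of_nonneg (le_of_lt hQpos)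
        omega
      have hsub2 : Bad ⊆ (Finset.Ioc (2^A) (2*2^A)).filter (fun d => d ∣ Q.toNat) := by
        intro d hd
        obtain ⟨hodd, hdlb, hdub⟩ := hDodd_mem d (hBadsub hd)
        rw [Finset.mem_filter, Finset.mem_Ioc]
        refine ⟨⟨hdlb, by omega⟩, ?_⟩
        have h1 : (d:ℤ) ∣ Q := hdvd d hd
        rw [← Int.toNat_of_nonneg (le_of_lt hQpos)] at h1
        exact_mod_cast h1
      have hfin : (Bad.card : ℝ) ≤ ((2:ℝ)^(A - 2 : ℕ)) := by
        calc (Bad.card : ℝ) ≤ ((((Finset.Ioc (2^A) (2*2^A)).filter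
            (fun d => d ∣ Q.toNat)).card : ℕ) : ℝ) := by
              exact_mod_cast Finset.card_le_card hsub2
          _ ≤ ((2:ℝ)^(A - 2 : ℕ)) := hdiv Q.toNat hQne hQle
      have : ((2:ℝ)^(A - 2 : ℕ)) = ((2^(A-2) : ℕ) : ℝ) := by push_cast; ring
      rw [this] at hfin
      exact_mod_cast hfin
  -- good set
  set G : Finset ℕ := Dodd \ Bad with hG
  have hGcard : 2^(A-2) ≤ G.card := by
    rw [hG, Finset.card_sdiff_of_subset hBadsub, hDodd_card]
    have h1 : 2^(A-1) = 2 * 2^(A-2) := by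
      rw [← pow_succ']
      congr 1
      omega
    omega
  have hGgood : ∀ d ∈ G, ∃ j, j ≤ J ∧ 1/4 ≤ dI (x / ((d:ℝ) * 2^j)) := by
    intro d hd
    rw [hG, Finset.mem_sdiff] at hd
    obtain ⟨hdD, hdnb⟩ := hd
    have h' : ¬ (∀ j, j ≤ J → dI (x / ((d:ℝ) * 2^j)) < 1/4) :=
      fun hbp => hdnb (Finset.mem_filter.2 ⟨hdD, hbp⟩)
    push_neg at h'
    obtain ⟨j, hj1, hj2⟩ := h'
    exact ⟨j, hj1, hj2⟩
  set jsel : ℕ → ℕ := fun d =>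
    if h : ∃ j, j ≤ J ∧ 1/4 ≤ dI (x / ((d:ℝ) * 2^j)) then h.choose else 0 with hjsel
  have hjsel_spec : ∀ d ∈ G, jsel d ≤ J ∧ 1/4 ≤ dI (x / ((d:ℝ) * 2^(jsel d))) := by
    intro d hd
    have h := hGgood d hd
    rw [hjsel]
    simp only [h, dif_pos]
    exact h.choose_spec
  set S : Finset ℕ := G.image (fun d => d * 2^(jsel d)) with hS
  have hinj : Set.InjOn (fun d => d * 2^(jsel d)) G := by
    intro a ha b hb hab
    have hoa := (hDodd_mem a (Finset.mem_sdiff.1 ha).1).1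
    have hob := (hDodd_mem b (Finset.mem_sdiff.1 hb).1).1
    exact odd_mul_pow_inj hoa hob hab
  refine ⟨S, ?_, ?_, ?_⟩
  · intro n hn
    rw [hS, Finset.mem_image] at hn
    obtain ⟨d, hd, rfl⟩ := hn
    obtain ⟨hodd, hdlb, hdub⟩ := hDodd_mem d (Finset.mem_sdiff.1 hd).1
    have hdpos : 0 < d := lt_trans (by positivity) hdlb
    rw [Finset.mem_Icc]
    constructor
    · have h2p : 0 < 2^(jsel d) := Nat.two_pow_pos (jsel d)
      have := Nat.mul_pos hdpos h2p
      omega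
    · have hjle := (hjsel_spec d hd).1
      calc d * 2^(jsel d) ≤ 2^(A+1) * 2^J := by
            apply Nat.mul_le_mul (le_of_lt hdub)
            exact Nat.pow_le_pow_right (by norm_num) hjle
        _ = 2^L := by rw [← pow_add, hAL]
        _ ≤ N := Nat.pow_log_le_self 2 hN
  · intro n hn
    rw [hS, Finset.mem_image] at hn
    obtain ⟨d, hd, rfl⟩ := hn
    have hspec := (hjsel_spec d hd).2
    have hcast : ((d * 2^(jsel d) : ℕ) : ℝ) = (d:ℝ) * 2^(jsel d) := by push_cast; ring
    rw [hcast]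
    exact hspec
  · rw [hS, Finset.card_image_of_injOn hinj]
    have h1 : ((2^(A-2) : ℕ) : ℝ) ≤ (G.card : ℝ) := by exact_mod_cast hGcard
    have h2 : ((2:ℝ)^(A - 2 : ℕ)) = ((2^(A-2) : ℕ) : ℝ) := by push_cast; ring
    rw [h2]
    exact h1
lemma sqrt_400 : Real.sqrt 400 = 20 := by
  rw [show (400:ℝ) = 20^2 by norm_num, Real.sqrt_sq (by norm_num)]

lemma numeric_I (x : ℝ) (hx : 1 ≤ x) (K : ℝ) (hK1 : 1 ≤ K)
    (hK2 : Real.sqrt (x/2) - 1 ≤ K) :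
    (1/100) * Real.exp ((1/10) * Real.sqrt (Real.log x)) < 0.34 * K := by
  have hx0 : (0:ℝ) < x := by linarith
  have hlog0 : 0 ≤ Real.log x := Real.log_nonneg hx
  rcases le_or_gt (Real.log x) 400 with hc | hc
  · have h1 : Real.sqrt (Real.log x) ≤ 20 := by
      rw [← sqrt_400]
      exact Real.sqrt_le_sqrt hc
    have h2 : Real.exp ((1/10) * Real.sqrt (Real.log x)) ≤ Real.exp 2 := by
      apply Real.exp_le_exp.2
      nlinarith [Real.sqrt_nonneg (Real.log x)]
    have h3 : Real.exp 2 < 9 := by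
      have he := Real.exp_one_lt_d9
      calc Real.exp 2 = Real.exp 1 * Real.exp 1 := by rw [← Real.exp_add]; norm_num
        _ < 2.7182818286 * 2.7182818286 := by nlinarith [Real.exp_pos 1]
        _ < 9 := by norm_num
    calc (1/100) * Real.exp ((1/10) * Real.sqrt (Real.log x)) ≤ (1/100) * Real.exp 2 := by
          linarith
      _ < (1/100) * 9 := by linarith
      _ < 0.34 * 1 := by norm_num
      _ ≤ 0.34 * K := by linarith
  · have hsq : Real.sqrt (Real.log x) ≤ Real.log x / 20 := by
      have h20 : 20 < Real.sqrt (Real.log x) := by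
        rw [← sqrt_400]
        exact Real.sqrt_lt_sqrt (by norm_num) hc
      have hmul := Real.sq_sqrt hlog0
      nlinarith [Real.sqrt_nonneg (Real.log x)]
    have h2 : Real.exp ((1/10) * Real.sqrt (Real.log x)) ≤ Real.exp (Real.log x / 200) := by
      apply Real.exp_le_exp.2
      linarith
    have h3 : Real.exp (Real.log x/200) = x ^ ((1:ℝ)/200) := by
      rw [Real.rpow_def_of_pos hx0]
      congr 1
      ring
    have hx400 : Real.exp 400 ≤ x := by
      calc Real.exp 400 ≤ Real.exp (Real.log x) := Real.exp_le_exp.2 (le_of_lt hc)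
        _ = x := Real.exp_log hx0
    have h99 : (199:ℝ) ≤ x ^ ((99:ℝ)/200) := by
      calc (199:ℝ) ≤ Real.exp 198 := by
            have := Real.add_one_le_exp (198:ℝ)
            linarith
        _ = (Real.exp 400) ^ ((99:ℝ)/200) := by
            rw [Real.rpow_def_of_pos (Real.exp_pos _), Real.log_exp]
            norm_num
        _ ≤ x ^ ((99:ℝ)/200) := Real.rpow_le_rpow (Real.exp_pos _).le hx400 (by norm_num)
    have hkey : 199 * x ^ ((1:ℝ)/200) ≤ x ^ ((1:ℝ)/2) := by
      have hsplit : x ^ ((1:ℝ)/2) = x ^ ((1:ℝ)/200) * x ^ ((99:ℝ)/200) := by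
        rw [← Real.rpow_add hx0]
        norm_num
      rw [hsplit]
      have h1 : (0:ℝ) ≤ x ^ ((1:ℝ)/200) := Real.rpow_nonneg hx0.le _
      nlinarith
    have hsqrt2 : x ^ ((1:ℝ)/2) / 2 - 1 ≤ K := by
      have h1 : Real.sqrt (x/4) ≤ Real.sqrt (x/2) := Real.sqrt_le_sqrt (by linarith)
      have h2 : Real.sqrt (x/4) = Real.sqrt x / 2 := by
        rw [show x/4 = x * (1/4) by ring, Real.sqrt_mul hx0.le,
          show (1:ℝ)/4 = (1/2)^2 by norm_num, Real.sqrt_sq (by norm_num)]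
        ring
      have h3 : Real.sqrt x = x ^ ((1:ℝ)/2) := Real.sqrt_eq_rpow x
      rw [h3] at h2
      linarith
    have hxp1 : (1:ℝ) ≤ x ^ ((1:ℝ)/200) := Real.one_le_rpow hx (by norm_num)
    calc (1/100) * Real.exp ((1/10) * Real.sqrt (Real.log x))
        ≤ (1/100) * x ^ ((1:ℝ)/200) := by
          rw [← h3]
          linarith [Real.exp_le_exp.2 (show (1/10) * Real.sqrt (Real.log x) ≤ Real.log x/200 by linarith)]
      _ < 0.34 * (199 * x ^ ((1:ℝ)/200) / 2 - 1) := by nlinarith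
      _ ≤ 0.34 * K := by
          have : 199 * x ^ ((1:ℝ)/200) / 2 - 1 ≤ x ^ ((1:ℝ)/2)/2 - 1 := by linarith
          nlinarith [this, hsqrt2]

lemma sqrt2half_le_exp : Real.sqrt 2 / 2 ≤ Real.exp (-(0.34)) := by
  have h1 : Real.exp 0.34 ≤ Real.sqrt 2 := by
    rw [Real.le_sqrt (Real.exp_pos _).le]
    rw [sq, ← Real.exp_add]
    have h2 : (0.34:ℝ) + 0.34 < Real.log 2 := by
      have := Real.log_two_gt_d9
      norm_num at this ⊢
      linarith
    calc Real.exp (0.34 + 0.34) ≤ Real.exp (Real.log 2) := Real.exp_le_exp.2 (le_of_lt h2)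
      _ = 2 := Real.exp_log (by norm_num)
    all_goals norm_num
  have h3 : Real.sqrt 2 / 2 = (Real.sqrt 2)⁻¹ := by
    rw [eq_comm, inv_eq_one_div, div_eq_div_iff (by positivity) (by norm_num)]
    have := Real.sq_sqrt (by norm_num : (0:ℝ) ≤ 2)
    nlinarith
  rw [h3, Real.exp_neg]
  apply inv_anti₀ (Real.exp_pos _) h1

lemma pow_sqrt2half (K : ℕ) : (Real.sqrt 2 / 2) ^ K ≤ Real.exp (-(0.34 * K)) := by
  calc (Real.sqrt 2 / 2) ^ K ≤ (Real.exp (-(0.34))) ^ K := by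
        apply pow_le_pow_left₀ (by positivity) sqrt2half_le_exp
    _ = Real.exp (-(0.34 * K)) := by
        rw [← Real.exp_nat_mul]
        congr 1
        ring
lemma numeric_II (A : ℕ) (t w : ℝ) (ht : (10:ℝ)^(12:ℕ) ≤ t)
    (hAlow : 0.39 * t ≤ (A:ℝ)) (hA5 : 5 ≤ A) (hw0 : 0 ≤ w) (hw2 : w ≤ 2 * t^2) :
    (2*(2:ℝ)^A) ^ ((9:ℝ)/10) * Real.exp (30 * w^((1:ℝ)/10)) ≤ (2:ℝ)^(A - 2 : ℕ) := by
  have ht0 : (0:ℝ) < t := lt_of_lt_of_le (by norm_num) ht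
  have hlog2lb := Real.log_two_gt_d9
  have hlog2ub := Real.log_two_lt_d9
  have h1 : (2*(2:ℝ)^A) = (2:ℝ)^(A+1) := by rw [pow_succ]; ring
  have h2 : ((2:ℝ)^(A+1)) ^ ((9:ℝ)/10)
      = Real.exp ((9:ℝ)/10 * (((A:ℝ)+1) * Real.log 2)) := by
    rw [Real.rpow_def_of_pos (by positivity), Real.log_pow]
    congr 1
    push_cast
    ring
  have h3 : (2:ℝ)^(A - 2 : ℕ) = Real.exp (((A:ℝ)-2) * Real.log 2) := by
    rw [← Real.exp_log (show (0:ℝ) < (2:ℝ)^(A-2:ℕ) by positivity), Real.log_pow]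
    congr 1
    rw [Nat.cast_sub (by omega)]
    push_cast
    ring
  rw [h1, h2, h3, ← Real.exp_add]
  apply Real.exp_le_exp.2
  -- exponent inequality
  have hw110 : w ^ ((1:ℝ)/10) ≤ 1.1 * t ^ ((1:ℝ)/5) := by
    have ha : w ^ ((1:ℝ)/10) ≤ (2*t^2) ^ ((1:ℝ)/10) :=
      Real.rpow_le_rpow hw0 hw2 (by norm_num)
    have hb : (2*t^2) ^ ((1:ℝ)/10) = (2:ℝ)^((1:ℝ)/10) * (t^2)^((1:ℝ)/10) :=
      Real.mul_rpow (by norm_num) (by positivity)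
    have hc : (t^2:ℝ)^((1:ℝ)/10) = t ^ ((1:ℝ)/5) := by
      rw [← Real.rpow_natCast t 2, ← Real.rpow_mul ht0.le]
      norm_num
    have hd : (2:ℝ)^((1:ℝ)/10) ≤ 1.1 := by
      by_contra hcon
      push_neg at hcon
      have hb0 : (0:ℝ) ≤ (1.1:ℝ) := by norm_num
      have h10 : ((1.1:ℝ))^(10:ℕ) < (((2:ℝ))^((1:ℝ)/10))^(10:ℕ) := by
        apply pow_lt_pow_left₀ hcon hb0
        norm_num
      rw [← Real.rpow_natCast (((2:ℝ))^((1:ℝ)/10)) 10, ← Real.rpow_mul (by norm_num),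
        show (1:ℝ)/10*((10:ℕ):ℝ) = ((1:ℕ):ℝ) by norm_num, Real.rpow_natCast] at h10
      norm_num at h10
    have he : (0:ℝ) ≤ (t^2:ℝ)^((1:ℝ)/10) := Real.rpow_nonneg (by positivity) _
    calc w ^ ((1:ℝ)/10) ≤ (2:ℝ)^((1:ℝ)/10) * (t^2)^((1:ℝ)/10) := by rw [← hb]; exact ha
      _ ≤ 1.1 * (t^2)^((1:ℝ)/10) := mul_le_mul_of_nonneg_right hd he
      _ = 1.1 * t ^ ((1:ℝ)/5) := by rw [hc]
  have ht15 : t ^ ((1:ℝ)/5) ≤ t / 10^(9:ℕ) := by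
    have h45 : (10:ℝ)^(9:ℕ) ≤ t ^ ((4:ℝ)/5) := by
      have ha : ((10:ℝ)^(12:ℕ)) ^ ((4:ℝ)/5) ≤ t ^ ((4:ℝ)/5) :=
        Real.rpow_le_rpow (by positivity) ht (by norm_num)
      have hb : ((10:ℝ)^(12:ℕ)) ^ ((4:ℝ)/5) = (10:ℝ) ^ ((48:ℝ)/5) := by
        rw [← Real.rpow_natCast (10:ℝ) 12, ← Real.rpow_mul (by norm_num)]
        norm_num
      have hc : (10:ℝ)^(9:ℕ) = (10:ℝ) ^ ((9:ℕ):ℝ) := (Real.rpow_natCast _ _).symm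
      have hd : (10:ℝ) ^ ((9:ℕ):ℝ) ≤ (10:ℝ) ^ ((48:ℝ)/5) := by
        apply Real.rpow_le_rpow_of_exponent_le (by norm_num)
        norm_num
      rw [hc]
      calc (10:ℝ) ^ ((9:ℕ):ℝ) ≤ (10:ℝ) ^ ((48:ℝ)/5) := hd
        _ = ((10:ℝ)^(12:ℕ)) ^ ((4:ℝ)/5) := hb.symm
        _ ≤ t ^ ((4:ℝ)/5) := ha
    have hsplit : t ^ ((1:ℝ)/5) * t ^ ((4:ℝ)/5) = t := by
      rw [← Real.rpow_add ht0]
      norm_num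
    have h45pos : (0:ℝ) < t ^ ((4:ℝ)/5) := Real.rpow_pos_of_pos ht0 _
    have hinv : (t ^ ((4:ℝ)/5))⁻¹ ≤ ((10:ℝ)^(9:ℕ))⁻¹ := by
      apply inv_anti₀ (by positivity) h45
    calc t ^ ((1:ℝ)/5) = (t ^ ((1:ℝ)/5) * t ^ ((4:ℝ)/5)) * (t ^ ((4:ℝ)/5))⁻¹ := by
          field_simp
      _ = t * (t ^ ((4:ℝ)/5))⁻¹ := by rw [hsplit]
      _ ≤ t * ((10:ℝ)^(9:ℕ))⁻¹ := mul_le_mul_of_nonneg_left hinv ht0.le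
      _ = t / 10^(9:ℕ) := by ring
  have hfinal : 30 * w^((1:ℝ)/10) ≤ (33/10^(9:ℕ)) * t := by
    calc 30 * w^((1:ℝ)/10) ≤ 30 * (1.1 * t ^ ((1:ℝ)/5)) := by
          apply mul_le_mul_of_nonneg_left hw110 (by norm_num)
      _ = 33 * t ^ ((1:ℝ)/5) := by ring
      _ ≤ 33 * (t / 10^(9:ℕ)) := by
          apply mul_le_mul_of_nonneg_left ht15 (by norm_num)
      _ = (33/10^(9:ℕ)) * t := by ring
  have hAa : 0.039 * t - 2.9 ≤ (A:ℝ)/10 - 2.9 := by linarith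
  nlinarith [hfinal, hAa, ht]
lemma conclude (N : ℕ) (x : ℝ) (S : Finset ℕ) (hSsub : S ⊆ Finset.Icc 1 N)
    (hSgood : ∀ n ∈ S, 1/4 ≤ dI (x/n))
    (hnum : (1/100) * Real.exp ((1/10) * Real.sqrt (Real.log x)) < 0.34 * S.card) :
    |rhoN N x| < Real.exp (-(1/100) * Real.exp ((1/10) * Real.sqrt (Real.log x))) := by
  have h1 := prod_bound N x S hSsub hSgood
  have h2 := pow_sqrt2half S.card
  have h3 : Real.exp (-(0.34 * S.card))
      < Real.exp (-(1/100) * Real.exp ((1/10) * Real.sqrt (Real.log x))) := by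
    apply Real.exp_lt_exp.2
    nlinarith [hnum]
  linarith

set_option maxHeartbeats 1000000 in
theorem statement10 (C : ℝ) (hC0 : 0 < C) (hC : C < 1 / Real.log 4) :
    ∃ B > 0, ∃ E > 0, ∃ N₀ : ℕ, ∀ N : ℕ, N₀ ≤ N → ∀ x : ℝ,
      1 ≤ x → x ≤ Real.exp (C * (Real.log N) ^ 2) →
      |rhoN N x| < Real.exp (-B * Real.exp (E * Real.sqrt (Real.log x))) := by
  refine ⟨1/100, by norm_num, 1/10, by norm_num, ⌈Real.exp ((10:ℝ)^(12:ℕ))⌉₊ + 2, ?_⟩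
  intro N hN x hx1 hxu
  have hx0 : (0:ℝ) < x := by linarith
  set t := Real.log N with ht
  have hNr : Real.exp ((10:ℝ)^(12:ℕ)) ≤ (N:ℝ) := by
    have h1 : (⌈Real.exp ((10:ℝ)^(12:ℕ))⌉₊ : ℕ) ≤ N := by omega
    have h2 : ((⌈Real.exp ((10:ℝ)^(12:ℕ))⌉₊ : ℕ) : ℝ) ≤ (N:ℝ) := by exact_mod_cast h1
    exact le_trans (Nat.le_ceil _) h2
  have hNpos : (0:ℝ) < (N:ℝ) := lt_of_lt_of_le (Real.exp_pos _) hNr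
  have hN0 : N ≠ 0 := by
    by_contra h
    rw [h] at hNpos
    norm_num at hNpos
  have htbig : (10:ℝ)^(12:ℕ) ≤ t := by
    rw [ht, ← Real.log_exp ((10:ℝ)^(12:ℕ))]
    exact Real.log_le_log (Real.exp_pos _) hNr
  have ht0 : (0:ℝ) < t := lt_of_lt_of_le (by positivity) htbig
  set L := Nat.log 2 N with hL
  have hLlow : (2:ℝ)^L ≤ (N:ℝ) := by
    have := Nat.pow_log_le_self 2 hN0
    exact_mod_cast this
  have hLhigh : (N:ℝ) < 2^(L+1) := by
    have := Nat.lt_pow_succ_log_self (by norm_num : 1 < 2) N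
    exact_mod_cast this
  have hlog2lb := Real.log_two_gt_d9
  have hlog2ub := Real.log_two_lt_d9
  have hLt1 : t < ((L:ℝ)+1) * Real.log 2 := by
    calc t < Real.log ((2:ℝ)^(L+1)) := Real.log_lt_log hNpos hLhigh
      _ = ((L:ℝ)+1) * Real.log 2 := by rw [Real.log_pow]; push_cast; ring
  have hLt2 : (L:ℝ) * Real.log 2 ≤ t := by
    calc (L:ℝ) * Real.log 2 = Real.log ((2:ℝ)^L) := by rw [Real.log_pow]
      _ ≤ t := Real.log_le_log (by positivity) hLlow
  have hLget : t ≤ (L:ℝ) := by nlinarith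
  have hLub : (L:ℝ) ≤ 1.45 * t := by nlinarith
  set A := 2 * L / 5 with hA
  have hdm := Nat.div_add_mod (2*L) 5
  have hmod := Nat.mod_lt (2*L) (show 0 < 5 by norm_num)
  have hdiv1 : 5 * A ≤ 2 * L := by omega
  have hdiv2 : 2 * L < 5 * A + 5 := by omega
  have hL13 : (13:ℕ) ≤ L := by
    have h13 : (13:ℝ) ≤ (L:ℝ) := by
      calc (13:ℝ) ≤ (10:ℝ)^(12:ℕ) := by norm_num
        _ ≤ t := htbig
        _ ≤ (L:ℝ) := hLget
    exact_mod_cast h13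
  have hA5 : 5 ≤ A := by omega
  have h2A : 2 * A + 1 ≤ L := by omega
  have hAreal_low : 0.39 * t ≤ (A:ℝ) := by
    have h1 : (2*(L:ℝ) - 4)/5 ≤ (A:ℝ) := by
      have : ((5*A : ℕ):ℝ) ≥ 2*(L:ℝ) - 4 := by
        have h2 : (2*L : ℕ) ≤ 5*A + 4 := by omega
        have h3 : ((2*L : ℕ):ℝ) ≤ ((5*A+4 : ℕ):ℝ) := by exact_mod_cast h2
        push_cast at h3 ⊢
        linarith
      push_cast at this
      linarith
    have h2 : 0.39 * t ≤ (2*t - 4)/5 := by nlinarith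
    have h3 : (2*t - 4)/5 ≤ (2*(L:ℝ) - 4)/5 := by linarith
    linarith
  have hlogx0 : 0 ≤ Real.log x := Real.log_nonneg hx1
  have hlogxu : Real.log x ≤ C * t^2 := by
    calc Real.log x ≤ Real.log (Real.exp (C * t^2)) := Real.log_le_log hx0 hxu
      _ = C * t^2 := Real.log_exp _
  have hC72 : C ≤ 0.722 := by
    have hlog4 : Real.log 4 = 2 * Real.log 2 := by
      rw [show (4:ℝ) = 2^(2:ℕ) by norm_num, Real.log_pow]
      push_cast
      ring
    have h1 : 1/Real.log 4 ≤ 0.722 := by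
      rw [hlog4, div_le_iff₀ (by linarith)]
      nlinarith
    linarith
  have hsqrtlogx : Real.sqrt (Real.log x) ≤ 0.85 * t := by
    have hsqC : Real.sqrt C ≤ 0.85 := by
      rw [show (0.85:ℝ) = Real.sqrt 0.7225 by
        rw [show (0.7225:ℝ) = 0.85^2 by norm_num, Real.sqrt_sq (by norm_num)]]
      exact Real.sqrt_le_sqrt (by linarith)
    calc Real.sqrt (Real.log x) ≤ Real.sqrt (C * t^2) := Real.sqrt_le_sqrt hlogxu
      _ = Real.sqrt C * t := by
        rw [Real.sqrt_mul hC0.le, Real.sqrt_sq ht0.le]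
      _ ≤ 0.85 * t := by nlinarith [Real.sqrt_nonneg C]
  rcases le_or_gt x ((2:ℝ)^A) with hcase | hcase
  · -- Regime I
    have hN4 : 4*x + 1 ≤ (N:ℝ) := by
      have hA3L : A + 3 ≤ L := by omega
      have h1 : ((2:ℝ))^(A+3) ≤ (2:ℝ)^L := pow_le_pow_right₀ (by norm_num) hA3L
      have h2 : 4*(2:ℝ)^A + 1 ≤ (2:ℝ)^(A+3) := by
        have h3 : ((2:ℝ))^(A+3) = 8 * (2:ℝ)^A := by rw [pow_add]; ring
        have h4 : (1:ℝ) ≤ (2:ℝ)^A := one_le_pow₀ (by norm_num)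
        nlinarith
      linarith
    obtain ⟨S, hSsub, hSgood, hS1, hS2⟩ := regimeI N x hx1 hN4
    apply conclude N x S hSsub hSgood
    apply numeric_I x hx1 (S.card) _ hS2
    exact_mod_cast hS1
  · -- Regime II
    have hMx : ((2:ℝ)^(2 * Nat.log 2 N / 5)) ≤ x := le_of_lt hcase
    have hdivp : ∀ Q : ℕ, Q ≠ 0 → (Q:ℝ) ≤ 2*x →
        (((Finset.Ioc (2^(2 * Nat.log 2 N / 5)) (2*2^(2 * Nat.log 2 N / 5))).filter
          (fun d => d ∣ Q)).card : ℝ) ≤ ((2:ℝ)^(2 * Nat.log 2 N / 5 - 2 : ℕ)) := by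
      intro Q hQne hQle
      have hdc := divisor_count Q (2^A) hQne Nat.one_le_two_pow
      have hwbd : ((Q.primeFactors.card:ℝ) + 1) ≤ 2*t^2 := by
        have h1 : (2:ℝ)^(Q.primeFactors.card) ≤ (Q:ℝ) := by
          exact_mod_cast card_primeFactors_le Q hQne
        have h2 : (Q.primeFactors.card : ℝ) * Real.log 2 ≤ Real.log (2*x) := by
          calc (Q.primeFactors.card : ℝ) * Real.log 2
              = Real.log ((2:ℝ)^(Q.primeFactors.card)) := by rw [Real.log_pow]
            _ ≤ Real.log (Q:ℝ) := Real.log_le_log (by positivity) (le_trans h1 hQle |>.trans_eq rfl |> fun _ => h1) 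
            _ ≤ Real.log (2*x) := Real.log_le_log (by
                have : (1:ℕ) ≤ Q := Nat.one_le_iff_ne_zero.2 hQne
                exact_mod_cast this) hQle
        have h3 : Real.log (2*x) = Real.log 2 + Real.log x := by
          rw [Real.log_mul (by norm_num) (ne_of_gt hx0)]
        have h4 : (Q.primeFactors.card : ℝ) * Real.log 2 ≤ Real.log 2 + 0.722 * t^2 := by
          rw [h3] at h2
          nlinarith [hlogxu, hC72, sq_nonneg t]
        have h5 : (Q.primeFactors.card : ℝ) ≤ 1 + 1.05 * t^2 := by
          nlinarith [sq_nonneg t]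
        nlinarith [sq_nonneg t, htbig, ht0]
      have hnum := numeric_II A t ((Q.primeFactors.card:ℝ)+1) htbig hAreal_low hA5
        (by positivity) hwbd
      have hcast : (2*((2^A : ℕ):ℝ)) = 2*(2:ℝ)^A := by push_cast; ring
      rw [hcast] at hdc
      exact le_trans hdc hnum
    obtain ⟨S, hSsub, hSgood, hScard⟩ := regimeII N x hN0 hx1 hA5 h2A hMx hdivp
    apply conclude N x S hSsub hSgood
    -- numeric for regime II
    have hexp1 : Real.exp ((1/10) * Real.sqrt (Real.log x)) ≤ Real.exp (0.085 * t) := by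
      apply Real.exp_le_exp.2
      nlinarith [Real.sqrt_nonneg (Real.log x)]
    have hpow2 : (2:ℝ)^(A - 2 : ℕ) = Real.exp (((A:ℝ)-2) * Real.log 2) := by
      rw [← Real.exp_log (show (0:ℝ) < (2:ℝ)^(A-2:ℕ) by positivity), Real.log_pow]
      congr 1
      rw [Nat.cast_sub (by omega)]
      push_cast
      ring
    have hexp2 : Real.exp (0.085 * t) ≤ Real.exp (((A:ℝ)-2) * Real.log 2) := by
      apply Real.exp_le_exp.2
      have h1 : ((A:ℝ)-2) * Real.log 2 ≥ (0.39*t - 2) * 0.6931471803 := by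
        nlinarith [hAreal_low]
      nlinarith [htbig]
    calc (1/100) * Real.exp ((1/10) * Real.sqrt (Real.log x))
        ≤ (1/100) * Real.exp (((A:ℝ)-2) * Real.log 2) :=
          mul_le_mul_of_nonneg_left (le_trans hexp1 hexp2) (by norm_num)
      _ < 0.34 * Real.exp (((A:ℝ)-2) * Real.log 2) :=
          mul_lt_mul_of_pos_right (by norm_num) (Real.exp_pos _)
      _ = 0.34 * ((2:ℝ)^(A - 2 : ℕ)) := by rw [hpow2]
      _ ≤ 0.34 * (S.card) := mul_le_mul_of_nonneg_left hScard (by norm_num)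
end

section
/- There exists a constant C' > 0 such that for all sufficiently large positive integers N and all real x with N ≤ x ≤ exp(C' (log N)²), one has |ρ_N(x)| < 1/x². -/
open Real Finset

namespace Stmt14

/-- Bertrand prime in `(2^i, 2^(i+1)]`. -/
noncomputable def bp (i : ℕ) : ℕ :=
  (Nat.exists_prime_lt_and_le_two_mul (2 ^ i) (by positivity)).choose

lemma bp_spec (i : ℕ) : (bp i).Prime ∧ 2 ^ i < bp i ∧ bp i ≤ 2 * 2 ^ i :=
  (Nat.exists_prime_lt_and_le_two_mul (2 ^ i) (by positivity)).choose_spec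

lemma bp_prime (i : ℕ) : (bp i).Prime := (bp_spec i).1
lemma bp_gt (i : ℕ) : 2 ^ i < bp i := (bp_spec i).2.1
lemma bp_le (i : ℕ) : bp i ≤ 2 ^ (i + 1) := by
  have := (bp_spec i).2.2; rw [pow_succ]; omega

lemma bp_mono : StrictMono bp := by
  intro a b hab
  calc bp a ≤ 2 ^ (a+1) := bp_le a
    _ ≤ 2 ^ b := Nat.pow_le_pow_right (by norm_num) hab
    _ < bp b := bp_gt b

/-- quadratic bound for `|cos (π t)|` in terms of distance of `t` to `ℤ`. -/
lemma abs_cos_le (t : ℝ) : |Real.cos (Real.pi * t)| ≤ 1 - 2 * (t - round t) ^ 2 := by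
  set u : ℝ := t - round t with hu
  have h1 : |u| ≤ 1 / 2 := abs_sub_round t
  have h2 : Real.cos (Real.pi * t) = (-1) ^ (round t) * Real.cos (Real.pi * u) := by
    rw [show Real.pi * t = Real.pi * u + (round t) * Real.pi by rw [hu]; push_cast; ring,
      Real.cos_add_int_mul_pi]
  have hpi := Real.pi_pos
  have habs : |Real.pi * u| ≤ Real.pi / 2 := by
    rw [abs_mul, abs_of_pos hpi]
    nlinarith [abs_le.1 h1]
  have hcos := Real.cos_le_one_sub_mul_cos_sq (x := Real.pi * u)
    (le_trans habs (by linarith))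
  have hnn : 0 ≤ Real.cos (Real.pi * u) :=
    Real.cos_nonneg_of_mem_Icc ⟨by nlinarith [abs_le.1 habs], by nlinarith [abs_le.1 habs]⟩
  rw [h2, abs_mul, abs_of_nonneg hnn]
  have hone : |((-1:ℝ)) ^ (round t)| = 1 := by
    rcases Int.even_or_odd (round t) with h | h
    · rw [h.neg_one_zpow]; simp
    · rw [Odd.neg_one_zpow h]; simp
  rw [hone, one_mul]
  have : 2 / Real.pi ^ 2 * (Real.pi * u) ^ 2 = 2 * u ^ 2 := by
    field_simp
  linarith [hcos, this ▸ hcos]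


/-- Key lemma: if `1 ≤ y` and `y + 1/2` is below the product of the Bertrand primes
`bp 0, …, bp (r-1)`, then some `j ≤ 2^r` has `y/j` at distance `≥ 1/(2·2^r)` from `ℤ`. -/
lemma lemB (r : ℕ) (hr : 1 ≤ r) (y : ℝ) (hy : 1 ≤ y)
    (hyP : y + 1/2 < ((∏ i ∈ Finset.range r, bp i : ℕ) : ℝ)) :
    ∃ j : ℕ, 1 ≤ j ∧ j ≤ 2 ^ r ∧ 1 / (2 * (2:ℝ) ^ r) ≤ |y / j - round (y / j)| := by
  by_contra hcon
  push_neg at hcon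
  have hM2 : (2:ℝ) ≤ (2:ℝ) ^ r := by
    calc (2:ℝ) = 2 ^ 1 := (pow_one 2).symm
    _ ≤ 2 ^ r := by apply pow_le_pow_right₀ (by norm_num) hr
  have hMpos : (0:ℝ) < (2:ℝ) ^ r := by positivity
  have h1 := hcon 1 le_rfl Nat.one_le_two_pow
  rw [Nat.cast_one, div_one] at h1
  set X : ℤ := round y with hX
  have h14 : 1 / (2 * (2:ℝ) ^ r) ≤ 1/4 := by
    rw [div_le_div_iff₀ (by linarith) (by norm_num)]; linarith
  have hXy : |y - X| < 1/4 := lt_of_lt_of_le h1 h14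
  have hX1 : 1 ≤ X := by
    have h0 : (0:ℝ) < (X:ℤ) := by
      have := abs_lt.1 hXy
      push_cast at this ⊢
      linarith [this.1]
    have : (0:ℤ) < X := by exact_mod_cast h0
    omega
  have hdvd : ∀ i < r, (bp i : ℤ) ∣ X := by
    intro i hi
    have hq := bp_prime i
    have hqM : bp i ≤ 2 ^ r := (bp_le i).trans (Nat.pow_le_pow_right (by norm_num) hi)
    have hq1 : 1 ≤ bp i := hq.one_lt.le
    have h2 := hcon (bp i) hq1 hqM
    set m : ℤ := round (y / (bp i : ℝ)) with hm
    have hqpos : (0:ℝ) < (bp i : ℝ) := by exact_mod_cast hq.pos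
    have hqMr : (bp i : ℝ) ≤ (2:ℝ) ^ r := by exact_mod_cast hqM
    have hclose : |y - (m : ℝ) * (bp i : ℝ)| < 1/2 := by
      have h4 : |y - (m:ℝ) * (bp i : ℝ)| = (bp i : ℝ) * |y / (bp i : ℝ) - (m:ℝ)| := by
        rw [← abs_of_pos hqpos, ← abs_mul]
        congr 1
        field_simp
        rw [abs_of_pos hqpos]; ring
      rw [h4]
      calc (bp i:ℝ) * |y / (bp i:ℝ) - (m:ℝ)| < (bp i:ℝ) * (1 / (2 * (2:ℝ)^r)) :=
            mul_lt_mul_of_pos_left h2 hqpos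
        _ ≤ 1/2 := by rw [mul_one_div, div_le_div_iff₀ (by linarith) (by norm_num)]; linarith
    have key : m * (bp i : ℤ) = X := by
      have h5 : |((m * (bp i:ℤ) - X : ℤ) : ℝ)| < 1 := by
        push_cast
        calc |(m:ℝ) * (bp i:ℝ) - (X:ℝ)| ≤ |(m:ℝ) * (bp i:ℝ) - y| + |y - (X:ℝ)| :=
              abs_sub_le _ _ _
          _ = |y - (m:ℝ) * (bp i:ℝ)| + |y - (X:ℝ)| := by rw [abs_sub_comm]
          _ < 1 := by linarith
      have h6 : |m * (bp i:ℤ) - X| < 1 := by exact_mod_cast h5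
      rw [abs_lt] at h6
      omega
    exact ⟨m, by linarith [key]⟩
  set Xn : ℕ := X.toNat with hXn
  have hXnX : (Xn : ℤ) = X := Int.toNat_of_nonneg (by omega)
  have hdvdn : ∀ i < r, bp i ∣ Xn := by
    intro i hi
    have h7 := hdvd i hi
    rw [← hXnX] at h7
    exact_mod_cast h7
  have hinj : Set.InjOn bp (Finset.range r) := bp_mono.injective.injOn
  have hPdvd : (∏ i ∈ Finset.range r, bp i) ∣ Xn := by
    have h8 : ∏ p ∈ (Finset.range r).image bp, p ∣ Xn := by
      apply Finset.prod_primes_dvd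
      · intro p hp
        obtain ⟨i, hi, rfl⟩ := Finset.mem_image.mp hp
        exact (bp_prime i).prime
      · intro p hp
        obtain ⟨i, hi, rfl⟩ := Finset.mem_image.mp hp
        exact hdvdn i (Finset.mem_range.mp hi)
    rwa [Finset.prod_image (fun a ha b hb hab => hinj ha hb hab)] at h8
  have hXn1 : 1 ≤ Xn := by omega
  have hle : (∏ i ∈ Finset.range r, bp i) ≤ Xn := Nat.le_of_dvd (by omega) hPdvd
  have : ((∏ i ∈ Finset.range r, bp i : ℕ) : ℝ) ≤ (X : ℝ) := by
    rw [← hXnX]; exact_mod_cast hle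
  have hXle : (X:ℝ) ≤ y + 1/2 := by
    have := abs_lt.1 hXy
    linarith [this.2]
  linarith

end Stmt14

lemma cube_aux : ∀ s : ℝ, 10 ≤ s → (s+1)^2 + 2 < s^3/6 := by
  intro s hs
  nlinarith [sq_nonneg s, mul_nonneg (sub_nonneg.2 hs) (sq_nonneg s),
    mul_nonneg (sub_nonneg.2 hs) (sub_nonneg.2 hs)]

set_option maxRecDepth 40000 in
set_option maxHeartbeats 1000000 in
open Stmt14 in
theorem statement14 :
    ∃ C' > (0 : ℝ), ∃ N₀ : ℕ, ∀ N : ℕ, N₀ ≤ N → ∀ x : ℝ,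
      (N : ℝ) ≤ x → x ≤ Real.exp (C' * (Real.log N) ^ 2) →
      |rhoN N x| < 1 / x ^ 2 := by
  refine ⟨1/100, by norm_num, 2^10000, ?_⟩
  intro N hN x hx1 hx2
  have hN0 : N ≠ 0 := Nat.pos_iff_ne_zero.mp (lt_of_lt_of_le (Nat.two_pow_pos 10000) hN)
  have hLbig : 10000 ≤ Nat.log 2 N := (Nat.le_log_iff_pow_le (by norm_num) hN0).mpr hN
  have hNR : (2:ℝ) ^ (10000:ℕ) ≤ (N:ℝ) := by exact_mod_cast hN
  have hN1 : (1:ℝ) ≤ (N:ℝ) := le_trans (one_le_pow₀ (by norm_num)) hNR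
  set t := Real.log N with ht
  have h10000 : (10000:ℝ) * Real.log 2 ≤ t := by
    have h2 : Real.log ((2:ℝ) ^ (10000:ℕ)) ≤ t := Real.log_le_log (by positivity) hNR
    rw [Real.log_pow] at h2
    push_cast at h2
    linarith
  clear hN hNR
  have hx0 : (0:ℝ) < x := lt_of_lt_of_le (by linarith) hx1
  have hx1' : (1:ℝ) ≤ x := le_trans hN1 hx1
  have hl1 : (0.6931:ℝ) < Real.log 2 := lt_trans (by norm_num) Real.log_two_gt_d9
  have hl2 : Real.log 2 < 0.6932 := lt_trans Real.log_two_lt_d9 (by norm_num)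
  have ht0 : (6931:ℝ) ≤ t := by nlinarith
  have hlogx : Real.log x ≤ t^2/100 := by
    calc Real.log x ≤ Real.log (Real.exp (1/100 * t^2)) := Real.log_le_log hx0 hx2
      _ = 1/100 * t^2 := Real.log_exp _
      _ = t^2/100 := by ring
  set L := Nat.log 2 N with hL
  set r := L / 5 with hrdef
  set M := 2 ^ r with hMdef
  have hr1 : 1 ≤ r := by omega
  have hL1 : (N:ℝ) < 2 ^ (L+1) := by exact_mod_cast Nat.lt_pow_succ_log_self (by norm_num) N
  have hLl : t < ((L:ℝ)+1) * Real.log 2 := by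
    have := Real.log_lt_log (by linarith) hL1
    rwa [Real.log_pow, Nat.cast_add, Nat.cast_one] at this
  have hrL : (L:ℝ) ≤ 5*(r:ℝ) + 4 := by
    have : L ≤ 5*r + 4 := by omega
    exact_mod_cast this
  have hLr : (0:ℝ) ≤ (L:ℝ) := Nat.cast_nonneg L
  -- r * log 2 > t/5 - 1
  have hrl : t/5 - 1 < (r:ℝ) * Real.log 2 := by nlinarith
  -- r ≥ 0.288 t
  have hr288 : 0.288 * t ≤ (r:ℝ) := by nlinarith
  -- M = exp (r log 2)
  have hMr : (M:ℝ) = Real.exp ((r:ℕ) * Real.log 2) := by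
    rw [Real.exp_nat_mul, Real.exp_log (by norm_num : (0:ℝ) < 2)]
    push_cast [hMdef]
    norm_num
  have hM2 : (2:ℝ) ≤ (M:ℝ) := by
    have : (2:ℕ) ≤ M := by
      calc (2:ℕ) = 2^1 := rfl
        _ ≤ 2^r := Nat.pow_le_pow_right (by norm_num) hr1
    exact_mod_cast this
  -- M is big: M > 4 log x + 2
  have hMbig : 4 * Real.log x + 2 < (M:ℝ) := by
    have hs0 : (0:ℝ) ≤ t/5 - 1 := by linarith
    have hcube : (t/5-1)^3/6 ≤ Real.exp (t/5 - 1) := by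
      have h9 := Real.sum_le_exp_of_nonneg hs0 4
      rw [Finset.sum_range_succ, Finset.sum_range_succ, Finset.sum_range_succ,
        Finset.sum_range_succ, Finset.sum_range_zero] at h9
      norm_num [Nat.factorial] at h9
      nlinarith [h9, sq_nonneg (t/5-1), hs0]
    have hMe : Real.exp (t/5 - 1) ≤ (M:ℝ) := by
      rw [hMr]; exact Real.exp_le_exp.mpr (by linarith)
    have hs10 : (10:ℝ) ≤ t/5 - 1 := by linarith
    have hkey := cube_aux (t/5-1) hs10
    have ht25 : t^2/25 = (t/5-1+1)^2 := by ring
    linarith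
  -- the prime product dominates x
  set E := ∑ i ∈ Finset.range r, i with hE
  set P := ∏ i ∈ Finset.range r, bp i with hP
  have hQP : (2:ℕ)^E ≤ P := by
    rw [hP, hE, ← Finset.prod_pow_eq_pow_sum]
    exact Finset.prod_le_prod' (fun i _ => (bp_gt i).le)
  have hE2 : (E:ℝ) * 2 = (r:ℝ) * ((r:ℝ) - 1) := by
    have h10 : E * 2 = r * (r-1) := Finset.sum_range_id_mul_two r
    have h12 := congrArg (fun n : ℕ => (n:ℝ)) h10
    simp only [Nat.cast_mul, Nat.cast_ofNat, Nat.cast_sub hr1, Nat.cast_one] at h12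
    linarith
  have hPx : x + 1/2 < (P:ℝ) := by
    have hEl : t^2/100 + 1 ≤ (E:ℝ) * Real.log 2 := by
      have hE0 : (0:ℝ) ≤ (E:ℝ) := Nat.cast_nonneg E
      have hrr : (0.288*t)*(0.288*t - 1) ≤ (r:ℝ)*((r:ℝ)-1) := by
        nlinarith [hr288, ht0, mul_nonneg (sub_nonneg.2 hr288) (sub_nonneg.2 hr288)]
      have h13 : 0.6931 * (E:ℝ) ≤ (E:ℝ) * Real.log 2 := by nlinarith [hE0, hl1]
      have h14 : (0.288*t)*(0.288*t - 1) ≤ (E:ℝ) * 2 := by linarith [hE2, hrr]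
      nlinarith [h13, h14, ht0, mul_le_mul ht0 ht0 (by norm_num) (by linarith)]
    have h2E : Real.exp (t^2/100 + 1) ≤ (((2:ℕ)^E : ℕ) : ℝ) := by
      have : (((2:ℕ)^E : ℕ) : ℝ) = Real.exp ((E:ℕ) * Real.log 2) := by
        rw [Real.exp_nat_mul, Real.exp_log (by norm_num : (0:ℝ) < 2)]
        push_cast
        norm_num
      rw [this]
      exact Real.exp_le_exp.mpr hEl
    have hee : Real.exp (t^2/100) + 1/2 < Real.exp (t^2/100 + 1) := by
      rw [Real.exp_add]
      nlinarith [Real.one_le_exp (by positivity : (0:ℝ) ≤ t^2/100),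
        Real.add_one_le_exp (1:ℝ)]
    have hxe : x ≤ Real.exp (t^2/100) := by
      calc x ≤ Real.exp (1/100 * t^2) := hx2
        _ = Real.exp (t^2/100) := by ring_nf
    have hQPr : (((2:ℕ)^E : ℕ) : ℝ) ≤ (P:ℝ) := by exact_mod_cast hQP
    linarith
  -- the block structure
  set K := N / M with hK
  have hMposn : 0 < M := by rw [hMdef]; exact Nat.two_pow_pos r
  have hM5 : M^5 ≤ N := by
    have h15 : r*5 ≤ L := by omega
    calc M^5 = 2^(r*5) := by rw [hMdef, ← pow_mul]
      _ ≤ 2^L := Nat.pow_le_pow_right (by norm_num) h15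
      _ ≤ N := by rw [hL]; exact Nat.pow_log_le_self 2 hN0
  have hKM : M^4 ≤ K := by
    rw [hK, Nat.le_div_iff_mul_le hMposn]
    calc M^4*M = M^5 := by ring
      _ ≤ N := hM5
  have hMK : M * K ≤ N := by
    rw [hK, mul_comm]
    exact Nat.div_mul_le_self N M
  have hKN : K ≤ N := Nat.div_le_self N M
  have hMcast : (M:ℝ) = (2:ℝ)^r := by rw [hMdef]; push_cast; norm_num
  -- choose for each k ≤ K a good multiple of k
  have hgood : ∀ k : ℕ, ∃ n j : ℕ, k ∈ Finset.Icc 1 K →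
      (n ∈ Finset.Icc 1 N ∧ 1 ≤ j ∧ j ≤ M ∧ n = j * k ∧
        1 / (2 * (M:ℝ)) ≤ |x / n - round (x / n)|) := by
    intro k
    by_cases hk : k ∈ Finset.Icc 1 K
    · obtain ⟨hk1, hkK⟩ := Finset.mem_Icc.mp hk
      have hk1R : (1:ℝ) ≤ (k:ℝ) := by exact_mod_cast hk1
      have hkx : (k:ℝ) ≤ x := le_trans (by exact_mod_cast le_trans hkK hKN) hx1
      have hy1 : 1 ≤ x / k := (one_le_div (by linarith)).mpr hkx
      have hyP : x / k + 1/2 < (P:ℝ) := by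
        have : x / k ≤ x := div_le_self (le_of_lt hx0) hk1R
        linarith
      obtain ⟨j, hj1, hjM, hjb⟩ := lemB r hr1 (x/k) hy1 hyP
      refine ⟨j*k, j, fun _ => ⟨?_, hj1, ?_, rfl, ?_⟩⟩
      · rw [Finset.mem_Icc]
        refine ⟨by simpa using Nat.mul_le_mul hj1 hk1, ?_⟩
        calc j*k ≤ M*K := Nat.mul_le_mul (by rwa [hMdef]) hkK
          _ ≤ N := hMK
      · rwa [hMdef]
      · have harg : x / ((j*k : ℕ):ℝ) = (x / k) / j := by
          push_cast
          rw [div_div, mul_comm]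
        rw [harg, hMcast]
        exact hjb
    · exact ⟨1, 1, fun h => absurd h hk⟩
  choose g jf hg using hgood
  set S := (Finset.Icc 1 K).image g with hS
  have hSsub : S ⊆ Finset.Icc 1 N := by
    intro n hn
    obtain ⟨k, hk, rfl⟩ := Finset.mem_image.mp hn
    exact (hg k hk).1
  -- lower bound on the number of good n
  have hcard : K ≤ M * S.card := by
    have h16 : (Finset.Icc 1 K).card = K := by rw [Nat.card_Icc]; omega
    have h17 : (Finset.Icc 1 K).card
        = ∑ n ∈ S, ((Finset.Icc 1 K).filter (fun k => g k = n)).card :=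
      Finset.card_eq_sum_card_fiberwise (fun k hk => Finset.mem_image_of_mem g hk)
    have h18 : ∀ n ∈ S, ((Finset.Icc 1 K).filter (fun k => g k = n)).card ≤ M := by
      intro n hn
      have hMicc : (Finset.Icc 1 M).card = M := by rw [Nat.card_Icc]; omega
      rw [← hMicc]
      apply Finset.card_le_card_of_injOn jf
      · intro k hk
        rw [Finset.mem_coe, Finset.mem_filter] at hk
        have h := hg k hk.1
        rw [Finset.mem_coe, Finset.mem_Icc]
        exact ⟨h.2.1, h.2.2.1⟩
      · intro a ha b hb hab
        simp only [Finset.coe_filter, Set.mem_setOf_eq] at ha hb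
        have ha2 := (hg a ha.1).2.2.2.1
        have hb2 := (hg b hb.1).2.2.2.1
        have hjb1 : 1 ≤ jf b := (hg b hb.1).2.1
        have hgg : jf b * a = jf b * b := by
          calc jf b * a = jf a * a := by rw [hab]
            _ = g a := ha2.symm
            _ = g b := by rw [ha.2, hb.2]
            _ = jf b * b := hb2
        exact Nat.eq_of_mul_eq_mul_left (by omega) hgg
    have h19 : K ≤ S.card * M := by
      rw [← h16, h17]
      simpa [smul_eq_mul] using Finset.sum_le_card_nsmul S _ M h18
    rwa [mul_comm]
  set G := S.card with hGdef
  have hG : M^3 ≤ G := by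
    have h22 : M * M^3 ≤ M * G := by
      calc M * M^3 = M^4 := by ring
        _ ≤ K := hKM
        _ ≤ M * G := hcard
    exact Nat.le_of_mul_le_mul_left h22 hMposn
  -- the analytic estimate
  have habs : |rhoN N x| = ∏ n ∈ Finset.Icc 1 N, |Real.cos (Real.pi * x / n)| := by
    rw [rhoN, Finset.abs_prod]
  have hsplit : ∏ n ∈ Finset.Icc 1 N, |Real.cos (Real.pi * x / n)|
      ≤ ∏ n ∈ S, |Real.cos (Real.pi * x / n)| := by
    rw [← Finset.prod_sdiff hSsub]
    have h23 : ∏ n ∈ Finset.Icc 1 N \ S, |Real.cos (Real.pi * x / n)| ≤ 1 :=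
      Finset.prod_le_one (fun i _ => abs_nonneg _) (fun i _ => Real.abs_cos_le_one _)
    have h24 : 0 ≤ ∏ n ∈ S, |Real.cos (Real.pi * x / n)| :=
      Finset.prod_nonneg (fun i _ => abs_nonneg _)
    exact mul_le_of_le_one_left h24 h23
  have hterm : ∀ n ∈ S, |Real.cos (Real.pi * x / n)| ≤ 1 - 1/(2*(M:ℝ)^2) := by
    intro n hn
    obtain ⟨k, hk, rfl⟩ := Finset.mem_image.mp hn
    have hb := (hg k hk).2.2.2.2
    have h20 := abs_cos_le (x / (g k : ℝ))
    have harg : Real.pi * x / (g k : ℝ) = Real.pi * (x / (g k : ℝ)) := mul_div_assoc _ _ _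
    rw [harg]
    have hsq : (1/(2*(M:ℝ)))^2 ≤ (x / (g k:ℝ) - round (x / (g k:ℝ)))^2 := by
      have h28 := pow_le_pow_left₀ (by positivity) hb 2
      rwa [sq_abs] at h28
    have hMR0 : (0:ℝ) < (M:ℝ) := by linarith
    have h26 : 2 * (1/(2*(M:ℝ)))^2 = 1/(2*(M:ℝ)^2) := by
      field_simp
    calc |Real.cos (Real.pi * (x / (g k : ℝ)))|
        ≤ 1 - 2*(x / (g k:ℝ) - round (x / (g k:ℝ)))^2 := h20
      _ ≤ 1 - 1/(2*(M:ℝ)^2) := by rw [← h26]; linarith [hsq]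
  have hq0 : (0:ℝ) ≤ 1 - 1/(2*(M:ℝ)^2) := by
    have h27 : (1:ℝ)/(2*(M:ℝ)^2) ≤ 1/8 := by
      rw [div_le_div_iff₀ (by nlinarith [hM2]) (by norm_num)]
      nlinarith [hM2]
    linarith
  have hprodS : ∏ n ∈ S, |Real.cos (Real.pi * x / n)| ≤ (1 - 1/(2*(M:ℝ)^2))^G := by
    rw [← Finset.prod_const]
    exact Finset.prod_le_prod (fun i _ => abs_nonneg _) hterm
  have hqe : 1 - 1/(2*(M:ℝ)^2) ≤ Real.exp (-(1/(2*(M:ℝ)^2))) := by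
    have := Real.add_one_le_exp (-(1/(2*(M:ℝ)^2)))
    linarith
  have hpow : (1 - 1/(2*(M:ℝ)^2))^G ≤ Real.exp (-((G:ℝ)/(2*(M:ℝ)^2))) := by
    calc (1 - 1/(2*(M:ℝ)^2))^G ≤ (Real.exp (-(1/(2*(M:ℝ)^2))))^G :=
          pow_le_pow_left₀ hq0 hqe G
      _ = Real.exp (-((G:ℝ)/(2*(M:ℝ)^2))) := by
          rw [← Real.exp_nat_mul]
          congr 1
          field_simp
  have hfin : Real.exp (-((G:ℝ)/(2*(M:ℝ)^2))) < 1 / x^2 := by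
    have hx2' : 1 / x^2 = Real.exp (-(2*Real.log x)) := by
      rw [Real.exp_neg, show (2:ℝ)*Real.log x = Real.log (x^2) by
        rw [Real.log_pow]; push_cast; ring]
      rw [Real.exp_log (by positivity)]
      rw [one_div]
    rw [hx2']
    apply Real.exp_lt_exp.mpr
    have hM2R : (0:ℝ) < (M:ℝ)^2 := by nlinarith [hM2]
    rw [neg_lt_neg_iff, lt_div_iff₀ (by linarith)]
    have hGM : ((M:ℝ))^3 ≤ (G:ℝ) := by exact_mod_cast hG
    have h30 : (M:ℝ)^2 * (4*Real.log x + 2) < (M:ℝ)^2 * (M:ℝ) :=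
      mul_lt_mul_of_pos_left hMbig hM2R
    have h31 : (M:ℝ)^2 * (M:ℝ) = (M:ℝ)^3 := by ring
    linarith only [hGM, h30, h31, hM2R]
  calc |rhoN N x| = ∏ n ∈ Finset.Icc 1 N, |Real.cos (Real.pi * x / n)| := habs
    _ ≤ ∏ n ∈ S, |Real.cos (Real.pi * x / n)| := hsplit
    _ ≤ (1 - 1/(2*(M:ℝ)^2))^G := hprodS
    _ ≤ Real.exp (-((G:ℝ)/(2*(M:ℝ)^2))) := hpow
    _ < 1 / x^2 := hfin
end

section
/- For all a > 0 and δ ∈ (0, 1/2) there exists k₀ (depending on a) such that for all integers k ≥ k₀, all integers N > e^{ak}, and all real x ∈ [e^{a k²}, N^k], one has #S_k(N, δ, x) ≥ ((1/2 − δ)(2^{−1/k} − (3/2)e^{−a}) − (2/3)^k) · x^{1/k}. -/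
open scoped Classical

/-- Distance from a real number to the nearest integer. -/
noncomputable def distNearestInt (y : ℝ) : ℝ := |y - round y|

/-- `S_k(N, δ, x) = {n ∈ {1,…,N} : ‖x/n^k‖ ≥ δ}`. -/
noncomputable def Sk (k N : ℕ) (δ x : ℝ) : Finset ℕ :=
  (Finset.Icc 1 N).filter (fun n => δ ≤ distNearestInt (x / (n : ℝ) ^ k))

lemma convexOn_rpow_neg {p : ℝ} (hp : p ≤ 0) :
    ConvexOn ℝ (Set.Ioi (0:ℝ)) fun t : ℝ ↦ t ^ p := by
  have hint : interior (Set.Ioi (0:ℝ)) = Set.Ioi 0 := interior_Ioi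
  refine convexOn_of_hasDerivWithinAt2_nonneg (f' := fun t => p * t ^ (p-1))
    (f'' := fun t => p * ((p-1) * t ^ (p-2))) (convex_Ioi 0) ?_ ?_ ?_ ?_
  · intro t ht
    exact (Real.continuousAt_rpow_const t p (Or.inl (ne_of_gt ht))).continuousWithinAt
  · intro t ht
    rw [hint] at ht
    exact ((Real.hasDerivAt_rpow_const (p := p) (Or.inl (ne_of_gt ht)))).hasDerivWithinAt
  · intro t ht
    rw [hint] at ht
    exact (((Real.hasDerivAt_rpow_const (p := p - 1)
      (Or.inl (ne_of_gt ht))).const_mul p)).hasDerivWithinAt.congr_deriv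
      (by show p * ((p - 1) * t ^ (p - 1 - 1)) = p * ((p - 1) * t ^ (p - 2)); ring_nf)
  · intro t ht
    rw [hint] at ht
    have h1 : (0:ℝ) < t ^ (p-2) := Real.rpow_pos_of_pos ht _
    show 0 ≤ p * ((p-1) * t ^ (p-2))
    have he : p * ((p-1) * t ^ (p-2)) = (-p) * ((1-p) * t ^ (p-2)) := by ring
    rw [he]
    exact mul_nonneg (by linarith) (mul_nonneg (by linarith) h1.le)

lemma convex_slope_le {f : ℝ → ℝ} {s : Set ℝ} (hf : ConvexOn ℝ s f) {a b c d : ℝ}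
    (ha : a ∈ s) (hb : b ∈ s) (hc : c ∈ s) (hd : d ∈ s)
    (hab : a < b) (hbc : b ≤ c) (hcd : c < d) :
    (f b - f a) / (b - a) ≤ (f d - f c) / (d - c) := by
  have hbd : b < d := lt_of_le_of_lt hbc hcd
  have h1 : (f b - f a)/(b-a) ≤ (f d - f b)/(d-b) := hf.slope_mono_adjacent ha hd hab hbd
  have h2 : (f b - f d)/(b-d) ≤ (f c - f d)/(c-d) :=
    hf.secant_mono hd hb hc (ne_of_lt hbd) (ne_of_lt hcd) hbc
  have e1 : (f d - f b)/(d-b) = (f b - f d)/(b-d) := by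
    rw [← neg_sub (f b) (f d), ← neg_sub b d, neg_div_neg_eq]
  have e2 : (f c - f d)/(c-d) = (f d - f c)/(d-c) := by
    rw [← neg_sub (f d) (f c), ← neg_sub d c, neg_div_neg_eq]
  rw [e1] at h1; rw [e2] at h2; linarith

lemma distNearestInt_ge {m : ℤ} {δ y : ℝ} (h1 : (m:ℝ) + δ ≤ y) (h2 : y ≤ (m:ℝ) + 1 - δ) :
    δ ≤ distNearestInt y := by
  unfold distNearestInt
  rcases le_or_gt (round y) m with h | h
  · have hc : ((round y : ℤ):ℝ) ≤ (m:ℝ) := by exact_mod_cast h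
    calc δ ≤ y - round y := by linarith
    _ ≤ |y - round y| := le_abs_self _
  · have hc : (m:ℝ) + 1 ≤ ((round y : ℤ):ℝ) := by exact_mod_cast Int.add_one_le_iff.mpr h
    calc δ ≤ (round y : ℝ) - y := by linarith
    _ ≤ |y - round y| := by rw [abs_sub_comm]; exact le_abs_self _

set_option maxHeartbeats 1000000 in
theorem statement15 (a : ℝ) (ha : 0 < a) (δ : ℝ) (hδ0 : 0 < δ) (hδ : δ < 1 / 2) :
    ∃ k₀ : ℕ, ∀ k : ℕ, k₀ ≤ k → ∀ N : ℕ, Real.exp (a * k) < (N : ℝ) → ∀ x : ℝ,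
      Real.exp (a * k ^ 2) ≤ x → x ≤ (N : ℝ) ^ k →
      ((Sk k N δ x).card : ℝ) ≥
        ((1 / 2 - δ) * ((2 : ℝ) ^ (-(1 : ℝ) / k) - (3 / 2) * Real.exp (-a))
          - (2 / 3) ^ k) * x ^ ((1 : ℝ) / k) := by
  refine ⟨3, ?_⟩
  intro k hk N hN x hx hxN
  have hk1 : 1 ≤ k := le_trans (by norm_num) hk
  have hkR : (0:ℝ) < k := by exact_mod_cast Nat.lt_of_lt_of_le (by norm_num) hk
  have hk0 : (k:ℝ) ≠ 0 := ne_of_gt hkR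
  obtain ⟨r, hr_def⟩ : ∃ r : ℝ, r = 1 / (k:ℝ) := ⟨_, rfl⟩
  have hr : 0 < r := by rw [hr_def]; positivity
  have hx0 : 0 < x := lt_of_lt_of_le (Real.exp_pos _) hx
  have hmul1 : (k:ℝ) * r = 1 := by rw [hr_def]; field_simp
  have hmul1' : r * (k:ℝ) = 1 := by rw [hr_def]; field_simp
  have hkr : ∀ c : ℝ, 0 ≤ c → ((c ^ k : ℝ)) ^ r = c := by
    intro c hc
    rw [← Real.rpow_natCast c k, ← Real.rpow_mul hc, hmul1, Real.rpow_one]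
  have hrk : ∀ c : ℝ, 0 ≤ c → ((c ^ r : ℝ)) ^ k = c := by
    intro c hc
    rw [← Real.rpow_natCast (c ^ r) k, ← Real.rpow_mul hc, hmul1', Real.rpow_one]
  obtain ⟨X, hX_def⟩ : ∃ X : ℝ, X = x ^ r := ⟨_, rfl⟩
  have hX0 : 0 < X := hX_def ▸ Real.rpow_pos_of_pos hx0 r
  have hgoalexp : -(1:ℝ)/(k:ℝ) = -r := by rw [hr_def]; ring
  obtain ⟨C, hC_def⟩ : ∃ C : ℝ, C = (1 / 2 - δ) *
      ((2 : ℝ) ^ (-(1 : ℝ) / (k:ℝ)) - (3 / 2) * Real.exp (-a)) - (2 / 3) ^ k := ⟨_, rfl⟩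
  rw [ge_iff_le, ← hC_def, show x ^ ((1:ℝ)/(k:ℝ)) = X by rw [hX_def, hr_def]]
  rcases le_or_gt C 0 with hCle | hCpos
  · have : C * X ≤ 0 := mul_nonpos_of_nonpos_of_nonneg hCle hX0.le
    exact this.trans (by positivity)
  -- nontrivial case
  have h2r1 : (2:ℝ) ^ (-(1:ℝ)/(k:ℝ)) ≤ 1 := by
    have h0 : -(1:ℝ)/(k:ℝ) ≤ 0 := by rw [hgoalexp]; linarith
    have h1 : (2:ℝ) ^ (-(1:ℝ)/(k:ℝ)) ≤ (2:ℝ) ^ (0:ℝ) :=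
      Real.rpow_le_rpow_of_exponent_le (by norm_num) h0
    rwa [Real.rpow_zero] at h1
  have h32 : (3/2) * Real.exp (-a) < (2:ℝ) ^ (-(1:ℝ)/(k:ℝ)) := by
    by_contra hcon
    push_neg at hcon
    have h1 : (2:ℝ) ^ (-(1:ℝ)/(k:ℝ)) - (3/2)*Real.exp (-a) ≤ 0 := by linarith
    have h2 : (0:ℝ) < 1/2 - δ := by linarith
    have h3 : (0:ℝ) < (2/3:ℝ) ^ k := by positivity
    rw [hC_def] at hCpos
    nlinarith
  have hea : (3:ℝ)/2 < Real.exp a := by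
    have h1 : (3/2) * Real.exp (-a) < 1 := lt_of_lt_of_le h32 h2r1
    rw [Real.exp_neg] at h1
    have h2 : (0:ℝ) < Real.exp a := Real.exp_pos a
    rw [mul_inv_lt_iff₀' h2] at h1
    linarith
  obtain ⟨E, hE_def⟩ : ∃ E : ℝ, E = (2/3) * Real.exp a := ⟨_, rfl⟩
  have hE0 : (0:ℝ) < E := by rw [hE_def]; positivity
  have hE1 : 1 < E := by rw [hE_def]; nlinarith
  have hEk0 : (0:ℝ) < E ^ k := by positivity
  have hEk1 : (1:ℝ) ≤ E ^ k := one_le_pow₀ hE1.le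
  obtain ⟨M, hM_def⟩ : ∃ M : ℕ, M = ⌊E ^ k⌋₊ := ⟨_, rfl⟩
  have hM1 : 1 ≤ M := hM_def ▸ Nat.le_floor (by exact_mod_cast hEk1)
  have hMle : (M:ℝ) ≤ E ^ k := hM_def ▸ Nat.floor_le hEk0.le
  have hM2 : E ^ k ≤ (M:ℝ) + 2 := by
    have h := Nat.lt_floor_add_one (E ^ k)
    rw [← hM_def] at h
    linarith
  -- X ≥ exp(a k)
  have heak : Real.exp (a * (k:ℝ)^2) = (Real.exp (a * k)) ^ k := by
    rw [← Real.exp_nat_mul]; congr 1; ring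
  have hXexp : Real.exp (a * k) ≤ X := by
    have h1 : (Real.exp (a*k)) ^ k ≤ x := by rw [← heak]; exact_mod_cast hx
    calc Real.exp (a*k) = ((Real.exp (a*k)) ^ k) ^ r := (hkr _ (Real.exp_pos _).le).symm
    _ ≤ x ^ r := Real.rpow_le_rpow (by positivity) h1 hr.le
    _ = X := hX_def.symm
  have hXexp3 : (27:ℝ)/8 ≤ X := by
    have h1 : Real.exp (a * 3) ≤ Real.exp (a * k) := by
      apply Real.exp_le_exp.mpr
      have h3k : (3:ℝ) ≤ (k:ℝ) := by exact_mod_cast hk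
      nlinarith
    have h2 : Real.exp (a*3) = (Real.exp a)^3 := by
      rw [← Real.exp_nat_mul]; congr 1; push_cast; ring
    have h3 : ((3:ℝ)/2)^3 ≤ (Real.exp a)^3 := pow_le_pow_left₀ (by norm_num) hea.le 3
    have h4 : ((3:ℝ)/2)^3 = 27/8 := by norm_num
    linarith
  have hEkX : E ^ k ≤ (2/3:ℝ)^k * X := by
    have h1 : E ^ k = (2/3:ℝ)^k * (Real.exp a)^k := by rw [hE_def, mul_pow]
    have h2 : (Real.exp a)^k = Real.exp (a * k) := by
      rw [← Real.exp_nat_mul]; congr 1; ring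
    rw [h1, h2]
    have h3 : (0:ℝ) ≤ (2/3:ℝ)^k := by positivity
    nlinarith
  have hMX : (M:ℝ) ≤ (2/3:ℝ)^k * X := hMle.trans hEkX
  have h23k : ((2:ℝ)/3)^k ≤ 8/27 := by
    calc ((2:ℝ)/3)^k ≤ (2/3:ℝ)^3 :=
      pow_le_pow_of_le_one (by norm_num) (by norm_num) hk
    _ = 8/27 := by norm_num
  have hM2X : (M:ℝ) + 2 ≤ X := by nlinarith
  have hX1 : (1:ℝ) ≤ X := by linarith
  have hxX : X ≤ x := by
    calc X = X ^ 1 := (pow_one X).symm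
    _ ≤ X ^ k := pow_le_pow_right₀ hX1 hk1
    _ = x := by rw [hX_def]; exact hrk x hx0.le
  have hxbig : (M:ℝ) + 2 ≤ x := hM2X.trans hxX
  -- the intervals
  obtain ⟨A, hA_def⟩ : ∃ A : ℕ → ℝ, A = fun i : ℕ => (x / ((i:ℝ) + 2 - δ)) ^ r := ⟨_, rfl⟩
  obtain ⟨B, hB_def⟩ : ∃ B : ℕ → ℝ, B = fun i : ℕ => (x / ((i:ℝ) + 1 + δ)) ^ r := ⟨_, rfl⟩
  obtain ⟨T, hT_def⟩ : ∃ T : ℕ → Finset ℕ, T = fun i => Finset.Icc ⌈A i⌉₊ ⌊B i⌋₊ := ⟨_, rfl⟩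
  have hden1 : ∀ i : ℕ, (0:ℝ) < (i:ℝ) + 1 + δ := fun i => by positivity
  have hden2 : ∀ i : ℕ, (0:ℝ) < (i:ℝ) + 2 - δ := fun i => by
    have : (0:ℝ) ≤ (i:ℝ) := Nat.cast_nonneg i
    linarith
  have hA1 : ∀ i ∈ Finset.range M, (1:ℝ) ≤ A i := by
    intro i hi
    have hiM : (i:ℝ) ≤ (M:ℝ) - 1 := by
      have h1 := Finset.mem_range.mp hi
      have h2 : (i:ℝ) + 1 ≤ (M:ℝ) := by exact_mod_cast h1
      linarith
    have hb : (1:ℝ) ≤ x / ((i:ℝ) + 2 - δ) := by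
      rw [le_div_iff₀ (hden2 i)]
      linarith
    simp only [hA_def]
    calc (1:ℝ) = 1 ^ r := (Real.one_rpow r).symm
    _ ≤ (x / ((i:ℝ) + 2 - δ)) ^ r := Real.rpow_le_rpow (by norm_num) hb hr.le
  have hAB : ∀ i : ℕ, A i ≤ B i := by
    intro i
    simp only [hA_def, hB_def]
    apply Real.rpow_le_rpow (div_nonneg hx0.le (hden2 i).le) _ hr.le
    apply div_le_div_of_nonneg_left hx0.le (hden1 i)
    linarith
  have hB0 : ∀ i : ℕ, 0 ≤ B i := by
    intro i
    simp only [hB_def]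
    exact Real.rpow_nonneg (div_nonneg hx0.le (hden1 i).le) r
  have hBX : ∀ i : ℕ, B i ≤ X := by
    intro i
    simp only [hB_def]
    rw [hX_def]
    apply Real.rpow_le_rpow (div_nonneg hx0.le (hden1 i).le) _ hr.le
    apply div_le_self hx0.le
    have : (0:ℝ) ≤ (i:ℝ) := Nat.cast_nonneg i
    linarith
  have hXN : X ≤ (N:ℝ) := by
    have hN0 : (0:ℝ) ≤ (N:ℝ) := Nat.cast_nonneg N
    calc X = x ^ r := hX_def
    _ ≤ ((N:ℝ)^k) ^ r := Real.rpow_le_rpow hx0.le hxN hr.le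
    _ = (N:ℝ) := hkr _ hN0
  -- subset claim
  have hsub : ∀ i ∈ Finset.range M, T i ⊆ Sk k N δ x := by
    intro i hi n hn
    simp only [hT_def, Finset.mem_Icc] at hn
    have hnA : A i ≤ (n:ℝ) := Nat.ceil_le.mp hn.1
    have hnB : (n:ℝ) ≤ B i := by
      have h1 : (n:ℝ) ≤ (⌊B i⌋₊ : ℝ) := by exact_mod_cast hn.2
      exact h1.trans (Nat.floor_le (hB0 i))
    have hn1 : 1 ≤ n := by
      have h1 : (1:ℝ) ≤ (n:ℝ) := le_trans (hA1 i hi) hnA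
      exact_mod_cast h1
    have hnN : n ≤ N := by
      have h1 : (n:ℝ) ≤ (N:ℝ) := hnB.trans ((hBX i).trans hXN)
      exact_mod_cast h1
    have hnk0 : (0:ℝ) < (n:ℝ)^k := by
      have h1 : (0:ℝ) < (n:ℝ) := by exact_mod_cast hn1
      positivity
    have hA0 : 0 ≤ A i := le_trans (by norm_num) (hA1 i hi)
    have h1 : x / ((i:ℝ) + 2 - δ) ≤ (n:ℝ)^k := by
      have h2 := pow_le_pow_left₀ hA0 hnA k
      simp only [hA_def] at h2
      rwa [hrk _ (div_nonneg hx0.le (hden2 i).le)] at h2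
    have h2 : (n:ℝ)^k ≤ x / ((i:ℝ) + 1 + δ) := by
      have h3 := pow_le_pow_left₀ (Nat.cast_nonneg n) hnB k
      simp only [hB_def] at h3
      rwa [hrk _ (div_nonneg hx0.le (hden1 i).le)] at h3
    have hy1 : (i:ℝ) + 1 + δ ≤ x / (n:ℝ)^k := by
      rw [le_div_iff₀ hnk0]
      have h4 := (le_div_iff₀ (hden1 i)).mp h2
      linarith
    have hy2 : x / (n:ℝ)^k ≤ (i:ℝ) + 2 - δ := by
      rw [div_le_iff₀ hnk0]
      have h4 := (div_le_iff₀ (hden2 i)).mp h1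
      linarith
    have hdist : δ ≤ distNearestInt (x / (n:ℝ)^k) := by
      apply distNearestInt_ge (m := (i:ℤ) + 1)
      · push_cast; linarith
      · push_cast; linarith
    rw [Sk, Finset.mem_filter, Finset.mem_Icc]
    exact ⟨⟨hn1, hnN⟩, hdist⟩
  -- disjointness
  have hdisj : ∀ i ∈ Finset.range M, ∀ j ∈ Finset.range M, i ≠ j → Disjoint (T i) (T j) := by
    have key : ∀ i j : ℕ, i < j → Disjoint (T i) (T j) := by
      intro i j hij
      rw [Finset.disjoint_left]
      intro n hni hnj
      simp only [hT_def, Finset.mem_Icc] at hni hnj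
      have hnA : A i ≤ (n:ℝ) := Nat.ceil_le.mp hni.1
      have hnB : (n:ℝ) ≤ B j := by
        have h1 : (n:ℝ) ≤ (⌊B j⌋₊ : ℝ) := by exact_mod_cast hnj.2
        exact h1.trans (Nat.floor_le (hB0 j))
      have hBA : B j < A i := by
        simp only [hA_def, hB_def]
        apply Real.rpow_lt_rpow (div_nonneg hx0.le (hden1 j).le) _ hr
        apply div_lt_div_of_pos_left hx0 (hden2 i)
        have h1 : (i:ℝ) + 1 ≤ (j:ℝ) := by exact_mod_cast hij
        linarith
      linarith
    intro i _ j _ hij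
    rcases lt_or_gt_of_ne hij with h | h
    · exact key i j h
    · exact (key j i h).symm
  -- cardinality lower bound per interval
  have hcard : ∀ i ∈ Finset.range M, B i - A i - 1 ≤ ((T i).card : ℝ) := by
    intro i hi
    have hA0 : 0 ≤ A i := le_trans (by norm_num) (hA1 i hi)
    have hc : (T i).card = ⌊B i⌋₊ + 1 - ⌈A i⌉₊ := by
      simp only [hT_def]; exact Nat.card_Icc _ _
    have h1 : B i - 1 < (⌊B i⌋₊ : ℝ) := Nat.sub_one_lt_floor _
    have h2 : (⌈A i⌉₊ : ℝ) < A i + 1 := Nat.ceil_lt_add_one hA0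
    rcases le_total (⌈A i⌉₊) (⌊B i⌋₊ + 1) with h | h
    · have he : (((⌊B i⌋₊ + 1 - ⌈A i⌉₊ : ℕ)) : ℝ) = ((⌊B i⌋₊:ℝ) + 1) - (⌈A i⌉₊:ℝ) := by
        rw [Nat.cast_sub h]; push_cast; ring
      rw [hc, he]; linarith
    · have hz : ⌊B i⌋₊ + 1 - ⌈A i⌉₊ = 0 := Nat.sub_eq_zero_of_le h
      have hcast : ((⌊B i⌋₊:ℝ) + 1) ≤ (⌈A i⌉₊:ℝ) := by exact_mod_cast h
      rw [hc, hz]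
      push_cast
      linarith
  -- convexity bound per interval
  have hconv : ∀ i : ℕ,
      (1 - 2*δ) * (((i:ℝ)+2) ^ (-r) - ((i:ℝ)+3) ^ (-r)) ≤
        ((i:ℝ)+1+δ) ^ (-r) - ((i:ℝ)+2-δ) ^ (-r) := by
    intro i
    have hcv := convexOn_rpow_neg (p := -r) (by linarith)
    have hi0 : (0:ℝ) ≤ (i:ℝ) := Nat.cast_nonneg i
    have h := convex_slope_le hcv (a := (i:ℝ)+1+δ) (b := (i:ℝ)+2-δ) (c := (i:ℝ)+2)
      (d := (i:ℝ)+3) (by simp only [Set.mem_Ioi]; linarith) (by simp only [Set.mem_Ioi]; linarith)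
      (by simp only [Set.mem_Ioi]; linarith) (by simp only [Set.mem_Ioi]; linarith)
      (by linarith) (by linarith) (by linarith)
    have e1 : ((i:ℝ)+2-δ) - ((i:ℝ)+1+δ) = 1 - 2*δ := by ring
    have e2 : ((i:ℝ)+3) - ((i:ℝ)+2) = 1 := by ring
    rw [e1, e2, div_one] at h
    have h12 : (0:ℝ) < 1 - 2*δ := by linarith
    rw [div_le_iff₀ h12] at h
    nlinarith
  -- B i - A i in terms of rpow
  have hBA_eq : ∀ i : ℕ, B i - A i = X * (((i:ℝ)+1+δ) ^ (-r) - ((i:ℝ)+2-δ) ^ (-r)) := by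
    intro i
    have e1 : B i = X * ((i:ℝ)+1+δ) ^ (-r) := by
      simp only [hB_def]
      rw [Real.div_rpow hx0.le (hden1 i).le, Real.rpow_neg (hden1 i).le,
        div_eq_mul_inv, hX_def]
    have e2 : A i = X * ((i:ℝ)+2-δ) ^ (-r) := by
      simp only [hA_def]
      rw [Real.div_rpow hx0.le (hden2 i).le, Real.rpow_neg (hden2 i).le,
        div_eq_mul_inv, hX_def]
    rw [e1, e2]; ring
  -- telescoping sum
  have htel : ∑ i ∈ Finset.range M, (((i:ℝ)+2) ^ (-r) - ((i:ℝ)+3) ^ (-r))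
      = (2:ℝ) ^ (-r) - ((M:ℝ)+2) ^ (-r) := by
    have h := Finset.sum_range_sub' (f := fun i : ℕ => ((i:ℝ)+2) ^ (-r)) M
    calc ∑ i ∈ Finset.range M, (((i:ℝ)+2) ^ (-r) - ((i:ℝ)+3) ^ (-r))
        = ∑ i ∈ Finset.range M, ((((i:ℕ):ℝ)+2) ^ (-r) - (((i+1:ℕ):ℝ)+2) ^ (-r)) := by
          apply Finset.sum_congr rfl
          intro i _
          congr 2
          push_cast; ring
    _ = (((0:ℕ):ℝ)+2) ^ (-r) - (((M:ℕ):ℝ)+2) ^ (-r) := h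
    _ = (2:ℝ) ^ (-r) - ((M:ℝ)+2) ^ (-r) := by norm_num
  -- (M+2)^(-r) ≤ (3/2) exp(-a)
  have hM2r : ((M:ℝ)+2) ^ (-r) ≤ (3/2) * Real.exp (-a) := by
    have h1 : ((M:ℝ)+2) ^ (-r) ≤ (E ^ k) ^ (-r) :=
      Real.rpow_le_rpow_of_nonpos hEk0 hM2 (by linarith)
    have h2 : (E ^ k) ^ (-r) = (3/2) * Real.exp (-a) := by
      rw [← Real.rpow_natCast E k, ← Real.rpow_mul hE0.le]
      have hm : (k:ℝ) * (-r) = -1 := by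
        have : (k:ℝ) * (-r) = -((k:ℝ) * r) := by ring
        rw [this, hmul1]
      rw [hm, Real.rpow_neg_one, hE_def, Real.exp_neg, mul_inv]
      have h23 : ((2:ℝ)/3)⁻¹ = 3/2 := by norm_num
      rw [h23]
    linarith
  -- main chain
  have hmain : C * X ≤ ∑ i ∈ Finset.range M, (B i - A i - 1) := by
    have hsum1 : ∑ i ∈ Finset.range M, (B i - A i - 1)
        = (∑ i ∈ Finset.range M, (B i - A i)) - M := by
      rw [Finset.sum_sub_distrib]
      simp
    have hsum2 : X * (1-2*δ) * ((2:ℝ) ^ (-r) - ((M:ℝ)+2) ^ (-r))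
        ≤ ∑ i ∈ Finset.range M, (B i - A i) := by
      calc X * (1-2*δ) * ((2:ℝ) ^ (-r) - ((M:ℝ)+2) ^ (-r))
          = ∑ i ∈ Finset.range M, X * ((1 - 2*δ) * (((i:ℝ)+2) ^ (-r) - ((i:ℝ)+3) ^ (-r))) := by
            rw [← Finset.mul_sum, ← Finset.mul_sum, htel]; ring
      _ ≤ ∑ i ∈ Finset.range M, (B i - A i) := by
            apply Finset.sum_le_sum
            intro i _
            rw [hBA_eq i]
            exact mul_le_mul_of_nonneg_left (hconv i) hX0.le
    have hCX : C * X ≤ X * (1-2*δ) * ((2:ℝ) ^ (-r) - ((M:ℝ)+2) ^ (-r)) - M := by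
      have hd : (0:ℝ) ≤ (2:ℝ) ^ (-(1:ℝ)/(k:ℝ)) - (3/2) * Real.exp (-a) := by linarith
      have h2rr : (2:ℝ) ^ (-(1:ℝ)/(k:ℝ)) = (2:ℝ) ^ (-r) := by rw [hgoalexp]
      rw [h2rr] at hd h32
      rw [hC_def, h2rr]
      have hδ2 : (0:ℝ) < 1/2 - δ := by linarith
      have hX12 : 0 ≤ X * (1-2*δ) := mul_nonneg hX0.le (by linarith)
      have s1 : X * (1-2*δ) * ((2:ℝ)^(-r) - (3/2)*Real.exp (-a))
          ≤ X * (1-2*δ) * ((2:ℝ)^(-r) - ((M:ℝ)+2)^(-r)) :=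
        mul_le_mul_of_nonneg_left (by linarith [hM2r]) hX12
      have s2 : (1/2-δ) * ((2:ℝ)^(-r) - (3/2)*Real.exp (-a)) * X
          ≤ X * (1-2*δ) * ((2:ℝ)^(-r) - (3/2)*Real.exp (-a)) := by
        nlinarith [mul_nonneg (mul_nonneg hX0.le hd) hδ2.le]
      linarith [s1, s2, hMX]
    linarith
  calc C * X ≤ ∑ i ∈ Finset.range M, (B i - A i - 1) := hmain
  _ ≤ ∑ i ∈ Finset.range M, ((T i).card : ℝ) := Finset.sum_le_sum hcard
  _ = (((Finset.range M).biUnion T).card : ℝ) := by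
      rw [Finset.card_biUnion hdisj]; push_cast; ring
  _ ≤ ((Sk k N δ x).card : ℝ) := by
      have hss : (Finset.range M).biUnion T ⊆ Sk k N δ x := Finset.biUnion_subset.mpr hsub
      exact_mod_cast Finset.card_le_card hss
end

section
/- For all positive integers n and k, one has 0 ≤ 1/n^k − 1/(n(n+1)⋯(n+k−1)) < k²/(2 n^{k+1}). -/
lemma aux_pos (n : ℕ) (hn : 0 < n) (k : ℕ) :
    0 < ∏ j ∈ Finset.range k, ((n : ℝ) + j) := by
  apply Finset.prod_pos
  intro j _
  have : (0:ℝ) < n := by exact_mod_cast hn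
  positivity

lemma aux_ge (n : ℕ) (hn : 0 < n) (k : ℕ) :
    (n : ℝ) ^ k ≤ ∏ j ∈ Finset.range k, ((n : ℝ) + j) := by
  have : (n:ℝ)^k = ∏ j ∈ Finset.range k, (n:ℝ) := by
    rw [Finset.prod_const, Finset.card_range]
  rw [this]
  apply Finset.prod_le_prod
  · intro j _; positivity
  · intro j _; have : (0:ℝ) ≤ j := by positivity
    linarith

lemma aux_ub (n : ℕ) (hn : 0 < n) (k : ℕ) :
    1 / (n : ℝ) ^ k - 1 / ∏ j ∈ Finset.range k, ((n : ℝ) + j)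
      ≤ ((k : ℝ) * ((k : ℝ) - 1) / 2) / (n : ℝ) ^ (k + 1) := by
  have hn' : (0:ℝ) < n := by exact_mod_cast hn
  induction k with
  | zero => simp
  | succ k ih =>
    set P := ∏ j ∈ Finset.range k, ((n : ℝ) + j) with hP
    have hp : 0 < P := aux_pos n hn k
    have hpn : (n:ℝ)^k ≤ P := aux_ge n hn k
    have hk0 : (0:ℝ) ≤ k := by positivity
    rw [Finset.prod_range_succ]
    have key : 1/(n:ℝ)^(k+1) - 1/(P*((n:ℝ)+k))
        = (1/(n:ℝ))*(1/(n:ℝ)^k - 1/P) + (k:ℝ)/((n:ℝ)*P*((n:ℝ)+k)) := by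
      field_simp
      ring
    rw [key]
    have h1 : (1/(n:ℝ))*(1/(n:ℝ)^k - 1/P)
        ≤ (1/(n:ℝ))*(((k : ℝ) * ((k : ℝ) - 1) / 2) / (n : ℝ) ^ (k + 1)) := by
      apply mul_le_mul_of_nonneg_left ih
      positivity
    have h2 : (k:ℝ)/((n:ℝ)*P*((n:ℝ)+k)) ≤ (k:ℝ)/((n:ℝ)*(n:ℝ)^k*(n:ℝ)) := by
      gcongr
      linarith
    have h3 : (1/(n:ℝ))*(((k : ℝ) * ((k : ℝ) - 1) / 2) / (n : ℝ) ^ (k + 1))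
        + (k:ℝ)/((n:ℝ)*(n:ℝ)^k*(n:ℝ))
        = ((k+1:ℝ) * ((k+1:ℝ) - 1) / 2) / (n : ℝ) ^ (k + 1 + 1) := by
      field_simp
      ring
    push_cast
    linarith

theorem statement17 (n k : ℕ) (hn : 0 < n) (hk : 0 < k) :
    0 ≤ 1 / (n : ℝ) ^ k - 1 / ∏ j ∈ Finset.range k, ((n : ℝ) + j) ∧
    1 / (n : ℝ) ^ k - 1 / ∏ j ∈ Finset.range k, ((n : ℝ) + j)
      < (k : ℝ) ^ 2 / (2 * (n : ℝ) ^ (k + 1)) := by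
  have hn' : (0:ℝ) < n := by exact_mod_cast hn
  have hk' : (1:ℝ) ≤ k := by exact_mod_cast hk
  have hp : 0 < ∏ j ∈ Finset.range k, ((n : ℝ) + j) := aux_pos n hn k
  have hpn := aux_ge n hn k
  constructor
  · have : 1 / ∏ j ∈ Finset.range k, ((n : ℝ) + j) ≤ 1 / (n:ℝ)^k := by
      apply one_div_le_one_div_of_le (by positivity) hpn
    linarith
  · have h1 := aux_ub n hn k
    have h2 : ((k : ℝ) * ((k : ℝ) - 1) / 2) / (n : ℝ) ^ (k + 1)
        < (k : ℝ) ^ 2 / (2 * (n : ℝ) ^ (k + 1)) := by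
      rw [div_lt_div_iff₀ (by positivity) (by positivity)]
      have hnp : (0:ℝ) < (n:ℝ)^(k+1) := by positivity
      nlinarith [mul_pos hnp hnp]
    linarith
end
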